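/- arXiv:1804.04809 — 7 statements merged into one kernel-verified Lean document; each statement's English description precedes it below -/
import Mathlib

section
/- Let n ≥ 1 and let G be a subgroup of U(n,1) every element of which is unipotent. Then there exists a vector v ∈ ℂ^{n+1} with v ≠ 0, conj(v)ᵀ·H·v = 0 (v is a null vector for the Hermitian form) and A·v = v for every A ∈ G. -/
open Matrix

noncomputable section

/-- The ambient space ℂ^{n+1}. -/
abbrev HV (n : ℕ) : Type := Fin (n + 1) → ℂ

/-- The matrix of the Hermitian form of signature (n,1). -/
def HMat (n : ℕ) : Matrix (Fin (n + 1)) (Fin (n + 1)) ℂ := fun i j =>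
  if i = 0 ∧ j = Fin.last n then 1
  else if i = Fin.last n ∧ j = 0 then 1
  else if i = j ∧ i ≠ 0 ∧ i ≠ Fin.last n then 1
  else 0

/-- The group U(n,1) of matrices preserving the Hermitian form. -/
def USet (n : ℕ) : Set (Matrix (Fin (n + 1)) (Fin (n + 1)) ℂ) :=
  {A | Aᴴ * HMat n * A = HMat n}


section KolchinMachinery

open Module Set LinearMap

/-- Trace of a nilpotent endomorphism over ℂ is zero. -/
lemma trace_eq_zero_of_nilpotent {V : Type} [AddCommGroup V] [Module ℂ V]
    [FiniteDimensional ℂ V] {f : Module.End ℂ V} (h : IsNilpotent f) :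
    LinearMap.trace ℂ V f = 0 :=
  (LinearMap.isNilpotent_trace_of_isNilpotent h).eq_zero

/-- An endomorphism of a f.d. complex space all of whose power traces vanish is nilpotent. -/
lemma isNilpotent_of_forall_trace_pow {V : Type} [AddCommGroup V] [Module ℂ V]
    [FiniteDimensional ℂ V] (f : Module.End ℂ V)
    (h : ∀ k : ℕ, 1 ≤ k → LinearMap.trace ℂ V (f ^ k) = 0) : IsNilpotent f := by
  classical
  set E : ℂ → Submodule ℂ V := f.maxGenEigenspace with hE
  have hindep : iSupIndep E := f.independent_maxGenEigenspace
  have hfin : {μ | E μ ≠ ⊥}.Finite := WellFoundedGT.finite_ne_bot_of_iSupIndep hindep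
  have hsup : ⨆ μ, E μ = ⊤ := f.iSup_maxGenEigenspace_eq_top
  have hInternal : DirectSum.IsInternal E :=
    (DirectSum.isInternal_submodule_iff_iSupIndep_and_iSup_eq_top E).mpr ⟨hindep, hsup⟩
  have hmapsto : ∀ (k : ℕ) (μ : ℂ), Set.MapsTo (f ^ k) (E μ) (E μ) := fun k μ =>
    Module.End.mapsTo_maxGenEigenspace_of_comm (Commute.pow_right rfl k) μ
  -- trace of the restriction of f^k to E μ
  have key : ∀ (k : ℕ), 1 ≤ k → ∀ μ : ℂ,
      LinearMap.trace ℂ (E μ) ((f ^ k).restrict (hmapsto k μ))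
        = μ ^ k * (finrank ℂ (E μ) : ℂ) := by
    intro k hk μ
    have hm1 : Set.MapsTo f (E μ) (E μ) :=
      Module.End.mapsTo_maxGenEigenspace_of_comm rfl μ
    set g : Module.End ℂ (E μ) := f.restrict hm1 with hg
    have hres : (f ^ k).restrict (hmapsto k μ) = g ^ k := (Module.End.pow_restrict k hm1).symm
    set N : Module.End ℂ (E μ) := g - μ • 1 with hN
    have hNnil : IsNilpotent N := by
      have h2 := Module.End.isNilpotent_restrict_maxGenEigenspace_sub_algebraMap f μ
      convert h2 using 1
      ext x
      simp [hN, hg, Algebra.algebraMap_eq_smul_one]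
      rfl
    have hcomm : Commute (μ • (1 : Module.End ℂ (E μ))) N := by
      unfold Commute SemiconjBy
      rw [smul_mul_assoc, one_mul, mul_smul_comm, mul_one]
    have hgk : g = μ • 1 + N := by rw [hN]; abel
    rw [hres, hgk, hcomm.add_pow]
    rw [map_sum]
    rw [Finset.sum_eq_single k]
    · rw [Nat.sub_self, pow_zero, mul_one, Nat.choose_self, Nat.cast_one, mul_one,
        smul_pow, one_pow, LinearMap.map_smul, LinearMap.trace_one, smul_eq_mul]
    · intro i hi hne
      have hji : 1 ≤ k - i := by
        have : i < k := lt_of_le_of_ne (Nat.lt_succ_iff.mp (Finset.mem_range.mp hi)) hne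
        omega
      have hnil2 : IsNilpotent (N ^ (k - i)) := hNnil.pow_of_pos (by omega)
      have hterm : (μ • (1 : Module.End ℂ (E μ))) ^ i * N ^ (k - i)
            * (k.choose i : Module.End ℂ (E μ))
          = μ ^ i • ((k.choose i) • N ^ (k - i)) := by
        rw [smul_pow, one_pow, smul_mul_assoc, smul_mul_assoc, one_mul,
          (Nat.cast_commute (k.choose i) (N ^ (k - i))).symm.eq, ← nsmul_eq_mul]
      rw [hterm, LinearMap.map_smul, LinearMap.map_smul_of_tower,
        trace_eq_zero_of_nilpotent hnil2, smul_zero, smul_zero]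
    · intro hk'
      exact absurd (Finset.self_mem_range_succ k) hk'
  -- the sum over the support vanishes
  have hsum : ∀ k : ℕ, 1 ≤ k →
      ∑ μ ∈ hfin.toFinset, μ ^ k * (finrank ℂ (E μ) : ℂ) = 0 := by
    intro k hk
    have htr := LinearMap.trace_eq_sum_trace_restrict' hInternal hfin (hmapsto k)
    have h2 : ∑ μ ∈ hfin.toFinset, μ ^ k * (finrank ℂ (E μ) : ℂ)
        = ∑ μ ∈ hfin.toFinset,
            LinearMap.trace ℂ (E μ) ((f ^ k).restrict (hmapsto k μ)) :=
      Finset.sum_congr rfl fun μ _ => (key k hk μ).symm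
    rw [h2, ← htr]
    exact h k hk
  -- every eigenvalue in the support is zero
  have hzero : ∀ μ : ℂ, E μ ≠ ⊥ → μ = 0 := by
    have hT' : hfin.toFinset.filter (fun μ => μ ≠ 0) = ∅ := by
      by_contra hne
      set T' := hfin.toFinset.filter (fun μ => μ ≠ 0) with hT'def
      set m := T'.card with hm'
      have hm : 0 < m := Finset.card_pos.mpr (Finset.nonempty_iff_ne_empty.mpr hne)
      set e := T'.equivFin with he
      set μf : Fin m → ℂ := fun i => ((e.symm i : ↥(T' : Finset ℂ)) : ℂ) with hμf
      have hμmem : ∀ i, μf i ∈ T' := fun i => (e.symm i).2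
      have hμne : ∀ i, μf i ≠ 0 := fun i => (Finset.mem_filter.mp (hμmem i)).2
      have hμEne : ∀ i, E (μf i) ≠ ⊥ := fun i => by
        have := (Finset.mem_filter.mp (hμmem i)).1
        exact (Set.Finite.mem_toFinset hfin).mp this
      have hμinj : Function.Injective μf := by
        intro i j hij
        have : e.symm i = e.symm j := Subtype.ext hij
        exact e.symm.injective this
      set d : Fin m → ℂ := fun i => (finrank ℂ (E (μf i)) : ℂ) with hd
      set B : Matrix (Fin m) (Fin m) ℂ :=
        Matrix.of fun k i => μf i ^ ((k : ℕ) + 1) with hB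
      have hBv : B *ᵥ d = 0 := by
        funext k
        have hsum2 : ∑ i : Fin m, μf i ^ ((k : ℕ) + 1) * d i
            = ∑ μ ∈ T', μ ^ ((k : ℕ) + 1) * (finrank ℂ (E μ) : ℂ) := by
          rw [← Finset.sum_coe_sort T']
          exact (Equiv.sum_comp e.symm
            (fun x => (x : ℂ) ^ ((k : ℕ) + 1) * (finrank ℂ (E (x : ℂ)) : ℂ))).symm ▸ rfl
        have hsum3 : ∑ μ ∈ T', μ ^ ((k : ℕ) + 1) * (finrank ℂ (E μ) : ℂ)
            = ∑ μ ∈ hfin.toFinset, μ ^ ((k : ℕ) + 1) * (finrank ℂ (E μ) : ℂ) := by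
          rw [hT'def]
          refine Finset.sum_filter_of_ne ?_
          intro μ _ hne0 h0
          apply hne0
          rw [h0, zero_pow (Nat.succ_ne_zero _), zero_mul]
        simp only [Matrix.mulVec, dotProduct, hB, Matrix.of_apply, Pi.zero_apply]
        rw [hsum2, hsum3]
        exact hsum ((k : ℕ) + 1) (by omega)
      have hdet : B.det ≠ 0 := by
        have hfact : B = (Matrix.vandermonde μf)ᵀ * Matrix.diagonal μf := by
          ext k i
          simp [hB, Matrix.mul_apply, Matrix.diagonal, Matrix.vandermonde,
            Finset.sum_ite_eq, pow_succ]
        rw [hfact, Matrix.det_mul, Matrix.det_transpose, Matrix.det_vandermonde,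
          Matrix.det_diagonal]
        apply mul_ne_zero
        · apply Finset.prod_ne_zero_iff.mpr
          intro i _
          apply Finset.prod_ne_zero_iff.mpr
          intro j hj
          exact sub_ne_zero.mpr fun hEq =>
            (Finset.mem_Ioi.mp hj).ne' (hμinj hEq)
        · exact Finset.prod_ne_zero_iff.mpr fun i _ => hμne i
      have hd0 : d = 0 := by
        have : B⁻¹ *ᵥ (B *ᵥ d) = d := by
          rw [Matrix.mulVec_mulVec, Matrix.nonsing_inv_mul B (Ne.isUnit hdet), Matrix.one_mulVec]
        rw [hBv, Matrix.mulVec_zero] at this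
        exact this.symm
      have : d ⟨0, hm⟩ = 0 := by rw [hd0]; rfl
      have hpos : 0 < finrank ℂ (E (μf ⟨0, hm⟩)) := by
        rw [Module.finrank_pos_iff]
        exact Submodule.nontrivial_iff_ne_bot.mpr (hμEne ⟨0, hm⟩)
      rw [hd] at this
      exact (Nat.cast_ne_zero.mpr hpos.ne') this
    intro μ hμ
    by_contra hμ0
    have : μ ∈ hfin.toFinset.filter (fun μ => μ ≠ 0) :=
      Finset.mem_filter.mpr ⟨(Set.Finite.mem_toFinset hfin).mpr hμ, hμ0⟩
    rw [hT'] at this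
    exact absurd this (Finset.notMem_empty μ)
  -- hence the generalized 0-eigenspace is everything
  have htop : E 0 = ⊤ := by
    rw [← hsup]
    refine le_antisymm (le_iSup E 0) (iSup_le fun μ => ?_)
    by_cases hμ : E μ = ⊥
    · rw [hμ]; exact bot_le
    · rw [hzero μ hμ]
  -- conclude nilpotency
  rw [← ((LinearMap.charpoly_nilpotent_tfae f).out 2 0 rfl rfl)]
  intro x
  have hx : x ∈ E 0 := htop ▸ Submodule.mem_top
  obtain ⟨k, hk⟩ := (f.mem_maxGenEigenspace 0 x).mp hx
  exact ⟨k, by simpa using hk⟩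


/-- Evaluation of endomorphisms at a point, as a linear map. -/
def evalAt {V : Type} [AddCommGroup V] [Module ℂ V] (v : V) :
    Module.End ℂ V →ₗ[ℂ] V where
  toFun x := x v
  map_add' := fun x y => rfl
  map_smul' := fun c x => rfl

lemma evalAt_apply {V : Type} [AddCommGroup V] [Module ℂ V] (v : V)
    (x : Module.End ℂ V) : evalAt v x = x v := rfl

lemma pow_mem_closed {V : Type} [AddCommGroup V] [Module ℂ V]
    {A : Submodule ℂ (Module.End ℂ V)} (hmul : ∀ x ∈ A, ∀ y ∈ A, x * y ∈ A)
    {x : Module.End ℂ V} (hx : x ∈ A) : ∀ k : ℕ, 1 ≤ k → x ^ k ∈ A := by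
  intro k hk
  induction k with
  | zero => omega
  | succ n ih =>
    rcases Nat.eq_or_lt_of_le hk with h1 | h2
    · rw [← h1, pow_one]; exact hx
    · rw [pow_succ]
      exact hmul _ (ih (by omega)) _ hx

/-- Nakayama-type argument: a multiplicatively closed space of nilpotent endomorphisms
cannot span the whole space through finitely many orbit spaces unless the space is zero. -/
lemma nakayama_aux {V : Type} [AddCommGroup V] [Module ℂ V]
    (A : Submodule ℂ (Module.End ℂ V))
    (hmul : ∀ x ∈ A, ∀ y ∈ A, x * y ∈ A) (hnil : ∀ x ∈ A, IsNilpotent x) :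
    ∀ (m : ℕ) (w : Fin m → V),
      (⊤ : Submodule ℂ V) ≤ ⨆ i, A.map (evalAt (w i)) → (⊤ : Submodule ℂ V) ≤ ⊥ := by
  intro m
  induction m with
  | zero =>
    intro w h
    rwa [show (⨆ i : Fin 0, A.map (evalAt (w i))) = ⊥ from iSup_of_empty _] at h
  | succ k ih =>
    intro w h
    set R : Submodule ℂ V := ⨆ i : Fin k, A.map (evalAt (w i.succ)) with hR
    have hstab : ∀ y ∈ A, ∀ v ∈ R, y v ∈ R := by
      intro y hy
      have : Submodule.map y R ≤ R := by
        rw [hR, Submodule.map_iSup]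
        refine iSup_mono fun i => ?_
        rintro v ⟨v', ⟨x, hx, rfl⟩, rfl⟩
        exact ⟨y * x, hmul y hy x hx, rfl⟩
      intro v hv
      exact this ⟨v, hv, rfl⟩
    have hle : (⨆ i : Fin (k+1), A.map (evalAt (w i))) ≤ A.map (evalAt (w 0)) ⊔ R := by
      refine iSup_le fun i => ?_
      refine Fin.cases ?_ ?_ i
      · exact le_sup_left
      · intro j
        exact le_sup_of_le_right
          (le_iSup (fun i : Fin k => A.map (evalAt (w i.succ))) j)
    have h0 : w 0 ∈ A.map (evalAt (w 0)) ⊔ R := hle (h Submodule.mem_top)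
    obtain ⟨a, ha, r, hr, har⟩ := Submodule.mem_sup.mp h0
    obtain ⟨x, hx, rfl⟩ := ha
    obtain ⟨m₀, hm₀⟩ := hnil x hx
    have hx1 : x ^ (m₀ + 1) = 0 := by rw [pow_succ, hm₀, zero_mul]
    have hgeom : (∑ j ∈ Finset.range (m₀ + 1), x ^ j) * (1 - x) = 1 := by
      have hg := geom_sum_mul x (m₀ + 1)
      rw [hx1, zero_sub, mul_sub, mul_one] at hg
      rw [mul_sub, mul_one, ← neg_sub ((∑ j ∈ Finset.range (m₀ + 1), x ^ j) * x),
        hg, neg_neg]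
    have hr' : (1 - x) (w 0) = r := by
      have har' : evalAt (w 0) x + r = w 0 := har
      have : x (w 0) + r = w 0 := har'
      rw [LinearMap.sub_apply, Module.End.one_apply, sub_eq_iff_eq_add']
      exact this.symm
    have hw0R : w 0 ∈ R := by
      have hw0 : w 0 = (∑ j ∈ Finset.range (m₀ + 1), x ^ j) r := by
        have := congrArg (fun (y : Module.End ℂ V) => y (w 0)) hgeom
        simp only [Module.End.mul_apply, Module.End.one_apply] at this
        rw [hr'] at this
        exact this.symm
      rw [hw0, LinearMap.sum_apply]
      rw [Finset.sum_range_succ']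
      refine Submodule.add_mem R ?_ (by simpa using hr)
      refine Submodule.sum_mem R fun j _ => ?_
      exact hstab _ (pow_mem_closed hmul hx (j + 1) (by omega)) r hr
    have hW0 : A.map (evalAt (w 0)) ≤ R := by
      rintro v ⟨x', hx', rfl⟩
      exact hstab x' hx' (w 0) hw0R
    exact ih (fun i => w i.succ) (le_trans (le_trans h hle) (sup_le hW0 le_rfl))


/-- Levitzki: a multiplicatively closed subspace of nilpotent endomorphisms of a nonzero
finite-dimensional complex vector space has a common nonzero kernel vector. -/
lemma levitzki : ∀ (N : ℕ) (V : Type) [AddCommGroup V] [Module ℂ V] [FiniteDimensional ℂ V],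
    finrank ℂ V = N → Nontrivial V →
    ∀ (A : Submodule ℂ (Module.End ℂ V)),
    (∀ x ∈ A, ∀ y ∈ A, x * y ∈ A) → (∀ x ∈ A, IsNilpotent x) →
    ∃ v : V, v ≠ 0 ∧ ∀ x ∈ A, x v = 0 := by
  intro N
  induction N using Nat.strong_induction_on with
  | _ N ih =>
    intro V _ _ _ hrank hnt A hmul hnil
    by_cases hA : ∀ x ∈ A, x = (0 : Module.End ℂ V)
    · obtain ⟨v, hv⟩ := exists_ne (0 : V)
      exact ⟨v, hv, fun x hx => by rw [hA x hx]; rfl⟩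
    push_neg at hA
    obtain ⟨x₀, hx₀A, hx₀⟩ := hA
    set U : Submodule ℂ V := ⨆ x : A, LinearMap.range (x : Module.End ℂ V) with hU
    have hUne : U ≠ ⊥ := by
      intro hbot
      apply hx₀
      have hle : LinearMap.range x₀ ≤ ⊥ := by
        rw [← hbot, hU]
        exact le_iSup (fun x : A => LinearMap.range (x : Module.End ℂ V)) ⟨x₀, hx₀A⟩
      ext v
      simpa using (Submodule.mem_bot ℂ).mp (hle (LinearMap.mem_range_self x₀ v))
    by_cases hUtop : U = ⊤
    · -- Nakayama contradiction
      exfalso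
      set b := Module.finBasis ℂ V with hb
      have hspan : (⊤ : Submodule ℂ V) ≤ ⨆ i, A.map (evalAt (b i)) := by
        rw [← hUtop, hU]
        refine iSup_le fun x => ?_
        rintro v ⟨u, rfl⟩
        have hu := Basis.sum_repr b u
        rw [← hu, map_sum]
        apply Submodule.sum_mem
        intro i _
        rw [LinearMap.map_smul]
        apply Submodule.smul_mem
        apply Submodule.mem_iSup_of_mem i
        exact ⟨x, x.2, evalAt_apply _ _⟩
      have hcon := nakayama_aux A hmul hnil _ _ hspan
      obtain ⟨v, hv⟩ := exists_ne (0 : V)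
      exact hv ((Submodule.mem_bot ℂ).mp (hcon Submodule.mem_top))
    · -- restrict to the invariant proper subspace U
      have hUlt : finrank ℂ U < N := hrank ▸ Submodule.finrank_lt hUtop
      have hUnt : Nontrivial U := Submodule.nontrivial_iff_ne_bot.mpr hUne
      have hinv : ∀ x ∈ A, ∀ u ∈ U, x u ∈ U := by
        intro x hx u hu
        have hmap : Submodule.map x U ≤ U := by
          rw [hU, Submodule.map_iSup]
          refine iSup_le fun y => ?_
          rintro v ⟨v', ⟨u', rfl⟩, rfl⟩
          refine Submodule.mem_iSup_of_mem (⟨x * (y : Module.End ℂ V), hmul x hx y y.2⟩ : A) ?_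
          exact ⟨u', rfl⟩
        exact hmap ⟨u, hu, rfl⟩
      set A' : Submodule ℂ (Module.End ℂ U) :=
        { carrier := {y | ∃ x ∈ A, ∀ u : U, (y u : V) = x u}
          add_mem' := by
            rintro y₁ y₂ ⟨x₁, hx₁, h₁⟩ ⟨x₂, hx₂, h₂⟩
            exact ⟨x₁ + x₂, A.add_mem hx₁ hx₂, fun u => by
              simp [h₁ u, h₂ u]⟩
          zero_mem' := ⟨0, A.zero_mem, fun u => by simp⟩
          smul_mem' := by
            rintro c y ⟨x, hx, hxy⟩
            exact ⟨c • x, A.smul_mem c hx, fun u => by simp [hxy u]⟩ } with hA'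
      have hmul' : ∀ y₁ ∈ A', ∀ y₂ ∈ A', y₁ * y₂ ∈ A' := by
        rintro y₁ ⟨x₁, hx₁, h₁⟩ y₂ ⟨x₂, hx₂, h₂⟩
        exact ⟨x₁ * x₂, hmul _ hx₁ _ hx₂, fun u => by
          simp only [Module.End.mul_apply, h₁, h₂]⟩
      have hpow : ∀ (y : Module.End ℂ U) (x : Module.End ℂ V),
          (∀ u : U, (y u : V) = x u) → ∀ (j : ℕ) (u : U), ((y ^ j) u : V) = (x ^ j) u := by
        intro y x hxy j
        induction j with
        | zero => intro u; simp
        | succ n ihn =>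
          intro u
          rw [pow_succ, pow_succ, Module.End.mul_apply, Module.End.mul_apply, ihn, hxy]
      have hnil' : ∀ y ∈ A', IsNilpotent y := by
        rintro y ⟨x, hx, hxy⟩
        obtain ⟨m₀, hm₀⟩ := hnil x hx
        refine ⟨m₀, ?_⟩
        ext u
        have := hpow y x hxy m₀ u
        rw [hm₀] at this
        simpa using this
      obtain ⟨v, hv0, hv⟩ := ih (finrank ℂ U) hUlt U rfl hUnt A' hmul' hnil'
      refine ⟨(v : V), by simpa using hv0, fun x hx => ?_⟩
      have hy : (x.restrict (hinv x hx) : Module.End ℂ U) ∈ A' :=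
        ⟨x, hx, fun u => rfl⟩
      have := hv _ hy
      have h2 : ((x.restrict (hinv x hx)) v : V) = x v := rfl
      rw [this] at h2
      simpa using h2.symm


/-- Kolchin's theorem: a multiplicatively closed set of unipotent endomorphisms of a nonzero
finite-dimensional complex vector space has a common nonzero fixed vector. -/
lemma kolchin {V : Type} [AddCommGroup V] [Module ℂ V] [FiniteDimensional ℂ V] [Nontrivial V]
    (S : Set (Module.End ℂ V)) (hmulS : ∀ s ∈ S, ∀ t ∈ S, s * t ∈ S)
    (hnilS : ∀ s ∈ S, IsNilpotent (s - 1)) :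
    ∃ v : V, v ≠ 0 ∧ ∀ s ∈ S, s v = v := by
  set A := Submodule.span ℂ ((fun s => s - 1) '' S) with hA
  have hgen : ∀ s ∈ S, s - 1 ∈ A := fun s hs => Submodule.subset_span ⟨s, hs, rfl⟩
  have hmul_gen : ∀ s ∈ S, ∀ y ∈ A, (s - 1) * y ∈ A := by
    intro s hs y hy
    induction hy using Submodule.span_induction with
    | mem t ht =>
      obtain ⟨t', ht', rfl⟩ := ht
      have hexp : (s - 1) * (t' - 1) = (s * t' - 1) - (s - 1) - (t' - 1) := by noncomm_ring
      rw [hexp]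
      exact sub_mem (sub_mem (hgen _ (hmulS s hs t' ht')) (hgen s hs)) (hgen t' ht')
    | zero => rw [mul_zero]; exact A.zero_mem
    | add a b _ _ ha hb => rw [mul_add]; exact A.add_mem ha hb
    | smul c a _ ha => rw [mul_smul_comm]; exact A.smul_mem c ha
  have hmulA : ∀ x ∈ A, ∀ y ∈ A, x * y ∈ A := by
    intro x hx y hy
    induction hx using Submodule.span_induction with
    | mem t ht =>
      obtain ⟨t', ht', rfl⟩ := ht
      exact hmul_gen t' ht' y hy
    | zero => rw [zero_mul]; exact A.zero_mem
    | add a b _ _ ha hb => rw [add_mul]; exact A.add_mem ha hb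
    | smul c a _ ha => rw [smul_mul_assoc]; exact A.smul_mem c ha
  have htr : ∀ x ∈ A, LinearMap.trace ℂ V x = 0 := by
    intro x hx
    induction hx using Submodule.span_induction with
    | mem t ht =>
      obtain ⟨t', ht', rfl⟩ := ht
      exact trace_eq_zero_of_nilpotent (hnilS t' ht')
    | zero => exact map_zero _
    | add a b _ _ ha hb => rw [map_add, ha, hb, add_zero]
    | smul c a _ ha => rw [_root_.map_smul, ha, smul_zero]
  have hnilA : ∀ x ∈ A, IsNilpotent x := fun x hx =>
    isNilpotent_of_forall_trace_pow x fun k hk => htr _ (pow_mem_closed hmulA hx k hk)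
  obtain ⟨v, hv0, hv⟩ := levitzki (finrank ℂ V) V rfl ‹Nontrivial V› A hmulA hnilA
  refine ⟨v, hv0, fun s hs => ?_⟩
  have h1 := hv _ (hgen s hs)
  rw [LinearMap.sub_apply, Module.End.one_apply, sub_eq_zero] at h1
  exact h1

/-- Kolchin's theorem for an invariant subspace. -/
lemma kolchin_submodule {V : Type} [AddCommGroup V] [Module ℂ V] [FiniteDimensional ℂ V]
    (S : Set (Module.End ℂ V)) (hmulS : ∀ s ∈ S, ∀ t ∈ S, s * t ∈ S)
    (hnilS : ∀ s ∈ S, IsNilpotent (s - 1)) (U : Submodule ℂ V) (hUne : U ≠ ⊥)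
    (hinv : ∀ s ∈ S, ∀ u ∈ U, s u ∈ U) :
    ∃ v : V, v ∈ U ∧ v ≠ 0 ∧ ∀ s ∈ S, s v = v := by
  haveI : Nontrivial U := Submodule.nontrivial_iff_ne_bot.mpr hUne
  set S' : Set (Module.End ℂ U) := {y | ∃ s ∈ S, ∀ u : U, (y u : V) = s u} with hS'
  have hmulS' : ∀ y₁ ∈ S', ∀ y₂ ∈ S', y₁ * y₂ ∈ S' := by
    rintro y₁ ⟨s₁, hs₁, h₁⟩ y₂ ⟨s₂, hs₂, h₂⟩
    exact ⟨s₁ * s₂, hmulS s₁ hs₁ s₂ hs₂, fun u => by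
      simp only [Module.End.mul_apply, h₁, h₂]⟩
  have hsubpow : ∀ (y : Module.End ℂ U) (s : Module.End ℂ V),
      (∀ u : U, (y u : V) = s u) →
      ∀ (j : ℕ) (u : U), (((y - 1) ^ j) u : V) = ((s - 1) ^ j) (u : V) := by
    intro y s hys j
    induction j with
    | zero => intro u; simp
    | succ n ihn =>
      intro u
      rw [pow_succ, pow_succ, Module.End.mul_apply, Module.End.mul_apply]
      simp only [LinearMap.sub_apply, Module.End.one_apply]
      rw [ihn]
      push_cast
      rw [hys]
  have hnilS' : ∀ y ∈ S', IsNilpotent (y - 1) := by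
    rintro y ⟨s, hs, hys⟩
    obtain ⟨m₀, hm₀⟩ := hnilS s hs
    refine ⟨m₀, ?_⟩
    ext u
    have := hsubpow y s hys m₀ u
    rw [hm₀] at this
    simpa using this
  obtain ⟨v, hv0, hv⟩ := kolchin S' hmulS' hnilS'
  refine ⟨(v : V), v.2, by simpa using hv0, fun s hs => ?_⟩
  have hy : (s.restrict (hinv s hs) : Module.End ℂ U) ∈ S' := ⟨s, hs, fun u => rfl⟩
  have h1 := hv _ hy
  have h2 : ((s.restrict (hinv s hs)) v : V) = s v := rfl
  rw [h1] at h2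
  exact h2.symm


end KolchinMachinery

open Module Set LinearMap

/-- a unipotent subgroup of U(n,1) fixes a nonzero null vector
for the Hermitian form. -/
theorem unipotent_subgroup_fixes_null_vector (n : ℕ) (hn : 1 ≤ n)
    (G : Subgroup (Matrix (Fin (n + 1)) (Fin (n + 1)) ℂ)ˣ)
    (hU : ∀ A ∈ G, ((A : (Matrix (Fin (n + 1)) (Fin (n + 1)) ℂ)ˣ) :
      Matrix (Fin (n + 1)) (Fin (n + 1)) ℂ) ∈ USet n)
    (hunip : ∀ A ∈ G, IsNilpotent (((A : (Matrix (Fin (n + 1)) (Fin (n + 1)) ℂ)ˣ) :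
      Matrix (Fin (n + 1)) (Fin (n + 1)) ℂ) - 1)) :
    ∃ v : HV n, v ≠ 0 ∧
      dotProduct (star v) ((HMat n).mulVec v) = 0 ∧
      ∀ A ∈ G, ((A : (Matrix (Fin (n + 1)) (Fin (n + 1)) ℂ)ˣ) :
        Matrix (Fin (n + 1)) (Fin (n + 1)) ℂ).mulVec v = v := by
  classical
  set S : Set (Module.End ℂ (HV n)) :=
    {x | ∃ A : (Matrix (Fin (n + 1)) (Fin (n + 1)) ℂ)ˣ,
      A ∈ G ∧ x = Matrix.mulVecLin (A : Matrix (Fin (n + 1)) (Fin (n + 1)) ℂ)} with hSdef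
  have hmulS : ∀ s ∈ S, ∀ t ∈ S, s * t ∈ S := by
    rintro s ⟨A, hA, rfl⟩ t ⟨B, hB, rfl⟩
    refine ⟨A * B, G.mul_mem hA hB, ?_⟩
    rw [Units.val_mul, Matrix.mulVecLin_mul, Module.End.mul_eq_comp]
  have hnilS : ∀ s ∈ S, IsNilpotent (s - 1) := by
    rintro s ⟨A, hA, rfl⟩
    have h1 : (Matrix.toLinAlgEquiv' ((A : Matrix (Fin (n + 1)) (Fin (n + 1)) ℂ) - 1) :
        Module.End ℂ (HV n)) = Matrix.mulVecLin (A : Matrix (Fin (n + 1)) (Fin (n + 1)) ℂ) - 1 := by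
      rw [_root_.map_sub, _root_.map_one]; rfl
    have := (hunip A hA).map (Matrix.toLinAlgEquiv' (R := ℂ) (n := Fin (n+1))).toAlgHom
    rw [← h1]; exact this
  -- the fixed space
  set W : Submodule ℂ (HV n) :=
    { carrier := {v | ∀ s ∈ S, s v = v}
      add_mem' := by
        intro a b ha hb s hs
        rw [map_add, ha s hs, hb s hs]
      zero_mem' := fun s hs => map_zero s
      smul_mem' := by
        intro c a ha s hs
        rw [_root_.map_smul, ha s hs] } with hWdef
  have hWmem : ∀ v, v ∈ W ↔ ∀ s ∈ S, s v = v := fun v => Iff.rfl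
  have hWne : W ≠ ⊥ := by
    obtain ⟨v, hv0, hv⟩ := kolchin S hmulS hnilS
    exact Submodule.ne_bot_iff W |>.mpr ⟨v, hv, hv0⟩
  have hfix : ∀ v ∈ W, ∀ A ∈ G, ((A : (Matrix (Fin (n + 1)) (Fin (n + 1)) ℂ)ˣ) :
      Matrix (Fin (n + 1)) (Fin (n + 1)) ℂ).mulVec v = v := by
    intro v hv A hA
    have := hv (Matrix.mulVecLin (A : Matrix (Fin (n + 1)) (Fin (n + 1)) ℂ)) ⟨A, hA, rfl⟩
    rwa [Matrix.mulVecLin_apply] at this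
  by_cases hnull : ∃ v : HV n, v ∈ W ∧ v ≠ 0 ∧ star v ⬝ᵥ (HMat n) *ᵥ v = 0
  · obtain ⟨v, hvW, hv0, hvq⟩ := hnull
    exact ⟨v, hv0, hvq, hfix v hvW⟩
  · push_neg at hnull
    have haniso : ∀ v ∈ W, star v ⬝ᵥ (HMat n) *ᵥ v = 0 → v = 0 := by
      intro v hv hq
      by_contra h0
      exact (hnull v hv h0) hq
    set Wp : Submodule ℂ (HV n) :=
      { carrier := {u | ∀ w ∈ W, star w ⬝ᵥ (HMat n) *ᵥ u = 0}
        add_mem' := by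
          intro a b ha hb w hw
          rw [Matrix.mulVec_add, dotProduct_add, ha w hw, hb w hw, add_zero]
        zero_mem' := by
          intro w hw
          rw [Matrix.mulVec_zero, dotProduct_zero]
        smul_mem' := by
          intro c a ha w hw
          rw [Matrix.mulVec_smul, dotProduct_smul, ha w hw, smul_zero] } with hWp
    have hdisj : ∀ v, v ∈ W → v ∈ Wp → v = 0 := fun v hW hP => haniso v hW (hP v hW)
    have hWpinv : ∀ s ∈ S, ∀ u ∈ Wp, s u ∈ Wp := by
      rintro s ⟨A, hA, rfl⟩ u hu w hw
      rw [Matrix.mulVecLin_apply]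
      have hwfix : (A : Matrix (Fin (n + 1)) (Fin (n + 1)) ℂ) *ᵥ w = w := hfix w hw A hA
      calc star w ⬝ᵥ HMat n *ᵥ ((A : Matrix (Fin (n + 1)) (Fin (n + 1)) ℂ) *ᵥ u)
          = star ((A : Matrix (Fin (n + 1)) (Fin (n + 1)) ℂ) *ᵥ w) ⬝ᵥ
            HMat n *ᵥ ((A : Matrix (Fin (n + 1)) (Fin (n + 1)) ℂ) *ᵥ u) := by rw [hwfix]
        _ = star w ⬝ᵥ (((A : Matrix (Fin (n + 1)) (Fin (n + 1)) ℂ))ᴴ * HMat n *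
            (A : Matrix (Fin (n + 1)) (Fin (n + 1)) ℂ)) *ᵥ u := by
            rw [Matrix.star_mulVec, ← Matrix.dotProduct_mulVec,
              Matrix.mulVec_mulVec, Matrix.mulVec_mulVec, Matrix.mul_assoc]
        _ = star w ⬝ᵥ HMat n *ᵥ u := by rw [hU A hA]
        _ = 0 := hu w hw
    by_cases hperp : Wp = ⊥
    · exfalso
      -- W must be everything
      set d := finrank ℂ W with hd
      set b : Basis (Fin d) ℂ W := Module.finBasis ℂ W with hb
      set Φ : HV n →ₗ[ℂ] (Fin d → ℂ) :=
        { toFun := fun u i => star ((b i : HV n)) ⬝ᵥ (HMat n) *ᵥ u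
          map_add' := by
            intro a c
            funext i
            simp [Matrix.mulVec_add, dotProduct_add]
          map_smul' := by
            intro c a
            funext i
            simp [Matrix.mulVec_smul, dotProduct_smul] } with hΦ
      have hker : ∀ u, Φ u = 0 → u = 0 := by
        intro u hu
        have huWp : u ∈ Wp := by
          intro w hw
          -- w lies in the span of the basis vectors
          have hwspan : w ∈ Submodule.span ℂ (Set.range (fun i => (b i : HV n))) := by
            have h1 : W = Submodule.map W.subtype ⊤ := by
              rw [Submodule.map_subtype_top]
            have h2 : (⊤ : Submodule ℂ W) = Submodule.span ℂ (Set.range b) :=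
              (Basis.span_eq b).symm
            rw [h1, h2, Submodule.map_span] at hw
            have h3 : W.subtype '' Set.range b = Set.range (fun i => (b i : HV n)) := by
              ext x
              simp [Set.mem_image, Set.mem_range]
            rwa [h3] at hw
          -- the property defining Wp is closed under the span
          have hclosed : ∀ x ∈ Submodule.span ℂ (Set.range (fun i => (b i : HV n))),
              star x ⬝ᵥ (HMat n) *ᵥ u = 0 := by
            intro x hx
            induction hx using Submodule.span_induction with
            | mem y hy =>
              obtain ⟨i, rfl⟩ := hy
              have := congrFun hu i
              exact this
            | zero => simp
            | add a c _ _ ha hc => rw [star_add, add_dotProduct, ha, hc, add_zero]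
            | smul r a _ ha =>
              rw [star_smul, smul_dotProduct, ha, smul_zero]
          exact hclosed w hwspan
        rw [hperp] at huWp
        simpa using huWp
      have hinj : Function.Injective Φ := by
        rw [← LinearMap.ker_eq_bot]
        rw [Submodule.eq_bot_iff]
        exact fun u hu => hker u hu
      have hfr : finrank ℂ (HV n) = n + 1 := Module.finrank_fin_fun ℂ
      have hle : n + 1 ≤ d := by
        have := LinearMap.finrank_le_finrank_of_injective hinj
        simpa [Module.finrank_fin_fun] using this
      have hWtop : W = ⊤ := by
        have h2 := Submodule.finrank_le W
        apply Submodule.eq_top_of_finrank_eq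
        omega
      -- the null vector e₀
      set v₀ : HV n := Pi.single (0 : Fin (n + 1)) (1 : ℂ) with hv₀
      have hv₀0 : v₀ ≠ 0 := by
        intro h
        have := congrFun h 0
        rw [hv₀] at this
        simp at this
      have h0last : (0 : Fin (n + 1)) ≠ Fin.last n := by
        intro h
        have := congrArg Fin.val h
        simp [Fin.last] at this
        omega
      have hq₀ : star v₀ ⬝ᵥ (HMat n) *ᵥ v₀ = 0 := by
        have hmv : (HMat n) *ᵥ v₀ = fun i => HMat n i 0 := by
          funext i
          simp [hv₀, Matrix.mulVec_single]
        rw [hmv]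
        have hstar : star v₀ = v₀ := by
          funext i
          rw [hv₀]
          by_cases hi : i = 0
          · subst hi; simp
          · simp [Pi.single, Function.update, hi]
        rw [hstar, hv₀, single_dotProduct, one_mul]
        rw [HMat]
        simp [h0last]
      exact hnull v₀ (hWtop ▸ Submodule.mem_top) hv₀0 hq₀
    · obtain ⟨u, huP, hu0, hufix⟩ := kolchin_submodule S hmulS hnilS Wp hperp hWpinv
      have huW : u ∈ W := hufix
      exact absurd (hdisj u huW huP) hu0
end
end

section
/- Let n ≥ 1. (i) The set 𝒰 of block matrices [[1, −conj(w)ᵀ, −(1/2)·conj(w)ᵀw + i·t],[0, I_{n−1}, w],[0,0,1]] (blocks of sizes 1, n−1, 1) with w ∈ ℂ^{n−1} and t ∈ ℝ is a subgroup of U(n,1), all of whose elements are unipotent. (ii) Conversely, if A ∈ U(n,1) is unipotent and has block upper-triangular form [[1, vᵀ, a],[0, M, w],[0,0,1]] (blocks of sizes 1, n−1, 1), then A ∈ 𝒰; that is, M = I_{n−1}, v = −conj(w), and a = −(1/2)·conj(w)ᵀw + i·t for some t ∈ ℝ. -/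
open Matrix

noncomputable section

/-- The block matrix [[1, −w*, −(1/2)w*w + i t],[0, I, w],[0,0,1]], where the
vector w ∈ ℂ^{n-1} is encoded as a vector on Fin (n+1) supported on the middle
indices. -/
def UMat (n : ℕ) (w : Fin (n + 1) → ℂ) (t : ℝ) :
    Matrix (Fin (n + 1)) (Fin (n + 1)) ℂ := fun i j =>
  if i = 0 then
    (if j = 0 then 1
     else if j = Fin.last n then
       -(1 / 2 : ℂ) * dotProduct (star w) w + (t : ℂ) * Complex.I
     else -((starRingEnd ℂ) (w j)))
  else if i = Fin.last n then (if j = Fin.last n then 1 else 0)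
  else (if j = Fin.last n then w i else if j = i then 1 else 0)

/-- The set 𝒰 of all such matrices. -/
def MaxUnip (n : ℕ) : Set (Matrix (Fin (n + 1)) (Fin (n + 1)) ℂ) :=
  {M | ∃ (w : Fin (n + 1) → ℂ) (t : ℝ),
    w 0 = 0 ∧ w (Fin.last n) = 0 ∧ M = UMat n w t}


namespace MaxUnipAux

variable {n : ℕ}

/-- the set of "middle" indices -/
def mids (n : ℕ) : Finset (Fin (n+1)) :=
  Finset.univ.filter (fun k => k ≠ 0 ∧ k ≠ Fin.last n)

lemma zero_ne_last (hn : 1 ≤ n) : (0 : Fin (n+1)) ≠ Fin.last n := by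
  rw [Fin.ne_iff_vne]
  simp only [Fin.val_last, Fin.val_zero]
  omega

lemma sum_split (hn : 1 ≤ n) (f : Fin (n+1) → ℂ) :
    ∑ k, f k = f 0 + f (Fin.last n) + ∑ k ∈ mids n, f k := by
  have h0 : (0 : Fin (n+1)) ≠ Fin.last n := zero_ne_last hn
  have huniv : (Finset.univ : Finset (Fin (n+1))) =
      insert 0 (insert (Fin.last n) (mids n)) := by
    ext k
    simp only [Finset.mem_univ, Finset.mem_insert, mids, Finset.mem_filter, true_and, true_iff]
    tauto
  rw [huniv, Finset.sum_insert, Finset.sum_insert, add_assoc]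
  · simp [mids]
  · simp [mids, h0]

lemma form_entry (hn : 1 ≤ n) (A B : Matrix (Fin (n+1)) (Fin (n+1)) ℂ) (i j : Fin (n+1)) :
    (Aᴴ * HMat n * B) i j =
      (starRingEnd ℂ) (A 0 i) * B (Fin.last n) j +
      (starRingEnd ℂ) (A (Fin.last n) i) * B 0 j +
      ∑ k ∈ mids n, (starRingEnd ℂ) (A k i) * B k j := by
  have h0 : (0 : Fin (n+1)) ≠ Fin.last n := zero_ne_last hn
  have hH : ∀ k, (HMat n * B) k j =
      if k = 0 then B (Fin.last n) j else if k = Fin.last n then B 0 j else B k j := by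
    intro k
    rw [Matrix.mul_apply, sum_split hn]
    by_cases hk0 : k = 0
    · subst hk0
      rw [if_pos rfl]
      have hm : ∑ l ∈ mids n, HMat n 0 l * B l j = 0 := by
        apply Finset.sum_eq_zero
        intro l hl
        simp only [mids, Finset.mem_filter] at hl
        simp [HMat, h0, hl.2.1, hl.2.2, (Ne.symm hl.2.1)]
      rw [hm]
      simp [HMat, h0, h0.symm]
    · rw [if_neg hk0]
      by_cases hkl : k = Fin.last n
      · subst hkl
        rw [if_pos rfl]
        have hm : ∑ l ∈ mids n, HMat n (Fin.last n) l * B l j = 0 := by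
          apply Finset.sum_eq_zero
          intro l hl
          simp only [mids, Finset.mem_filter] at hl
          simp [HMat, h0, h0.symm, hl.2.1, hl.2.2, Ne.symm hl.2.2]
        rw [hm]
        simp [HMat, h0, h0.symm]
      · rw [if_neg hkl]
        have hm : ∑ l ∈ mids n, HMat n k l * B l j =
            ∑ l ∈ mids n, (if k = l then 1 else 0) * B l j := by
          apply Finset.sum_congr rfl
          intro l hl
          simp only [mids, Finset.mem_filter] at hl
          simp [HMat, hk0, hkl, hl.2.1, hl.2.2]
        rw [hm]
        have : ∑ l ∈ mids n, (if k = l then (1:ℂ) else 0) * B l j = B k j := by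
          rw [Finset.sum_congr rfl (fun l _ => by rw [ite_mul, one_mul, zero_mul]),
            Finset.sum_ite_eq]
          simp [mids, hk0, hkl]
        rw [this]
        simp [HMat, hk0, hkl]
  rw [Matrix.mul_assoc, Matrix.mul_apply, sum_split hn]
  rw [hH 0, hH (Fin.last n)]
  simp only [if_pos rfl, if_neg h0.symm, Matrix.conjTranspose_apply]
  congr 1
  apply Finset.sum_congr rfl
  intro k hk
  simp only [mids, Finset.mem_filter] at hk
  rw [hH k, if_neg hk.2.1, if_neg hk.2.2]
  rfl


lemma mem_mids {k : Fin (n+1)} : k ∈ mids n ↔ k ≠ 0 ∧ k ≠ Fin.last n := by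
  simp [mids]

lemma dot_mid (hn : 1 ≤ n) {w : Fin (n+1) → ℂ} (hw0 : w 0 = 0) (hwl : w (Fin.last n) = 0)
    (w' : Fin (n+1) → ℂ) :
    dotProduct (star w) w' = ∑ k ∈ mids n, (starRingEnd ℂ) (w k) * w' k := by
  rw [dotProduct, sum_split hn]
  simp [hw0, hwl, Pi.star_apply, Complex.star_def]

lemma conj_dot (w w' : Fin (n+1) → ℂ) :
    (starRingEnd ℂ) (dotProduct (star w) w') = dotProduct (star w') w := by
  simp only [dotProduct, map_sum, _root_.map_mul, Pi.star_apply, Complex.star_def,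
    Complex.conj_conj]
  apply Finset.sum_congr rfl
  intro k _
  ring

lemma dot_self_im (w : Fin (n+1) → ℂ) : (dotProduct (star w) w).im = 0 :=
  Complex.conj_eq_iff_im.mp (conj_dot w w)

lemma UMat_zero (hn : 1 ≤ n) : UMat n (0 : Fin (n+1) → ℂ) 0 = 1 := by
  have h0 : (0 : Fin (n+1)) ≠ Fin.last n := zero_ne_last hn
  ext i j
  by_cases hi0 : i = 0
  · subst hi0
    by_cases hj0 : j = 0
    · subst hj0; simp [UMat, Matrix.one_apply]
    · by_cases hjl : j = Fin.last n
      · subst hjl; simp [UMat, Matrix.one_apply, h0, hj0]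
      · simp [UMat, Matrix.one_apply, hj0, hjl, Ne.symm hj0]
  · by_cases hil : i = Fin.last n
    · subst hil
      by_cases hjl : j = Fin.last n
      · subst hjl; simp [UMat, Matrix.one_apply, Ne.symm h0]
      · have hlj : Fin.last n ≠ j := fun h => hjl h.symm
        simp [UMat, Matrix.one_apply, Ne.symm h0, hjl, hlj]
    · by_cases hjl : j = Fin.last n
      · subst hjl; simp [UMat, Matrix.one_apply, hi0, hil]
      · by_cases hji : j = i
        · subst hji; simp [UMat, Matrix.one_apply, hi0, hil, hjl]
        · have hij : i ≠ j := fun h => hji h.symm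
          simp [UMat, Matrix.one_apply, hi0, hil, hjl, hji, hij]

lemma UMat_mul (hn : 1 ≤ n) {w w' : Fin (n+1) → ℂ} (t t' : ℝ)
    (hw0 : w 0 = 0) (hwl : w (Fin.last n) = 0)
    (hw0' : w' 0 = 0) (hwl' : w' (Fin.last n) = 0) :
    UMat n w t * UMat n w' t' =
      UMat n (w + w') (t + t' - (dotProduct (star w) w').im) := by
  have h0 : (0 : Fin (n+1)) ≠ Fin.last n := zero_ne_last hn
  ext i j
  rw [Matrix.mul_apply, sum_split hn]
  by_cases hil : i = Fin.last n
  · subst hil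
    have hm : ∑ k ∈ mids n, UMat n w t (Fin.last n) k * UMat n w' t' k j = 0 := by
      apply Finset.sum_eq_zero
      intro k hk
      rw [mem_mids] at hk
      simp [UMat, Ne.symm h0, hk.2]
    rw [hm]
    simp [UMat, Ne.symm h0, h0]
  · by_cases hi0 : i = 0
    · subst hi0
      have hm : ∑ k ∈ mids n, UMat n w t 0 k * UMat n w' t' k j =
          ∑ k ∈ mids n, (-((starRingEnd ℂ) (w k))) * UMat n w' t' k j := by
        apply Finset.sum_congr rfl
        intro k hk
        rw [mem_mids] at hk
        simp [UMat, hk.1, hk.2]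
      rw [hm]
      by_cases hj0 : j = 0
      · subst hj0
        have hz : ∑ k ∈ mids n, (-((starRingEnd ℂ) (w k))) * UMat n w' t' k 0 = 0 := by
          apply Finset.sum_eq_zero
          intro k hk
          rw [mem_mids] at hk
          simp [UMat, hk.1, hk.2, h0, Ne.symm hk.1]
        rw [hz]
        simp [UMat, h0, Ne.symm h0]
      · by_cases hjl : j = Fin.last n
        · subst hjl
          have hz : ∑ k ∈ mids n, (-((starRingEnd ℂ) (w k))) * UMat n w' t' k (Fin.last n) =
              -(dotProduct (star w) w') := by
            rw [dot_mid hn hw0 hwl w', ← Finset.sum_neg_distrib]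
            apply Finset.sum_congr rfl
            intro k hk
            rw [mem_mids] at hk
            simp [UMat, hk.1, hk.2]
          rw [hz]
          simp only [UMat, if_pos rfl, if_neg h0, if_neg (Ne.symm h0), if_neg h0.symm]
          set z := dotProduct (star w) w' with hzdef
          have hdd : dotProduct (star (w + w')) (w + w') =
              dotProduct (star w) w + z + (starRingEnd ℂ) z +
                dotProduct (star w') w' := by
            rw [star_add, add_dotProduct, dotProduct_add, dotProduct_add,
              conj_dot]
            ring
          rw [hdd]
          have hsub : z - (starRingEnd ℂ) z = 2 * (z.im : ℂ) * Complex.I := by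
            rw [Complex.sub_conj]
            push_cast
            ring
          push_cast
          linear_combination (-(1/2) : ℂ) * hsub
        · -- j mid
          have hz : ∑ k ∈ mids n, (-((starRingEnd ℂ) (w k))) * UMat n w' t' k j =
              -((starRingEnd ℂ) (w j)) := by
            have : ∀ k ∈ mids n, (-((starRingEnd ℂ) (w k))) * UMat n w' t' k j =
                if j = k then -((starRingEnd ℂ) (w k)) else 0 := by
              intro k hk
              rw [mem_mids] at hk
              simp [UMat, hk.1, hk.2, hjl]
            rw [Finset.sum_congr rfl this, Finset.sum_ite_eq, if_pos (mem_mids.mpr ⟨hj0, hjl⟩)]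
          rw [hz]
          simp [UMat, hj0, hjl, h0, Ne.symm h0, map_add]
    · -- i mid
      have hz : ∑ k ∈ mids n, UMat n w t i k * UMat n w' t' k j = UMat n w' t' i j := by
        have : ∀ k ∈ mids n, UMat n w t i k * UMat n w' t' k j =
            if k = i then UMat n w' t' k j else 0 := by
          intro k hk
          rw [mem_mids] at hk
          by_cases hki : k = i
          · subst hki; simp [UMat, hk.1, hk.2]
          · simp [UMat, hk.1, hk.2, hki, hi0, hil]
        rw [Finset.sum_congr rfl this, Finset.sum_ite_eq', if_pos (mem_mids.mpr ⟨hi0, hil⟩)]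
      rw [hz]
      by_cases hjl : j = Fin.last n
      · subst hjl
        simp [UMat, hi0, hil, h0, Ne.symm h0, Ne.symm hi0]
      · simp [UMat, hi0, hil, hjl, h0, Ne.symm h0, Ne.symm hi0]
lemma UMat_mem (hn : 1 ≤ n) {w : Fin (n+1) → ℂ} (t : ℝ)
    (hw0 : w 0 = 0) (hwl : w (Fin.last n) = 0) :
    UMat n w t ∈ USet n := by
  have h0 : (0 : Fin (n+1)) ≠ Fin.last n := zero_ne_last hn
  show (UMat n w t)ᴴ * HMat n * UMat n w t = HMat n
  ext i j
  rw [form_entry hn]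
  by_cases hi0 : i = 0
  · subst hi0
    have hm : ∑ k ∈ mids n, (starRingEnd ℂ) (UMat n w t k 0) * UMat n w t k j = 0 := by
      apply Finset.sum_eq_zero
      intro k hk
      rw [mem_mids] at hk
      simp [UMat, hk.1, hk.2, h0, Ne.symm hk.1]
    rw [hm]
    by_cases hjl : j = Fin.last n
    · subst hjl
      simp [UMat, HMat, h0, Ne.symm h0]
    · simp [UMat, HMat, h0, Ne.symm h0, hjl]
  · by_cases hil : i = Fin.last n
    · subst hil
      have hc1 : UMat n w t 0 (Fin.last n) =
          -(1 / 2 : ℂ) * dotProduct (star w) w + (t : ℂ) * Complex.I := by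
        simp [UMat, h0, Ne.symm h0]
      have hc2 : UMat n w t (Fin.last n) (Fin.last n) = 1 := by
        simp [UMat, Ne.symm h0]
      by_cases hj0 : j = 0
      · subst hj0
        have hm : ∑ k ∈ mids n, (starRingEnd ℂ) (UMat n w t k (Fin.last n)) *
            UMat n w t k 0 = 0 := by
          apply Finset.sum_eq_zero
          intro k hk
          rw [mem_mids] at hk
          simp [UMat, hk.1, hk.2, h0, Ne.symm hk.1]
        rw [hm]
        simp [UMat, HMat, h0, Ne.symm h0]
      · by_cases hjl : j = Fin.last n
        · subst hjl
          have hm : ∑ k ∈ mids n, (starRingEnd ℂ) (UMat n w t k (Fin.last n)) *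
              UMat n w t k (Fin.last n) = dotProduct (star w) w := by
            rw [dot_mid hn hw0 hwl w]
            apply Finset.sum_congr rfl
            intro k hk
            rw [mem_mids] at hk
            simp [UMat, hk.1, hk.2]
          rw [hm]
          have hcs := conj_dot w w
          have hH : HMat n (Fin.last n) (Fin.last n) = 0 := by
            simp [HMat, h0, Ne.symm h0]
          rw [hH, hc1, hc2]
          simp only [map_add, _root_.map_mul, map_neg, map_div₀, _root_.map_one, map_ofNat,
            Complex.conj_ofReal, Complex.conj_I, hcs]
          ring
        · -- j mid
          have hm : ∑ k ∈ mids n, (starRingEnd ℂ) (UMat n w t k (Fin.last n)) *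
              UMat n w t k j = (starRingEnd ℂ) (w j) := by
            have : ∀ k ∈ mids n, (starRingEnd ℂ) (UMat n w t k (Fin.last n)) *
                UMat n w t k j = if j = k then (starRingEnd ℂ) (w k) else 0 := by
              intro k hk
              rw [mem_mids] at hk
              simp [UMat, hk.1, hk.2, hjl]
            rw [Finset.sum_congr rfl this, Finset.sum_ite_eq,
              if_pos (mem_mids.mpr ⟨hj0, hjl⟩)]
          rw [hm]
          have hlj : Fin.last n ≠ j := fun h => hjl h.symm
          have hH : HMat n (Fin.last n) j = 0 := by
            simp [HMat, h0, Ne.symm h0, hj0, hjl, hlj]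
          rw [hH, hc1, hc2]
          simp [UMat, hj0, hjl, h0, Ne.symm h0]
    · -- i mid
      have hc1 : UMat n w t 0 i = -((starRingEnd ℂ) (w i)) := by
        simp [UMat, hi0, hil]
      have hli : Fin.last n ≠ i := fun h => hil h.symm
      have hc2 : UMat n w t (Fin.last n) i = 0 := by
        simp [UMat, Ne.symm h0, hil, hli]
      rw [hc1, hc2]
      have hm : ∑ k ∈ mids n, (starRingEnd ℂ) (UMat n w t k i) * UMat n w t k j =
          UMat n w t i j := by
        have : ∀ k ∈ mids n, (starRingEnd ℂ) (UMat n w t k i) * UMat n w t k j =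
            if k = i then UMat n w t k j else 0 := by
          intro k hk
          rw [mem_mids] at hk
          by_cases hki : k = i
          · subst hki
            simp [UMat, hk.1, hk.2, hil]
          · have hik : i ≠ k := fun h => hki h.symm
            simp [UMat, hk.1, hk.2, hil, hki, hik]
        rw [Finset.sum_congr rfl this, Finset.sum_ite_eq',
          if_pos (mem_mids.mpr ⟨hi0, hil⟩)]
      rw [hm]
      by_cases hj0 : j = 0
      · subst hj0
        simp [UMat, HMat, hi0, hil, h0, Ne.symm hi0, Ne.symm h0, hli]
      · by_cases hjl : j = Fin.last n
        · subst hjl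
          simp [UMat, HMat, hi0, hil, h0, Ne.symm h0, hli]
        · by_cases hij : i = j
          · subst hij
            simp [UMat, HMat, hi0, hil, hjl, h0, Ne.symm h0, hli]
          · have hji : j ≠ i := fun h => hij h.symm
            simp [UMat, HMat, hi0, hil, hj0, hjl, hij, hji, h0, Ne.symm h0, hli]

lemma UMat_nil (hn : 1 ≤ n) (w : Fin (n+1) → ℂ) (t : ℝ) :
    (UMat n w t - 1) ^ 3 = 0 := by
  have h0 : (0 : Fin (n+1)) ≠ Fin.last n := zero_ne_last hn
  set N := UMat n w t - 1 with hN
  have hcol0 : ∀ i, N i 0 = 0 := by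
    intro i
    simp only [hN, Matrix.sub_apply, Matrix.one_apply]
    by_cases hi0 : i = 0
    · subst hi0; simp [UMat]
    · by_cases hil : i = Fin.last n
      · subst hil
        simp [UMat, Ne.symm h0, h0]
      · simp [UMat, hi0, hil, h0, Ne.symm hi0]
  have hlast : ∀ j, N (Fin.last n) j = 0 := by
    intro j
    simp only [hN, Matrix.sub_apply, Matrix.one_apply]
    by_cases hjl : j = Fin.last n
    · subst hjl; simp [UMat, Ne.symm h0]
    · have hlj : Fin.last n ≠ j := fun h => hjl h.symm
      simp [UMat, Ne.symm h0, hjl, hlj]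
  have hrow : ∀ l k, l ≠ 0 → k ≠ Fin.last n → N l k = 0 := by
    intro l k hl hk
    by_cases hll : l = Fin.last n
    · subst hll; exact hlast k
    · simp only [hN, Matrix.sub_apply, Matrix.one_apply]
      by_cases hkl : k = l
      · subst hkl; simp [UMat, hl, hll, hk]
      · have hlk : l ≠ k := fun h => hkl h.symm
        simp [UMat, hl, hll, hk, hkl, hlk]
  have hNN : ∀ i k, k ≠ Fin.last n → (N * N) i k = 0 := by
    intro i k hk
    rw [Matrix.mul_apply]
    apply Finset.sum_eq_zero
    intro l _
    by_cases hl0 : l = 0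
    · subst hl0; rw [hcol0 i, zero_mul]
    · rw [hrow l k hl0 hk, mul_zero]
  have h3 : N ^ 3 = N * N * N := by
    rw [pow_succ, pow_two]
  rw [h3]
  ext i j
  rw [Matrix.mul_apply]
  rw [Matrix.zero_apply]
  apply Finset.sum_eq_zero
  intro k _
  by_cases hkl : k = Fin.last n
  · subst hkl; rw [hlast j, mul_zero]
  · rw [hNN i k hkl, zero_mul]
lemma converse (hn : 1 ≤ n) (A : Matrix (Fin (n+1)) (Fin (n+1)) ℂ)
    (hA : A ∈ USet n) (hnil : IsNilpotent (A - 1))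
    (h00 : A 0 0 = 1) (hll : A (Fin.last n) (Fin.last n) = 1)
    (hcol : ∀ i, i ≠ 0 → A i 0 = 0)
    (hLast : ∀ j, j ≠ Fin.last n → A (Fin.last n) j = 0) :
    A ∈ MaxUnip n := by
  have h0 : (0 : Fin (n+1)) ≠ Fin.last n := zero_ne_last hn
  have hA' : Aᴴ * HMat n * A = HMat n := hA
  have E : ∀ i j, (starRingEnd ℂ) (A 0 i) * A (Fin.last n) j +
      (starRingEnd ℂ) (A (Fin.last n) i) * A 0 j +
      ∑ k ∈ mids n, (starRingEnd ℂ) (A k i) * A k j = HMat n i j := by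
    intro i j
    rw [← form_entry hn A A i j, hA']
  -- orthonormality of middle columns
  have ortho : ∀ i ∈ mids n, ∀ j ∈ mids n,
      ∑ k ∈ mids n, (starRingEnd ℂ) (A k i) * A k j = if i = j then 1 else 0 := by
    intro i hi j hj
    rw [mem_mids] at hi hj
    have e := E i j
    rw [hLast j hj.2, hLast i hi.2] at e
    have hH : HMat n i j = if i = j then 1 else 0 := by
      by_cases hij : i = j
      · subst hij; simp [HMat, hi.1, hi.2]
      · simp [HMat, hij, hi.1, hi.2, hj.1, hj.2]
    rw [hH] at e
    simpa using e
  -- trace condition from nilpotency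
  have htr : ∑ k ∈ mids n, (A k k - 1) = 0 := by
    have h1 : (A - 1).trace = 0 :=
      (Matrix.isNilpotent_trace_of_isNilpotent hnil).eq_zero
    have h2 : (A - 1).trace = ∑ k, (A k k - 1) := by
      simp [Matrix.trace, Matrix.diag, Matrix.sub_apply, Matrix.one_apply]
    rw [h2, sum_split hn] at h1
    rw [h00, hll] at h1
    simpa using h1
  -- middle block is the identity
  have hmid : ∀ k ∈ mids n, ∀ j ∈ mids n, A k j = if k = j then 1 else 0 := by
    have inner : ∀ j ∈ mids n,
        (∑ k ∈ mids n, ((Complex.normSq (A k j - if k = j then 1 else 0) : ℝ) : ℂ)) =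
        -((starRingEnd ℂ) (A j j - 1) + (A j j - 1)) := by
      intro j hj
      have hexp : ∀ k ∈ mids n,
          ((Complex.normSq (A k j - if k = j then 1 else 0) : ℝ) : ℂ) =
          (starRingEnd ℂ) (A k j) * A k j - (if k = j then (starRingEnd ℂ) (A k j) else 0)
            - (if k = j then A k j else 0) + (if k = j then 1 else 0) := by
        intro k _
        rw [Complex.normSq_eq_conj_mul_self]
        by_cases h : k = j
        · subst h
          simp only [eq_self_iff_true, if_true, map_sub, _root_.map_one]
          ring
        · simp only [if_neg h, sub_zero, map_sub, map_zero]
          ring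
      rw [Finset.sum_congr rfl hexp]
      rw [Finset.sum_add_distrib, Finset.sum_sub_distrib, Finset.sum_sub_distrib,
        ortho j hj j hj, Finset.sum_ite_eq' (mids n) j, Finset.sum_ite_eq' (mids n) j,
        Finset.sum_ite_eq' (mids n) j, if_pos hj, if_pos hj, if_pos hj, if_pos rfl]
      rw [map_sub, _root_.map_one]
      ring
    have total : ∑ j ∈ mids n, ∑ k ∈ mids n,
        ((Complex.normSq (A k j - if k = j then 1 else 0) : ℝ) : ℂ) = 0 := by
      rw [Finset.sum_congr rfl inner, Finset.sum_neg_distrib, neg_eq_zero,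
        Finset.sum_add_distrib, ← map_sum, htr, map_zero, add_zero]
    have hreal : ∑ j ∈ mids n, ∑ k ∈ mids n,
        Complex.normSq (A k j - if k = j then 1 else 0) = 0 := by
      exact_mod_cast total
    intro k hk j hj
    have hinner : ∑ k ∈ mids n, Complex.normSq (A k j - if k = j then 1 else 0) = 0 := by
      refine (Finset.sum_eq_zero_iff_of_nonneg ?_).1 hreal j hj
      intro x _
      exact Finset.sum_nonneg fun y _ => Complex.normSq_nonneg _
    have hentry : Complex.normSq (A k j - if k = j then 1 else 0) = 0 :=
      (Finset.sum_eq_zero_iff_of_nonneg fun y _ => Complex.normSq_nonneg _).1 hinner k hk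
    have := Complex.normSq_eq_zero.mp hentry
    exact sub_eq_zero.mp this
  -- the first row in terms of the last column
  have hv : ∀ i ∈ mids n, A 0 i = -((starRingEnd ℂ) (A i (Fin.last n))) := by
    intro i hi
    have hi' := mem_mids.mp hi
    have e := E i (Fin.last n)
    rw [hll, hLast i hi'.2] at e
    have hs : ∑ k ∈ mids n, (starRingEnd ℂ) (A k i) * A k (Fin.last n) =
        A i (Fin.last n) := by
      rw [Finset.sum_congr rfl (fun k hk => by rw [hmid k hk i hi])]
      simp only [apply_ite (starRingEnd ℂ), _root_.map_one, map_zero, ite_mul, one_mul,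
        zero_mul]
      rw [Finset.sum_ite_eq' (mids n) i, if_pos hi]
    rw [hs] at e
    have hH : HMat n i (Fin.last n) = 0 := by
      simp [HMat, hi'.1, hi'.2]
    rw [hH] at e
    simp only [map_zero, zero_mul, mul_one] at e
    have h1 : (starRingEnd ℂ) (A 0 i) = -(A i (Fin.last n)) := by
      linear_combination e
    have h2 := congrArg (starRingEnd ℂ) h1
    simpa using h2
  -- the corner entry
  have ha : A 0 (Fin.last n) =
      -(1/2 : ℂ) * (∑ k ∈ mids n, (starRingEnd ℂ) (A k (Fin.last n)) * A k (Fin.last n)) +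
        ((A 0 (Fin.last n)).im : ℂ) * Complex.I := by
    have e := E (Fin.last n) (Fin.last n)
    rw [hll] at e
    have hH : HMat n (Fin.last n) (Fin.last n) = 0 := by
      simp [HMat, h0, Ne.symm h0]
    rw [hH] at e
    simp only [_root_.map_one, one_mul, mul_one] at e
    set a := A 0 (Fin.last n) with hadef
    have hS : ∑ k ∈ mids n, (starRingEnd ℂ) (A k (Fin.last n)) * A k (Fin.last n) =
        -(2 * (a.re : ℂ)) := by
      have hac : a + (starRingEnd ℂ) a = 2 * (a.re : ℂ) := by
        rw [Complex.add_conj]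
        push_cast
        ring
      linear_combination e - hac
    rw [hS]
    have hri : (a.re : ℂ) + (a.im : ℂ) * Complex.I = a := Complex.re_add_im a
    linear_combination -hri
  -- conclude
  refine ⟨fun i => if i = 0 then 0 else if i = Fin.last n then 0 else A i (Fin.last n),
    (A 0 (Fin.last n)).im, by simp, by simp [Ne.symm h0], ?_⟩
  ext i j
  by_cases hi0 : i = 0
  · subst hi0
    by_cases hj0 : j = 0
    · subst hj0
      simpa [UMat] using h00
    · by_cases hjl : j = Fin.last n
      · subst hjl
        have hw : dotProduct
            (star (fun i => if i = 0 then 0 else if i = Fin.last n then (0:ℂ)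
              else A i (Fin.last n)))
            (fun i => if i = 0 then 0 else if i = Fin.last n then 0 else A i (Fin.last n)) =
            ∑ k ∈ mids n, (starRingEnd ℂ) (A k (Fin.last n)) * A k (Fin.last n) := by
          rw [dot_mid hn (by simp) (by simp [Ne.symm h0])]
          apply Finset.sum_congr rfl
          intro k hk
          rw [mem_mids] at hk
          simp [hk.1, hk.2]
        have hrhs : UMat n (fun i => if i = 0 then 0 else if i = Fin.last n then 0
            else A i (Fin.last n)) ((A 0 (Fin.last n)).im) 0 (Fin.last n) =
            -(1/2 : ℂ) * (∑ k ∈ mids n, (starRingEnd ℂ) (A k (Fin.last n)) *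
              A k (Fin.last n)) + ((A 0 (Fin.last n)).im : ℂ) * Complex.I := by
          simp only [UMat, hw]
          simp [Ne.symm h0]
        rw [hrhs]
        exact ha
      · rw [hv j (mem_mids.mpr ⟨hj0, hjl⟩)]
        simp [UMat, hj0, hjl]
  · by_cases hil : i = Fin.last n
    · subst hil
      by_cases hjl : j = Fin.last n
      · subst hjl
        simpa [UMat, Ne.symm h0] using hll
      · rw [hLast j hjl]
        simp [UMat, Ne.symm h0, hjl]
    · by_cases hjl : j = Fin.last n
      · subst hjl
        simp [UMat, hi0, hil]
      · by_cases hj0 : j = 0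
        · subst hj0
          rw [hcol i hi0]
          simp [UMat, hi0, hil, h0, Ne.symm hi0]
        · rw [hmid i (mem_mids.mpr ⟨hi0, hil⟩) j (mem_mids.mpr ⟨hj0, hjl⟩)]
          by_cases hij : i = j
          · subst hij
            simp [UMat, hi0, hil, hjl]
          · have hji : j ≠ i := fun h => hij h.symm
            simp [UMat, hi0, hil, hjl, hij, hji]

end MaxUnipAux

/-- (i) 𝒰 is a subgroup of U(n,1) all of whose elements are
unipotent; (ii) conversely, every unipotent element of U(n,1) in block
upper-triangular form with 1's in the two corners belongs to 𝒰. -/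
theorem maximal_unipotent_subgroup (n : ℕ) (hn : 1 ≤ n) :
    (((1 : Matrix (Fin (n + 1)) (Fin (n + 1)) ℂ) ∈ MaxUnip n) ∧
     (∀ A ∈ MaxUnip n, ∀ B ∈ MaxUnip n, A * B ∈ MaxUnip n) ∧
     (∀ A ∈ MaxUnip n, ∃ B ∈ MaxUnip n, A * B = 1 ∧ B * A = 1) ∧
     MaxUnip n ⊆ USet n ∧
     (∀ A ∈ MaxUnip n, IsNilpotent (A - 1))) ∧
    (∀ A : Matrix (Fin (n + 1)) (Fin (n + 1)) ℂ,
      A ∈ USet n → IsNilpotent (A - 1) →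
      A 0 0 = 1 → A (Fin.last n) (Fin.last n) = 1 →
      (∀ i, i ≠ 0 → A i 0 = 0) →
      (∀ j, j ≠ Fin.last n → A (Fin.last n) j = 0) →
      A ∈ MaxUnip n) := by
  constructor
  · refine ⟨?_, ?_, ?_, ?_, ?_⟩
    · exact ⟨0, 0, rfl, rfl, (MaxUnipAux.UMat_zero hn).symm⟩
    · rintro A ⟨w, t, hw0, hwl, rfl⟩ B ⟨w', t', hw0', hwl', rfl⟩
      exact ⟨w + w', t + t' - (dotProduct (star w) w').im,
        by simp [hw0, hw0'], by simp [hwl, hwl'],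
        MaxUnipAux.UMat_mul hn t t' hw0 hwl hw0' hwl'⟩
    · rintro A ⟨w, t, hw0, hwl, rfl⟩
      refine ⟨UMat n (-w) (-t), ⟨-w, -t, by simp [hw0], by simp [hwl], rfl⟩, ?_, ?_⟩
      · rw [MaxUnipAux.UMat_mul hn t (-t) hw0 hwl (by simp [hw0]) (by simp [hwl])]
        have h1 : w + -w = 0 := by simp
        have h2 : t + -t - (dotProduct (star w) (-w)).im = 0 := by
          simp [dotProduct_neg, MaxUnipAux.dot_self_im]
        rw [h1, h2]
        exact MaxUnipAux.UMat_zero hn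
      · rw [MaxUnipAux.UMat_mul hn (-t) t (by simp [hw0]) (by simp [hwl]) hw0 hwl]
        have h1 : -w + w = 0 := by simp
        have h2 : -t + t - (dotProduct (star (-w)) w).im = 0 := by
          simp [neg_dotProduct, MaxUnipAux.dot_self_im]
        rw [h1, h2]
        exact MaxUnipAux.UMat_zero hn
    · rintro A ⟨w, t, hw0, hwl, rfl⟩
      exact MaxUnipAux.UMat_mem hn t hw0 hwl
    · rintro A ⟨w, t, hw0, hwl, rfl⟩
      exact ⟨3, MaxUnipAux.UMat_nil hn w t⟩
  · intro A hA hnil h00 hll hcol hLast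
    exact MaxUnipAux.converse hn A hA hnil h00 hll hcol hLast
end
end

section
/- Let n ≥ 1 and let e₁ = (1,0,…,0) ∈ ℂ^{n+1} (a q-isotropic vector). A matrix A ∈ GL(n+1,ℂ) belongs to U(n,1) and maps the complex line ℂ·e₁ to itself if and only if there exist λ ∈ ℂ with λ ≠ 0, a matrix σ ∈ M_{n−1}(ℂ) with conj(σ)ᵀσ = I_{n−1}, a vector v ∈ ℂ^{n−1} and a ∈ ℂ with Re(λ·a) = −(1/2)·conj(v)ᵀv, such that A is the block matrix [[conj(λ), −conj(v)ᵀ, a],[0, σ, λ⁻¹σv],[0,0,λ⁻¹]] (blocks of sizes 1, n−1, 1). -/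
open Matrix

noncomputable section

/-- The block matrix [[conj λ, −v*, a],[0, σ, λ⁻¹ σ v],[0,0,λ⁻¹]], where
v ∈ ℂ^{n-1} and σ ∈ M_{n-1}(ℂ) are encoded as supported on the middle
indices. -/
def PMat (n : ℕ) (l : ℂ) (σ : Matrix (Fin (n + 1)) (Fin (n + 1)) ℂ)
    (v : Fin (n + 1) → ℂ) (a : ℂ) : Matrix (Fin (n + 1)) (Fin (n + 1)) ℂ :=
  fun i j =>
    if i = 0 then
      (if j = 0 then (starRingEnd ℂ) l
       else if j = Fin.last n then a
       else -((starRingEnd ℂ) (v j)))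
    else if i = Fin.last n then (if j = Fin.last n then l⁻¹ else 0)
    else (if j = Fin.last n then l⁻¹ * σ.mulVec v i else σ i j)

section Helpers

variable {n : ℕ}

lemma last_ne_zero' (hn : 1 ≤ n) : (Fin.last n : Fin (n + 1)) ≠ 0 := by
  intro h
  have := congrArg Fin.val h
  simp [Fin.last] at this
  omega

/-- Diagonal projection onto the extreme coordinates. -/
def Emat (n : ℕ) : Matrix (Fin (n + 1)) (Fin (n + 1)) ℂ :=
  Matrix.diagonal (fun i => if i = 0 ∨ i = Fin.last n then 1 else 0)

lemma HMat_mul_apply (hn : 1 ≤ n) (A : Matrix (Fin (n + 1)) (Fin (n + 1)) ℂ)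
    (k j : Fin (n + 1)) :
    (HMat n * A) k j =
      if k = 0 then A (Fin.last n) j else if k = Fin.last n then A 0 j else A k j := by
  have h0l : (0 : Fin (n + 1)) ≠ Fin.last n := (last_ne_zero' hn).symm
  rw [Matrix.mul_apply]
  by_cases hk0 : k = 0
  · subst hk0
    rw [Finset.sum_eq_single (Fin.last n)]
    · simp [HMat, h0l]
    · intro m _ hm; simp [HMat, hm, h0l]
    · simp
  · by_cases hkl : k = Fin.last n
    · subst hkl
      rw [Finset.sum_eq_single (0 : Fin (n + 1))]
      · simp [HMat, last_ne_zero' hn]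
      · intro m _ hm; simp [HMat, hm, last_ne_zero' hn]
      · simp
    · rw [Finset.sum_eq_single k]
      · simp [HMat, hk0, hkl]
      · intro m _ hm; simp [HMat, hk0, hkl, (Ne.symm hm)]
      · simp

lemma entry_formula (hn : 1 ≤ n) (A : Matrix (Fin (n + 1)) (Fin (n + 1)) ℂ)
    (i j : Fin (n + 1)) :
    (Aᴴ * HMat n * A) i j =
      (starRingEnd ℂ) (A 0 i) * A (Fin.last n) j +
      (starRingEnd ℂ) (A (Fin.last n) i) * A 0 j +
      ∑ k, (if k ≠ 0 ∧ k ≠ Fin.last n then (starRingEnd ℂ) (A k i) * A k j else 0) := by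
  have hl0 : (Fin.last n : Fin (n + 1)) ≠ 0 := last_ne_zero' hn
  have : Aᴴ * HMat n * A = Aᴴ * (HMat n * A) := by rw [Matrix.mul_assoc]
  rw [this, Matrix.mul_apply]
  have hsplit : ∀ k : Fin (n + 1),
      Aᴴ i k * (HMat n * A) k j =
        (if k = 0 then (starRingEnd ℂ) (A 0 i) * A (Fin.last n) j else 0) +
        (if k = Fin.last n then (starRingEnd ℂ) (A (Fin.last n) i) * A 0 j else 0) +
        (if k ≠ 0 ∧ k ≠ Fin.last n then (starRingEnd ℂ) (A k i) * A k j else 0) := by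
    intro k
    rw [HMat_mul_apply hn, conjTranspose_apply]
    by_cases hk0 : k = 0
    · subst hk0; simp [hl0.symm]
    · by_cases hkl : k = Fin.last n
      · subst hkl; simp [hl0]
      · simp [hk0, hkl]
  rw [Finset.sum_congr rfl fun k _ => hsplit k, Finset.sum_add_distrib,
    Finset.sum_add_distrib, Finset.sum_ite_eq' Finset.univ (0 : Fin (n + 1)),
    Finset.sum_ite_eq' Finset.univ (Fin.last n)]
  simp

lemma sum_mid_eq (f : Fin (n + 1) → ℂ) (h0 : f 0 = 0) (hl : f (Fin.last n) = 0) :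
    ∑ k, (if k ≠ 0 ∧ k ≠ Fin.last n then f k else 0) = ∑ k, f k := by
  refine Finset.sum_congr rfl fun k _ => ?_
  by_cases hk0 : k = 0
  · subst hk0; simp [h0]
  · by_cases hkl : k = Fin.last n
    · subst hkl; simp [hl]
    · simp [hk0, hkl]

lemma sigma_mul_Emat (σ : Matrix (Fin (n + 1)) (Fin (n + 1)) ℂ)
    (h0 : ∀ i j, (i = 0 ∨ i = Fin.last n ∨ j = 0 ∨ j = Fin.last n) → σ i j = 0) :
    σ * Emat n = 0 := by
  ext i j
  rw [Emat, Matrix.mul_diagonal]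
  by_cases hj : j = 0 ∨ j = Fin.last n
  · rw [h0 i j (by tauto)]; simp
  · simp [hj]

lemma Emat_mul_sigma (σ : Matrix (Fin (n + 1)) (Fin (n + 1)) ℂ)
    (h0 : ∀ i j, (i = 0 ∨ i = Fin.last n ∨ j = 0 ∨ j = Fin.last n) → σ i j = 0) :
    Emat n * σ = 0 := by
  ext i j
  rw [Emat, Matrix.diagonal_mul]
  by_cases hi : i = 0 ∨ i = Fin.last n
  · rw [h0 i j (by tauto)]; simp
  · simp [hi]

lemma Emat_conjTranspose : (Emat n)ᴴ = Emat n := by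
  ext i j
  simp only [Emat, Matrix.conjTranspose_apply, Matrix.diagonal_apply]
  split_ifs <;> simp_all

lemma Emat_mul_Emat : Emat n * Emat n = Emat n := by
  rw [Emat, Matrix.diagonal_mul_diagonal]
  ext i j
  simp only [Matrix.diagonal_apply]
  split_ifs <;> simp

lemma sigma_unit (σ : Matrix (Fin (n + 1)) (Fin (n + 1)) ℂ)
    (h0 : ∀ i j, (i = 0 ∨ i = Fin.last n ∨ j = 0 ∨ j = Fin.last n) → σ i j = 0)
    (hu : σᴴ * σ = 1 - Emat n) : σ * σᴴ = 1 - Emat n := by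
  have hσE : σ * Emat n = 0 := sigma_mul_Emat σ h0
  have hEσ : Emat n * σ = 0 := Emat_mul_sigma σ h0
  have hσHE : σᴴ * Emat n = 0 := by
    have := congrArg conjTranspose hEσ
    rwa [Matrix.conjTranspose_mul, Emat_conjTranspose, Matrix.conjTranspose_zero] at this
  have hEσH : Emat n * σᴴ = 0 := by
    have := congrArg conjTranspose hσE
    rwa [Matrix.conjTranspose_mul, Emat_conjTranspose, Matrix.conjTranspose_zero] at this
  have hττ : (σ + Emat n)ᴴ * (σ + Emat n) = 1 := by
    rw [Matrix.conjTranspose_add, Emat_conjTranspose, Matrix.add_mul, Matrix.mul_add,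
      Matrix.mul_add, hu, hσHE, hEσ, Emat_mul_Emat]
    abel
  have hττ' : (σ + Emat n) * (σ + Emat n)ᴴ = 1 := mul_eq_one_comm.mp hττ
  have h1 : (σ + Emat n) * (σ + Emat n)ᴴ = σ * σᴴ + Emat n := by
    rw [Matrix.conjTranspose_add, Emat_conjTranspose, Matrix.mul_add, Matrix.add_mul,
      Matrix.add_mul, hσE, hEσH, Emat_mul_Emat]
    abel
  rw [h1] at hττ'
  rw [← hττ']
  abel

lemma col_condition (A : Matrix (Fin (n + 1)) (Fin (n + 1)) ℂ) :
    Submodule.map (Matrix.mulVecLin A)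
        (Submodule.span ℂ {(Pi.single 0 1 : Fin (n + 1) → ℂ)}) =
      Submodule.span ℂ {(Pi.single 0 1 : Fin (n + 1) → ℂ)} ↔
    (A 0 0 ≠ 0 ∧ ∀ i, i ≠ 0 → A i 0 = 0) := by
  rw [Submodule.map_span, Set.image_singleton]
  have happ : A.mulVecLin (Pi.single 0 1) = fun i => A i 0 := by
    rw [Matrix.mulVecLin_apply, Matrix.mulVec_single]
    funext i; simp
  rw [happ]
  constructor
  · intro h
    rw [Submodule.span_singleton_eq_span_singleton] at h
    obtain ⟨z, hz⟩ := h
    have h0 := congrFun hz 0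
    simp only [Pi.smul_apply, Pi.single_eq_same, Units.smul_def, smul_eq_mul] at h0
    have hi : ∀ i, i ≠ 0 → A i 0 = 0 := by
      intro i hi
      have := congrFun hz i
      simp only [Pi.smul_apply, Pi.single_eq_of_ne hi, Units.smul_def, smul_eq_mul] at this
      rcases mul_eq_zero.mp this with h | h
      · exact absurd h (Units.ne_zero z)
      · exact h
    refine ⟨fun hA0 => ?_, hi⟩
    rw [hA0, mul_zero] at h0
    exact zero_ne_one h0
  · rintro ⟨h0, hcol⟩
    rw [Submodule.span_singleton_eq_span_singleton]
    refine ⟨(Units.mk0 (A 0 0) h0)⁻¹, ?_⟩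
    funext i
    by_cases hi : i = 0
    · subst hi
      simp [Units.smul_def, inv_mul_cancel₀ h0]
    · simp [Pi.single_eq_of_ne hi, hcol i hi, Units.smul_def]

end Helpers

section MainHelp

variable {n : ℕ}

lemma sumH (σ : Matrix (Fin (n + 1)) (Fin (n + 1)) ℂ) (x : Fin (n + 1) → ℂ)
    (i : Fin (n + 1)) :
    ∑ k, (starRingEnd ℂ) (σ k i) * x k = (σᴴ.mulVec x) i := by
  simp only [Matrix.mulVec, dotProduct, Matrix.conjTranspose_apply, RCLike.star_def]

lemma one_sub_Emat_apply (i j : Fin (n + 1)) :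
    (1 - Emat n) i j =
      if i = j then (if i = 0 ∨ i = Fin.last n then 0 else 1) else 0 := by
  simp only [Matrix.sub_apply, Matrix.one_apply, Emat, Matrix.diagonal_apply]
  by_cases hij : i = j
  · subst hij
    by_cases h : i = 0 ∨ i = Fin.last n <;> simp [h]
  · simp [hij]

lemma one_sub_Emat_mulVec (u : Fin (n + 1) → ℂ) (h0 : u 0 = 0)
    (hl : u (Fin.last n) = 0) : (1 - Emat n).mulVec u = u := by
  funext k
  rw [Matrix.sub_mulVec, Matrix.one_mulVec, Pi.sub_apply, Emat, Matrix.mulVec_diagonal]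
  by_cases hk : k = 0 ∨ k = Fin.last n
  · rcases hk with hk | hk <;> subst hk <;> simp [h0, hl]
  · simp [hk]

lemma mulH_apply (σ τ : Matrix (Fin (n + 1)) (Fin (n + 1)) ℂ) (i j : Fin (n + 1)) :
    (σᴴ * τ) i j = ∑ k, (starRingEnd ℂ) (σ k i) * τ k j := by
  rw [Matrix.mul_apply]
  exact Finset.sum_congr rfl fun k _ => by
    rw [Matrix.conjTranspose_apply, RCLike.star_def]

end MainHelp

set_option maxHeartbeats 3200000 in
/-- characterization of the elements of U(n,1) preserving the
isotropic complex line ℂ·e₁ (the parabolic subgroup 𝒫). -/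
theorem parabolic_characterization (n : ℕ) (hn : 1 ≤ n)
    (A : Matrix (Fin (n + 1)) (Fin (n + 1)) ℂ) (hA : IsUnit A.det) :
    (A ∈ USet n ∧
      Submodule.map (Matrix.mulVecLin A)
          (Submodule.span ℂ {(Pi.single 0 1 : Fin (n + 1) → ℂ)}) =
        Submodule.span ℂ {(Pi.single 0 1 : Fin (n + 1) → ℂ)}) ↔
    ∃ (l : ℂ) (σ : Matrix (Fin (n + 1)) (Fin (n + 1)) ℂ)
      (v : Fin (n + 1) → ℂ) (a : ℂ),
      l ≠ 0 ∧
      (∀ i j, (i = 0 ∨ i = Fin.last n ∨ j = 0 ∨ j = Fin.last n) → σ i j = 0) ∧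
      (∀ i j, i ≠ 0 → i ≠ Fin.last n → j ≠ 0 → j ≠ Fin.last n →
        (σᴴ * σ) i j = if i = j then 1 else 0) ∧
      v 0 = 0 ∧ v (Fin.last n) = 0 ∧
      (l * a).re = -(1 / 2) * (dotProduct (star v) v).re ∧
      A = PMat n l σ v a := by
  have hl0 : (Fin.last n : Fin (n + 1)) ≠ 0 := last_ne_zero' hn
  have h0l : (0 : Fin (n + 1)) ≠ Fin.last n := hl0.symm
  constructor
  · rintro ⟨hU, hspan⟩
    have hU' : Aᴴ * HMat n * A = HMat n := hU
    obtain ⟨hc, hcol⟩ := (col_condition A).mp hspan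
    have fact : ∀ i j, (starRingEnd ℂ) (A 0 i) * A (Fin.last n) j +
        (starRingEnd ℂ) (A (Fin.last n) i) * A 0 j +
        (∑ k, if k ≠ 0 ∧ k ≠ Fin.last n then (starRingEnd ℂ) (A k i) * A k j else 0) =
        HMat n i j := by
      intro i j
      rw [← entry_formula hn A i j, hU']
    set l := (starRingEnd ℂ) (A 0 0) with hldef
    have hlne : l ≠ 0 := by simpa [hldef] using hc
    -- row `last` of A
    have hrow : ∀ j, j ≠ Fin.last n → A (Fin.last n) j = 0 := by
      intro j hj
      have h := fact 0 j
      have hmid : (∑ k, if k ≠ 0 ∧ k ≠ Fin.last n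
          then (starRingEnd ℂ) (A k 0) * A k j else 0) = 0 :=
        Finset.sum_eq_zero fun k _ => by
          split_ifs with h'
          · rw [hcol k h'.1]; simp
          · rfl
      rw [hmid, hcol (Fin.last n) hl0] at h
      have hH : HMat n 0 j = 0 := by simp [HMat, hj, h0l]
      rw [hH] at h
      simp only [map_zero, zero_mul, add_zero] at h
      rcases mul_eq_zero.mp h with h | h
      · exact absurd h (by simpa [hldef] using hc)
      · exact h
    have hAll : A (Fin.last n) (Fin.last n) = l⁻¹ := by
      have h := fact 0 (Fin.last n)
      have hmid : (∑ k, if k ≠ 0 ∧ k ≠ Fin.last n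
          then (starRingEnd ℂ) (A k 0) * A k (Fin.last n) else 0) = 0 :=
        Finset.sum_eq_zero fun k _ => by
          split_ifs with h'
          · rw [hcol k h'.1]; simp
          · rfl
      rw [hmid, hcol (Fin.last n) hl0] at h
      have hH : HMat n 0 (Fin.last n) = 1 := by simp [HMat]
      rw [hH] at h
      simp only [map_zero, zero_mul, add_zero] at h
      exact (inv_eq_of_mul_eq_one_right h).symm
    set σ : Matrix (Fin (n + 1)) (Fin (n + 1)) ℂ :=
      Matrix.of (fun i j =>
        if i ≠ 0 ∧ i ≠ Fin.last n ∧ j ≠ 0 ∧ j ≠ Fin.last n then A i j else 0) with hσdef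
    set v : Fin (n + 1) → ℂ :=
      fun j => if j ≠ 0 ∧ j ≠ Fin.last n then -((starRingEnd ℂ) (A 0 j)) else 0 with hvdef
    have hσ0 : ∀ i j, (i = 0 ∨ i = Fin.last n ∨ j = 0 ∨ j = Fin.last n) → σ i j = 0 := by
      intro i j h
      simp only [hσdef, Matrix.of_apply]
      rw [if_neg]
      tauto
    have hσfull : σᴴ * σ = 1 - Emat n := by
      ext i j
      rw [Matrix.mul_apply]
      by_cases hij : (i ≠ 0 ∧ i ≠ Fin.last n) ∧ (j ≠ 0 ∧ j ≠ Fin.last n)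
      · have hterm : ∀ k : Fin (n + 1), σᴴ i k * σ k j =
            (if k ≠ 0 ∧ k ≠ Fin.last n then (starRingEnd ℂ) (A k i) * A k j else 0) := by
          intro k
          rw [Matrix.conjTranspose_apply]
          by_cases hk : k ≠ 0 ∧ k ≠ Fin.last n
          · rw [if_pos hk]
            simp only [hσdef, Matrix.of_apply, RCLike.star_def]
            rw [if_pos ⟨hk.1, hk.2, hij.1.1, hij.1.2⟩, if_pos ⟨hk.1, hk.2, hij.2.1, hij.2.2⟩]
          · rw [if_neg hk]
            push_neg at hk
            by_cases hk0 : k = 0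
            · rw [hσ0 k j (Or.inl hk0)]; simp
            · rw [hσ0 k j (Or.inr (Or.inl (hk hk0)))]; simp
        rw [Finset.sum_congr rfl fun k _ => hterm k]
        have h := fact i j
        rw [hrow i hij.1.2, hrow j hij.2.2] at h
        simp only [map_zero, zero_mul, mul_zero, zero_add] at h
        rw [h]
        have hH : HMat n i j = if i = j then 1 else 0 := by
          by_cases hijeq : i = j
          · subst hijeq
            simp [HMat, hij.1.1, hij.1.2]
          · simp [HMat, hijeq, hij.1.1, hij.1.2]
        rw [hH, one_sub_Emat_apply]
        by_cases hijeq : i = j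
        · rw [if_pos hijeq, if_pos hijeq, if_neg (by subst hijeq; tauto)]
        · rw [if_neg hijeq, if_neg hijeq]
      · have hz : ∀ k ∈ Finset.univ, σᴴ i k * σ k j = (0 : ℂ) := by
          intro k _
          rw [Matrix.conjTranspose_apply]
          by_cases hi : i = 0 ∨ i = Fin.last n
          · rw [hσ0 k i (by tauto)]; simp
          · have hj : j = 0 ∨ j = Fin.last n := by tauto
            rw [hσ0 k j (by tauto)]; simp
        rw [Finset.sum_eq_zero hz, one_sub_Emat_apply]
        by_cases hijeq : i = j
        · subst hijeq
          have hor : i = 0 ∨ i = Fin.last n := by tauto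
          rw [if_pos rfl, if_pos hor]
        · rw [if_neg hijeq]
    have hσσH : σ * σᴴ = 1 - Emat n := sigma_unit σ hσ0 hσfull
    set w : Fin (n + 1) → ℂ :=
      fun k => if k ≠ 0 ∧ k ≠ Fin.last n then A k (Fin.last n) else 0 with hwdef
    have hv0 : v 0 = 0 := by simp [hvdef]
    have hvl : v (Fin.last n) = 0 := by simp [hvdef]
    have hσw : σᴴ.mulVec w = l⁻¹ • v := by
      funext j
      rw [← sumH]
      by_cases hj : j ≠ 0 ∧ j ≠ Fin.last n
      · have h := fact j (Fin.last n)
        rw [hrow j hj.2, hAll] at h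
        have hH : HMat n j (Fin.last n) = 0 := by simp [HMat, hj.1, hj.2, hl0]
        rw [hH] at h
        simp only [map_zero, zero_mul, add_zero, zero_add] at h
        have hterm : ∀ k : Fin (n + 1),
            (starRingEnd ℂ) (σ k j) * w k =
            (if k ≠ 0 ∧ k ≠ Fin.last n
              then (starRingEnd ℂ) (A k j) * A k (Fin.last n) else 0) := by
          intro k
          by_cases hk : k ≠ 0 ∧ k ≠ Fin.last n
          · rw [if_pos hk]
            simp only [hσdef, hwdef, Matrix.of_apply]
            rw [if_pos ⟨hk.1, hk.2, hj.1, hj.2⟩, if_pos hk]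
          · rw [if_neg hk]
            simp only [hwdef]
            rw [if_neg hk]
            simp
        rw [Finset.sum_congr rfl fun k _ => hterm k]
        have hsum : (∑ k, if k ≠ 0 ∧ k ≠ Fin.last n
            then (starRingEnd ℂ) (A k j) * A k (Fin.last n) else 0) =
            -((starRingEnd ℂ) (A 0 j) * l⁻¹) := by linear_combination h
        rw [hsum]
        simp only [Pi.smul_apply, hvdef, smul_eq_mul]
        rw [if_pos hj]
        ring
      · have hz : ∀ k ∈ Finset.univ, (starRingEnd ℂ) (σ k j) * w k = (0 : ℂ) := by
          intro k _
          push_neg at hj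
          by_cases hj0 : j = 0
          · rw [hσ0 k j (by tauto)]; simp
          · rw [hσ0 k j (Or.inr (Or.inr (Or.inr (hj hj0))))]; simp
        rw [Finset.sum_eq_zero hz]
        simp only [Pi.smul_apply, hvdef, smul_eq_mul]
        rw [if_neg hj, mul_zero]
    have hwfull : w = l⁻¹ • σ.mulVec v := by
      have h1 : σ.mulVec (σᴴ.mulVec w) = w := by
        rw [Matrix.mulVec_mulVec, hσσH]
        exact one_sub_Emat_mulVec w (by simp [hwdef]) (by simp [hwdef])
      rw [← h1, hσw, Matrix.mulVec_smul]
    have hwfact : ∀ k, k ≠ 0 → k ≠ Fin.last n →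
        A k (Fin.last n) = l⁻¹ * σ.mulVec v k := by
      intro k hk0 hkl
      have := congrFun hwfull k
      simp only [hwdef, Pi.smul_apply, smul_eq_mul] at this
      rwa [if_pos ⟨hk0, hkl⟩] at this
    refine ⟨l, σ, v, A 0 (Fin.last n), hlne, hσ0, ?_, hv0, hvl, ?_, ?_⟩
    · intro i j hi0 hil hj0 hjl
      rw [hσfull, one_sub_Emat_apply]
      by_cases hijeq : i = j
      · simp [hijeq, hj0, hjl]
      · simp [hijeq]
    · -- the real-part condition
      have h := fact (Fin.last n) (Fin.last n)
      rw [hAll] at h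
      have hH : HMat n (Fin.last n) (Fin.last n) = 0 := by simp [HMat, hl0]
      rw [hH] at h
      have hsum : (∑ k, if k ≠ 0 ∧ k ≠ Fin.last n
          then (starRingEnd ℂ) (A k (Fin.last n)) * A k (Fin.last n) else 0) =
          dotProduct (star w) w := by
        rw [dotProduct]
        refine Finset.sum_congr rfl fun k _ => ?_
        by_cases hk : k ≠ 0 ∧ k ≠ Fin.last n
        · rw [if_pos hk]
          simp only [hwdef, Pi.star_apply]
          rw [if_pos hk]
          rfl
        · rw [if_neg hk]
          simp only [hwdef, Pi.star_apply]
          rw [if_neg hk]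
          simp
      rw [hsum] at h
      have hww : dotProduct (star w) w =
          (l⁻¹ * (starRingEnd ℂ) l⁻¹) * dotProduct (star v) v := by
        have hw2 : w = σ.mulVec (l⁻¹ • v) := by
          rw [hwfull, Matrix.mulVec_smul]
        rw [hw2, Matrix.star_mulVec, ← Matrix.dotProduct_mulVec, Matrix.mulVec_mulVec,
          hσfull, one_sub_Emat_mulVec _ (by simp [hv0]) (by simp [hvl])]
        rw [star_smul, smul_dotProduct, dotProduct_smul]
        simp only [smul_eq_mul, RCLike.star_def]
        ring
      rw [hww] at h
      have hlc : (starRingEnd ℂ) l ≠ 0 := by simpa using hlne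
      have key : l * A 0 (Fin.last n) + (starRingEnd ℂ) (l * A 0 (Fin.last n)) +
          dotProduct (star v) v = 0 := by
        have h2 := congrArg (fun z => (l * (starRingEnd ℂ) l) * z) h
        simp only [mul_zero] at h2
        field_simp at h2
        rw [_root_.map_mul]
        have hc1 : (starRingEnd ℂ) l * (starRingEnd ℂ) (1 / l) = 1 := by
          rw [← _root_.map_mul, mul_one_div_cancel hlne, _root_.map_one]
        linear_combination h2 - (l * A 0 (Fin.last n) + dotProduct (star v) v) * hc1
      have := congrArg Complex.re key
      simp only [Complex.add_re, Complex.conj_re, Complex.zero_re] at this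
      linarith
    · -- A = PMat
      have hn' : n ≠ 0 := by omega
      ext i j
      by_cases hi0 : i = 0
      · subst hi0
        by_cases hj0 : j = 0
        · subst hj0; simp [PMat, hldef]
        · by_cases hjl : j = Fin.last n
          · subst hjl; simp [PMat, hn', hl0]
          · simp [PMat, hj0, hjl, hvdef]
      · by_cases hil : i = Fin.last n
        · subst hil
          by_cases hjl : j = Fin.last n
          · subst hjl; simp [PMat, hn', hl0, hAll]
          · simp [PMat, hn', hl0, hjl, hrow j hjl]
        · by_cases hjl : j = Fin.last n
          · subst hjl; simp [PMat, hi0, hil, hwfact i hi0 hil]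
          · by_cases hj0 : j = 0
            · subst hj0; simp [PMat, hn', hi0, hil, hσ0 i 0 (by tauto), hcol i hi0]
            · simp [PMat, hi0, hil, hjl, hj0, hσdef]
  · rintro ⟨l, σ, v, a, hlne, hσ0, hσu, hv0, hvl, hre, rfl⟩
    have hn' : n ≠ 0 := by omega
    have hP00 : PMat n l σ v a 0 0 = (starRingEnd ℂ) l := by simp [PMat]
    have hP0l : PMat n l σ v a 0 (Fin.last n) = a := by simp [PMat, hn', hl0]
    have hP0m : ∀ j, j ≠ 0 → j ≠ Fin.last n →
        PMat n l σ v a 0 j = -((starRingEnd ℂ) (v j)) := by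
      intro j hj0 hjl; simp [PMat, hj0, hjl]
    have hPl : ∀ j, j ≠ Fin.last n → PMat n l σ v a (Fin.last n) j = 0 := by
      intro j hjl; simp [PMat, hn', hl0, hjl]
    have hPll : PMat n l σ v a (Fin.last n) (Fin.last n) = l⁻¹ := by
      simp [PMat, hn', hl0]
    have hPm : ∀ i, i ≠ 0 → i ≠ Fin.last n → ∀ j, PMat n l σ v a i j =
        if j = Fin.last n then l⁻¹ * σ.mulVec v i else σ i j := by
      intro i hi0 hil j; simp [PMat, hi0, hil]
    have hσfull : σᴴ * σ = 1 - Emat n := by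
      ext i j
      rw [one_sub_Emat_apply]
      by_cases hij : (i ≠ 0 ∧ i ≠ Fin.last n) ∧ (j ≠ 0 ∧ j ≠ Fin.last n)
      · rw [hσu i j hij.1.1 hij.1.2 hij.2.1 hij.2.2]
        by_cases hijeq : i = j
        · rw [if_pos hijeq, if_pos hijeq, if_neg (by subst hijeq; tauto)]
        · rw [if_neg hijeq, if_neg hijeq]
      · have hz : ∀ k ∈ Finset.univ, σᴴ i k * σ k j = (0 : ℂ) := by
          intro k _
          rw [Matrix.conjTranspose_apply]
          by_cases hi : i = 0 ∨ i = Fin.last n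
          · rw [hσ0 k i (by tauto)]; simp
          · rw [hσ0 k j (by tauto)]; simp
        rw [Matrix.mul_apply, Finset.sum_eq_zero hz]
        by_cases hijeq : i = j
        · subst hijeq
          rw [if_pos rfl, if_pos (by tauto)]
        · rw [if_neg hijeq]
    have hσv' : σᴴ.mulVec (σ.mulVec v) = v := by
      rw [Matrix.mulVec_mulVec, hσfull]
      exact one_sub_Emat_mulVec v hv0 hvl
    set x : Fin (n + 1) → ℂ := σ.mulVec v with hxdef
    have hx0 : x 0 = 0 := by
      rw [hxdef]
      simp only [Matrix.mulVec, dotProduct]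
      exact Finset.sum_eq_zero fun m _ => by rw [hσ0 0 m (by tauto), zero_mul]
    have hxl : x (Fin.last n) = 0 := by
      rw [hxdef]
      simp only [Matrix.mulVec, dotProduct]
      exact Finset.sum_eq_zero fun m _ => by rw [hσ0 (Fin.last n) m (by tauto), zero_mul]
    -- sums over the middle indices
    have Sj0 : ∀ i, (∑ k, if k ≠ 0 ∧ k ≠ Fin.last n then
        (starRingEnd ℂ) (PMat n l σ v a k i) * PMat n l σ v a k 0 else 0) = 0 := by
      intro i
      refine Finset.sum_eq_zero fun k _ => ?_
      split_ifs with hk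
      · rw [hPm k hk.1 hk.2 0, if_neg h0l, hσ0 k 0 (by tauto), mul_zero]
      · rfl
    have S0j : ∀ j, (∑ k, if k ≠ 0 ∧ k ≠ Fin.last n then
        (starRingEnd ℂ) (PMat n l σ v a k 0) * PMat n l σ v a k j else 0) = 0 := by
      intro j
      refine Finset.sum_eq_zero fun k _ => ?_
      split_ifs with hk
      · rw [hPm k hk.1 hk.2 0, if_neg h0l, hσ0 k 0 (by tauto), map_zero, zero_mul]
      · rfl
    have Smidlast : ∀ i, i ≠ 0 → i ≠ Fin.last n →
        (∑ k, if k ≠ 0 ∧ k ≠ Fin.last n then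
          (starRingEnd ℂ) (PMat n l σ v a k i) * PMat n l σ v a k (Fin.last n) else 0) =
        l⁻¹ * v i := by
      intro i hi0 hil
      have hterm : ∀ k : Fin (n + 1),
          (if k ≠ 0 ∧ k ≠ Fin.last n then
            (starRingEnd ℂ) (PMat n l σ v a k i) * PMat n l σ v a k (Fin.last n) else 0) =
          (if k ≠ 0 ∧ k ≠ Fin.last n then l⁻¹ * ((starRingEnd ℂ) (σ k i) * x k) else 0) := by
        intro k
        split_ifs with hk
        · rw [hPm k hk.1 hk.2 i, if_neg hil, hPm k hk.1 hk.2 (Fin.last n), if_pos rfl]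
          ring
        · rfl
      rw [Finset.sum_congr rfl fun k _ => hterm k,
        sum_mid_eq _ (by rw [hσ0 0 i (by tauto)]; simp) (by rw [hσ0 (Fin.last n) i (by tauto)]; simp),
        ← Finset.mul_sum, sumH, hxdef, hσv']
    have Slastmid : ∀ j, j ≠ 0 → j ≠ Fin.last n →
        (∑ k, if k ≠ 0 ∧ k ≠ Fin.last n then
          (starRingEnd ℂ) (PMat n l σ v a k (Fin.last n)) * PMat n l σ v a k j else 0) =
        (starRingEnd ℂ) (l⁻¹ * v j) := by
      intro j hj0 hjl
      have hterm : ∀ k : Fin (n + 1),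
          (if k ≠ 0 ∧ k ≠ Fin.last n then
            (starRingEnd ℂ) (PMat n l σ v a k (Fin.last n)) * PMat n l σ v a k j else 0) =
          (starRingEnd ℂ) (if k ≠ 0 ∧ k ≠ Fin.last n then
            l⁻¹ * ((starRingEnd ℂ) (σ k j) * x k) else 0) := by
        intro k
        split_ifs with hk
        · rw [hPm k hk.1 hk.2 j, if_neg hjl, hPm k hk.1 hk.2 (Fin.last n), if_pos rfl]
          simp only [_root_.map_mul, Complex.conj_conj]
          ring
        · simp
      rw [Finset.sum_congr rfl fun k _ => hterm k, ← _root_.map_sum,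
        sum_mid_eq _ (by rw [hσ0 0 j (by tauto)]; simp) (by rw [hσ0 (Fin.last n) j (by tauto)]; simp),
        ← Finset.mul_sum, sumH, hxdef, hσv']
    have Slastlast :
        (∑ k, if k ≠ 0 ∧ k ≠ Fin.last n then
          (starRingEnd ℂ) (PMat n l σ v a k (Fin.last n)) *
            PMat n l σ v a k (Fin.last n) else 0) =
        ((starRingEnd ℂ) l⁻¹ * l⁻¹) * dotProduct (star v) v := by
      have hterm : ∀ k : Fin (n + 1),
          (if k ≠ 0 ∧ k ≠ Fin.last n then
            (starRingEnd ℂ) (PMat n l σ v a k (Fin.last n)) *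
              PMat n l σ v a k (Fin.last n) else 0) =
          (if k ≠ 0 ∧ k ≠ Fin.last n then
            ((starRingEnd ℂ) l⁻¹ * l⁻¹) * ((starRingEnd ℂ) (x k) * x k) else 0) := by
        intro k
        split_ifs with hk
        · rw [hPm k hk.1 hk.2 (Fin.last n), if_pos rfl]
          simp only [_root_.map_mul]
          ring
        · rfl
      rw [Finset.sum_congr rfl fun k _ => hterm k,
        sum_mid_eq _ (by rw [hx0]; simp) (by rw [hxl]; simp), ← Finset.mul_sum]
      congr 1
      have : ∑ k, (starRingEnd ℂ) (x k) * x k = dotProduct (star x) x := by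
        rw [dotProduct]
        exact Finset.sum_congr rfl fun k _ => rfl
      rw [this, hxdef, Matrix.star_mulVec, ← Matrix.dotProduct_mulVec, hσv']
    constructor
    · show (PMat n l σ v a)ᴴ * HMat n * PMat n l σ v a = HMat n
      ext i j
      rw [entry_formula hn]
      by_cases hi0 : i = 0
      · subst hi0
        by_cases hj0 : j = 0
        · subst hj0
          rw [hPl 0 h0l, S0j, hP00]
          simp [HMat, h0l, hl0]
        · by_cases hjl : j = Fin.last n
          · subst hjl
            rw [hPll, hPl 0 h0l, S0j, hP00]
            have hH : HMat n 0 (Fin.last n) = 1 := by simp [HMat]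
            rw [hH]
            simp [Complex.conj_conj, mul_inv_cancel₀ hlne]
          · rw [hPl j hjl, hPl 0 h0l, S0j]
            have hH : HMat n 0 j = 0 := by simp [HMat, hjl, h0l, Ne.symm hj0]
            rw [hH]
            simp
      · by_cases hil : i = Fin.last n
        · subst hil
          by_cases hj0 : j = 0
          · subst hj0
            rw [hPl 0 h0l, hPll, Sj0, hP00]
            have hH : HMat n (Fin.last n) 0 = 1 := by simp [HMat, hl0]
            rw [hH, ← _root_.map_mul, inv_mul_cancel₀ hlne, _root_.map_one]
            simp
          · by_cases hjl : j = Fin.last n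
            · subst hjl
              rw [hPll, hP0l, Slastlast]
              have hH : HMat n (Fin.last n) (Fin.last n) = 0 := by simp [HMat, hl0]
              rw [hH]
              have h1 : dotProduct (star v) v =
                  ((∑ k, Complex.normSq (v k) : ℝ) : ℂ) := by
                rw [dotProduct, Complex.ofReal_sum]
                exact Finset.sum_congr rfl fun k _ => by
                  rw [Pi.star_apply, RCLike.star_def, mul_comm, Complex.mul_conj]
              have key : l * a + (starRingEnd ℂ) (l * a) +
                  dotProduct (star v) v = 0 := by
                rw [Complex.add_conj, hre, h1, Complex.ofReal_re]
                push_cast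
                ring
              have hlc : (starRingEnd ℂ) l ≠ 0 := by simpa using hlne
              have expand : (starRingEnd ℂ) a * l⁻¹ + (starRingEnd ℂ) l⁻¹ * a +
                  (starRingEnd ℂ) l⁻¹ * l⁻¹ * dotProduct (star v) v =
                  ((starRingEnd ℂ) l⁻¹ * l⁻¹) *
                    (l * a + (starRingEnd ℂ) (l * a) + dotProduct (star v) v) := by
                simp only [_root_.map_inv₀, _root_.map_mul]
                field_simp
                ring
              rw [expand, key, mul_zero]
            · rw [hPl j hjl, hP0l, hPll, Slastmid j hj0 hjl, hP0m j hj0 hjl]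
              have hH : HMat n (Fin.last n) j = 0 := by simp [HMat, hl0, hj0, hjl]
              rw [hH]
              simp only [_root_.map_mul, _root_.map_neg, mul_zero, zero_mul]
              ring
        · by_cases hj0 : j = 0
          · subst hj0
            rw [hPl 0 h0l, hPl i hil, Sj0]
            have hH : HMat n i 0 = 0 := by simp [HMat, hi0, hil]
            rw [hH]
            simp
          · by_cases hjl : j = Fin.last n
            · subst hjl
              rw [hPll, hPl i hil, Smidlast i hi0 hil, hP0m i hi0 hil]
              have hH : HMat n i (Fin.last n) = 0 := by simp [HMat, hi0, hil, hl0]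
              rw [hH]
              simp only [_root_.map_neg, Complex.conj_conj, map_zero, zero_mul]
              ring
            · rw [hPl i hil, hPl j hjl]
              have hterm : ∀ k : Fin (n + 1),
                  (if k ≠ 0 ∧ k ≠ Fin.last n then
                    (starRingEnd ℂ) (PMat n l σ v a k i) * PMat n l σ v a k j else 0) =
                  (if k ≠ 0 ∧ k ≠ Fin.last n then
                    (starRingEnd ℂ) (σ k i) * σ k j else 0) := by
                intro k
                split_ifs with hk
                · rw [hPm k hk.1 hk.2 i, if_neg hil, hPm k hk.1 hk.2 j, if_neg hjl]
                · rfl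
              rw [Finset.sum_congr rfl fun k _ => hterm k,
                sum_mid_eq _ (by rw [hσ0 0 i (by tauto)]; simp) (by rw [hσ0 (Fin.last n) i (by tauto)]; simp),
                ← mulH_apply, hσfull, one_sub_Emat_apply]
              have hH : HMat n i j = if i = j then 1 else 0 := by
                by_cases hijeq : i = j
                · subst hijeq
                  simp [HMat, hi0, hil]
                · simp [HMat, hijeq, hi0, hil]
              rw [hH]
              by_cases hijeq : i = j
              · rw [if_pos hijeq, if_pos hijeq, if_neg (by subst hijeq; tauto)]
                simp
              · rw [if_neg hijeq, if_neg hijeq]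
                simp
    · refine (col_condition _).mpr ⟨?_, ?_⟩
      · rw [hP00]
        simpa using hlne
      · intro i hi
        by_cases hil : i = Fin.last n
        · subst hil
          exact hPl 0 h0l
        · rw [hPm i hi hil 0, if_neg h0l]
          exact hσ0 i 0 (by tauto)
end
end

section
/- Let n ≥ 1, let W = ℂ^{n−1} regarded as a real vector space, and let γ₂ : W → W be an ℝ-linear map such that range γ₂ ⊆ ker γ₂, J(range γ₂) ⊆ ker γ₂, and ω(x,y) = 0 for all x,y ∈ range γ₂. Then range γ₂ ∩ J(range γ₂) = {0}, and 3·dim_ℝ(range γ₂) ≤ 2n − 2. -/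
open Matrix

noncomputable section

/-- W = ℂ^{n-1} viewed as a real vector space. -/
abbrev HW (n : ℕ) : Type := Fin (n - 1) → ℂ

/-- The real inner product ⟨u,v⟩ = Re Σ uᵢ conj(vᵢ). -/
def rInner {n : ℕ} (u v : HW n) : ℝ := (dotProduct u (star v)).re

/-- The symplectic form ω(u,v) = ⟨u, Jv⟩ with J = multiplication by i. -/
def rOmega {n : ℕ} (u v : HW n) : ℝ := rInner u (Complex.I • v)

lemma rInner_self_eq {n : ℕ} (x : HW n) :
    rInner x x = ∑ i, Complex.normSq (x i) := by
  simp [rInner, dotProduct, Complex.mul_conj]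

lemma eq_zero_of_rInner_self {n : ℕ} (x : HW n) (h : rInner x x = 0) : x = 0 := by
  rw [rInner_self_eq] at h
  funext i
  have := (Finset.sum_eq_zero_iff_of_nonneg (fun i _ => Complex.normSq_nonneg (x i))).1 h i (Finset.mem_univ i)
  simpa using Complex.normSq_eq_zero.1 this

/-- for γ₂ with range γ₂ ⊆ ker γ₂, J(range γ₂) ⊆ ker γ₂ and
ω vanishing on range γ₂, one has range γ₂ ∩ J(range γ₂) = {0} and
3·rank(γ₂) ≤ 2n − 2. -/
theorem rank_gamma2_bound (n : ℕ) (hn : 1 ≤ n)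
    (γ₂ : HW n →ₗ[ℝ] HW n)
    (h1 : ∀ u, γ₂ (γ₂ u) = 0)
    (h2 : ∀ u, γ₂ (Complex.I • γ₂ u) = 0)
    (h3 : ∀ u u', rOmega (γ₂ u) (γ₂ u') = 0) :
    (∀ x : HW n, (∃ u, γ₂ u = x) → (∃ u, Complex.I • γ₂ u = x) → x = 0) ∧
      3 * Module.finrank ℝ (LinearMap.range γ₂) ≤ 2 * n - 2 := by
  have part1 : ∀ x : HW n, (∃ u, γ₂ u = x) → (∃ u, Complex.I • γ₂ u = x) → x = 0 := by
    rintro x ⟨u, rfl⟩ ⟨u', hu'⟩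
    apply eq_zero_of_rInner_self
    have := h3 u u'
    rw [rOmega, hu'] at this
    exact this
  refine ⟨part1, ?_⟩
  set J : HW n →ₗ[ℝ] HW n := Complex.I • LinearMap.id with hJ
  have hJinj : Function.Injective J := by
    intro a b hab
    exact smul_right_injective (HW n) Complex.I_ne_zero hab
  set R := LinearMap.range γ₂ with hR
  set S := R.map J with hS
  have hRker : R ≤ LinearMap.ker γ₂ := by
    rintro x ⟨u, rfl⟩; exact h1 u
  have hSker : S ≤ LinearMap.ker γ₂ := by
    rintro x hx
    obtain ⟨y, ⟨u, rfl⟩, rfl⟩ := hx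
    show γ₂ (J (γ₂ u)) = 0
    simpa [hJ] using h2 u
  have hinf : R ⊓ S = ⊥ := by
    rw [Submodule.eq_bot_iff]
    rintro x ⟨hx1, hx2⟩
    obtain ⟨u, rfl⟩ := hx1
    obtain ⟨y, ⟨u', rfl⟩, hy⟩ := hx2
    exact part1 _ ⟨u, rfl⟩ ⟨u', by simpa [hJ] using hy⟩
  have hfin : FiniteDimensional ℝ (HW n) := inferInstance
  have hSR : Module.finrank ℝ S = Module.finrank ℝ R := by
    rw [hS]
    exact (LinearEquiv.finrank_eq (Submodule.equivMapOfInjective J hJinj R)).symm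
  have hsum : Module.finrank ℝ R + Module.finrank ℝ S
      = Module.finrank ℝ (R ⊔ S : Submodule ℝ (HW n)) := by
    have := Submodule.finrank_sup_add_finrank_inf_eq R S
    rw [hinf] at this
    simpa using this.symm
  have hle : Module.finrank ℝ (R ⊔ S : Submodule ℝ (HW n))
      ≤ Module.finrank ℝ (LinearMap.ker γ₂) :=
    Submodule.finrank_mono (sup_le hRker hSker)
  have hrn : Module.finrank ℝ R + Module.finrank ℝ (LinearMap.ker γ₂)
      = Module.finrank ℝ (HW n) := LinearMap.finrank_range_add_finrank_ker γ₂
  have hdim : Module.finrank ℝ (HW n) = 2 * (n - 1) := by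
    rw [Module.finrank_pi_fintype]
    simp [Complex.finrank_real_complex, mul_comm]
  omega

end
end

section
/- Let n ≥ 1, let W = ℂ^{n−1} regarded as a real vector space, and let γ₂ : W → W, γ₃ : ℂ → W and b₂ : W → ℝ be ℝ-linear maps satisfying: (C1) range γ₂ ⊆ ker γ₂, J(range γ₂) ⊆ ker γ₂, and ω(x,y) = 0 for all x,y ∈ range γ₂; and (C3) b₂(s·γ₂(u)) = 2ω(γ₂(u), γ₃(s)) and b₂(γ₃(i·s) − J(γ₃(s))) = 2ω(γ₃(i·s), γ₃(s)) for all u ∈ W, s ∈ ℂ. If there exists s ∈ ℂ with s ≠ 0 such that γ₃(i·s) − J(γ₃(s)) ∈ range γ₂ + J(range γ₂), then range γ₃ ⊆ range γ₂, and consequently b₂ vanishes on range γ₂ + J(range γ₂). -/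
open Matrix

noncomputable section

lemma rOmega_eq {n : ℕ} (u v : HW n) :
    rOmega u v = ∑ i, (u i * (starRingEnd ℂ) (v i)).im := by
  simp only [rOmega, rInner, dotProduct, Pi.star_apply, Pi.smul_apply, smul_eq_mul,
    Complex.re_sum]
  refine Finset.sum_congr rfl fun i _ => ?_
  simp [Complex.ext_iff, _root_.map_mul]
  ring

lemma rInner_self {n : ℕ} (v : HW n) : rInner v v = ∑ i, Complex.normSq (v i) := by
  simp only [rInner, dotProduct, Pi.star_apply, Complex.re_sum, Complex.mul_conj]
  refine Finset.sum_congr rfl fun i _ => ?_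
  simp [Complex.normSq_apply]

lemma rInner_self_eq_zero {n : ℕ} {v : HW n} (h : rInner v v = 0) : v = 0 := by
  rw [rInner_self] at h
  funext i
  have := (Finset.sum_eq_zero_iff_of_nonneg (fun j _ => Complex.normSq_nonneg (v j))).mp h i
    (Finset.mem_univ i)
  exact Complex.normSq_eq_zero.mp this

lemma rOmega_sub_left {n : ℕ} (u u' v : HW n) :
    rOmega (u - u') v = rOmega u v - rOmega u' v := by
  simp only [rOmega_eq, Pi.sub_apply, sub_mul, Complex.sub_im, Finset.sum_sub_distrib]

lemma rOmega_add_right {n : ℕ} (u v v' : HW n) :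
    rOmega u (v + v') = rOmega u v + rOmega u v' := by
  simp only [rOmega_eq, Pi.add_apply, map_add, mul_add, Complex.add_im, Finset.sum_add_distrib]

lemma rOmega_smul_left {n : ℕ} (r : ℝ) (u v : HW n) :
    rOmega (r • u) v = r * rOmega u v := by
  simp only [rOmega_eq, Pi.smul_apply, Finset.mul_sum]
  refine Finset.sum_congr rfl fun i _ => ?_
  simp [Complex.ext_iff]; ring

lemma rOmega_smul_right {n : ℕ} (r : ℝ) (u v : HW n) :
    rOmega u (r • v) = r * rOmega u v := by
  simp only [rOmega_eq, Pi.smul_apply, Finset.mul_sum]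
  refine Finset.sum_congr rfl fun i _ => ?_
  simp [Complex.ext_iff]; ring

lemma rOmega_skew {n : ℕ} (u v : HW n) : rOmega u v = - rOmega v u := by
  simp only [rOmega_eq, ← Finset.sum_neg_distrib]
  refine Finset.sum_congr rfl fun i _ => ?_
  simp [Complex.ext_iff]; ring

/-- under (C1) and (C3), if γ₃(is) − Jγ₃(s) ∈ range γ₂ + J range γ₂
for some s ≠ 0, then range γ₃ ⊆ range γ₂, and b₂ vanishes on
range γ₂ + J range γ₂. -/
theorem gamma3_in_gamma2 (n : ℕ) (hn : 1 ≤ n)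
    (γ₂ : HW n →ₗ[ℝ] HW n) (γ₃ : ℂ →ₗ[ℝ] HW n) (b₂ : HW n →ₗ[ℝ] ℝ)
    (hC1a : ∀ u, γ₂ (γ₂ u) = 0)
    (hC1b : ∀ u, γ₂ (Complex.I • γ₂ u) = 0)
    (hC1c : ∀ u u', rOmega (γ₂ u) (γ₂ u') = 0)
    (hC3a : ∀ (u : HW n) (s : ℂ),
      b₂ (s • γ₂ u) = 2 * rOmega (γ₂ u) (γ₃ s))
    (hC3b : ∀ s : ℂ,
      b₂ (γ₃ (Complex.I * s) - Complex.I • γ₃ s) =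
        2 * rOmega (γ₃ (Complex.I * s)) (γ₃ s))
    (hex : ∃ s : ℂ, s ≠ 0 ∧ ∃ x y : HW n,
      γ₃ (Complex.I * s) - Complex.I • γ₃ s = γ₂ x + Complex.I • γ₂ y) :
    (∀ s : ℂ, ∃ u : HW n, γ₃ s = γ₂ u) ∧
      (∀ x y : HW n, b₂ (γ₂ x + Complex.I • γ₂ y) = 0) := by
  set w₁ := γ₃ 1 with hw1
  set w₂ := γ₃ Complex.I with hw2
  have hγ₃ : ∀ s : ℂ, γ₃ s = s.re • w₁ + s.im • w₂ := by
    intro s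
    have hs : (s.re : ℝ) • (1:ℂ) + (s.im : ℝ) • Complex.I = s := by
      simp [Complex.real_smul, Complex.ext_iff]
    have h' : γ₃ s = γ₃ ((s.re : ℝ) • (1:ℂ)) + γ₃ ((s.im : ℝ) • Complex.I) := by
      rw [← LinearMap.map_add]; exact congrArg γ₃ hs.symm
    rw [h', γ₃.map_smul, γ₃.map_smul]
  set P : HW n := w₂ - Complex.I • w₁ with hPdef
  set ω₀ : ℝ := rOmega w₂ w₁ with hω₀
  -- Step 1: ω₀ = 0 and b₂ P = 0
  have h1 : b₂ P = 2 * ω₀ := by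
    have := hC3b 1
    rw [mul_one, ← hw1, ← hw2, ← hPdef, ← hω₀] at this
    exact this
  have h2 : 2 * b₂ P = 8 * ω₀ := by
    have := hC3b 2
    have e2 : γ₃ (Complex.I * 2) = (2:ℝ) • w₂ := by rw [hγ₃]; norm_num
    have e2' : γ₃ (2:ℂ) = (2:ℝ) • w₁ := by rw [hγ₃]; norm_num
    rw [e2, e2', smul_comm (Complex.I) ((2:ℝ)), ← smul_sub, b₂.map_smul,
      rOmega_smul_left, rOmega_smul_right, ← hPdef, ← hω₀] at this
    simp only [smul_eq_mul] at this
    linarith [this]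
  have hω0 : ω₀ = 0 := by linarith
  have hbP : b₂ P = 0 := by linarith
  obtain ⟨s, hs, x, y, hxy⟩ := hex
  -- rewrite hxy in terms of P
  have hds : γ₃ (Complex.I * s) - Complex.I • γ₃ s
      = s.re • P - s.im • (Complex.I • P) := by
    funext i
    simp only [hγ₃, hPdef, Pi.sub_apply, Pi.add_apply, Pi.smul_apply, Complex.real_smul,
      smul_eq_mul, Complex.mul_re, Complex.mul_im, Complex.I_re, Complex.I_im]
    push_cast
    linear_combination (-((s.im:ℂ) * w₁ i)) * Complex.I_sq
  rw [hds] at hxy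
  -- divide by conj s
  set c : ℂ := ((starRingEnd ℂ) s)⁻¹ with hcdef
  have hcs : c * (starRingEnd ℂ) s = 1 :=
    inv_mul_cancel₀ (by simpa using hs)
  set p : ℝ := c.re with hp
  set q : ℝ := c.im with hq
  have hpq : (p:ℂ) + q * Complex.I = c := Complex.re_add_im c
  set a : HW n := p • x - q • y with hadef
  set b : HW n := q • x + p • y with hbdef
  have hA : γ₂ a = p • γ₂ x - q • γ₂ y := by
    rw [hadef, γ₂.map_sub, γ₂.map_smul, γ₂.map_smul]
  have hB : γ₂ b = q • γ₂ x + p • γ₂ y := by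
    rw [hbdef, γ₂.map_add, γ₂.map_smul, γ₂.map_smul]
  have hP : P = γ₂ a + Complex.I • γ₂ b := by
    funext i
    have h0 := congrFun hxy i
    simp only [Pi.sub_apply, Pi.add_apply, Pi.smul_apply, Complex.real_smul,
      smul_eq_mul] at h0
    have h1' : (starRingEnd ℂ) s * P i = γ₂ x i + Complex.I * γ₂ y i := by
      have hconj : (starRingEnd ℂ) s = (s.re : ℂ) - s.im * Complex.I := by
        simp [Complex.ext_iff]
      rw [hconj]; linear_combination h0
    have h2' : P i = c * (γ₂ x i + Complex.I * γ₂ y i) := by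
      rw [← h1', ← mul_assoc, hcs, one_mul]
    simp only [Pi.add_apply, Pi.smul_apply, hA, hB, Pi.sub_apply, Complex.real_smul,
      smul_eq_mul]
    rw [h2', ← hpq]
    linear_combination ((q:ℂ) * γ₂ y i) * Complex.I_sq
  -- Step 3: v = 0
  have hv : w₂ - γ₂ a = Complex.I • (w₁ + γ₂ b) := by
    funext i
    have h0 := congrFun hP i
    simp only [hPdef, Pi.sub_apply, Pi.add_apply, Pi.smul_apply, smul_eq_mul] at h0 ⊢
    linear_combination h0
  have hvv : rInner (w₂ - γ₂ a) (w₂ - γ₂ a) = 0 := by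
    have h3 : rInner (w₂ - γ₂ a) (w₂ - γ₂ a) = rOmega (w₂ - γ₂ a) (w₁ + γ₂ b) := by
      rw [rOmega, ← hv]
    have hωa : rOmega (γ₂ a) w₁ = b₂ (γ₂ a) / 2 := by
      have h' := hC3a a 1
      rw [one_smul] at h'
      rw [hw1]
      linarith
    have hωb : rOmega w₂ (γ₂ b) = - (b₂ (Complex.I • γ₂ b) / 2) := by
      have h' := hC3a b Complex.I
      rw [hw2, rOmega_skew (γ₃ Complex.I) (γ₂ b)]
      linarith
    have hsum : b₂ (γ₂ a) + b₂ (Complex.I • γ₂ b) = 0 := by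
      rw [← map_add, ← hP]; exact hbP
    rw [h3, rOmega_sub_left, rOmega_add_right, rOmega_add_right, hC1c a b, ← hω₀]
    linarith
  have hv0 : w₂ - γ₂ a = 0 := rInner_self_eq_zero hvv
  have hw₂' : w₂ = γ₂ a := sub_eq_zero.mp hv0
  have hw₁' : w₁ = γ₂ (-b) := by
    have h0 : Complex.I • (w₁ + γ₂ b) = 0 := by rw [← hv, hv0]
    have h1' : w₁ + γ₂ b = 0 := by
      rcases smul_eq_zero.mp h0 with h | h
      · exact absurd h Complex.I_ne_zero
      · exact h
    rw [map_neg]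
    exact eq_neg_of_add_eq_zero_left h1'
  constructor
  · intro t
    refine ⟨t.im • a - t.re • b, ?_⟩
    have hrhs : γ₂ (t.im • a - t.re • b) = t.im • γ₂ a - t.re • γ₂ b := by
      rw [γ₂.map_sub, γ₂.map_smul, γ₂.map_smul]
    rw [hγ₃ t, hrhs, hw₁', hw₂', γ₂.map_neg]
    module
  · intro x' y'
    have ha' := hC3a x' 1
    rw [one_smul, ← hw1, hw₁'] at ha'
    have hb' := hC3a y' Complex.I
    rw [← hw2, hw₂'] at hb'
    rw [map_add, ha', hb', hC1c y' a]
    have := hC1c x' (-b)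
    rw [this]
    ring
end
end

section
/- Let n ≥ 1 and let A, A' ∈ GL(2n+1,ℤ) be matrices such that each, regarded as a complex matrix, is diagonalizable and possesses an eigenvalue λ (resp. λ') with |λ| ≠ 1 (resp. |λ'| ≠ 1) such that λ and λ⁻¹ (resp. λ' and λ'⁻¹) are eigenvalues of algebraic multiplicity 1 while every other eigenvalue has modulus 1. Then the groups ℤ ⋉_A ℤ^{2n+1} and ℤ ⋉_{A'} ℤ^{2n+1} are isomorphic if and only if there exists P ∈ GL(2n+1,ℤ) with P·A·P⁻¹ = A' or P·A·P⁻¹ = A'⁻¹. -/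
open Matrix

noncomputable section

/-- The additive automorphism of ℤ^m given by an integral matrix with
invertible determinant. -/
def intMatAut {m : ℕ} (A : Matrix (Fin m) (Fin m) ℤ) (h : IsUnit A.det) :
    AddAut (Fin m → ℤ) where
  toFun := A.mulVec
  invFun := (A⁻¹).mulVec
  left_inv x := by
    rw [Matrix.mulVec_mulVec, Matrix.nonsing_inv_mul A h, Matrix.one_mulVec]
  right_inv x := by
    rw [Matrix.mulVec_mulVec, Matrix.mul_nonsing_inv A h, Matrix.one_mulVec]
  map_add' x y := Matrix.mulVec_add A x y

/-- The action of ℤ on ℤ^m where k acts by A^k. -/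
def zphi {m : ℕ} (A : Matrix (Fin m) (Fin m) ℤ) (h : IsUnit A.det) :
    Multiplicative ℤ →* MulAut (Multiplicative (Fin m → ℤ)) :=
  MonoidHom.mk'
    (fun k => (AddEquiv.toMultiplicative (intMatAut A h) :
        MulAut (Multiplicative (Fin m → ℤ))) ^ (Multiplicative.toAdd k))
    (fun k l => by simp [_root_.zpow_add])

/-- The semidirect product ℤ ⋉_A ℤ^m. -/
abbrev ZSemi {m : ℕ} (A : Matrix (Fin m) (Fin m) ℤ) (h : IsUnit A.det) : Type :=
  SemidirectProduct (Multiplicative (Fin m → ℤ)) (Multiplicative ℤ) (zphi A h)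

/-- The eigenvalue hypothesis: A (regarded over ℂ) is diagonalizable, and has
an eigenvalue λ with |λ| ≠ 1 such that λ and λ⁻¹ have algebraic multiplicity 1
while every other eigenvalue has modulus 1. -/
def HypEV {m : ℕ} (A : Matrix (Fin m) (Fin m) ℤ) : Prop :=
  ∃ (P : Matrix (Fin m) (Fin m) ℂ) (d : Fin m → ℂ),
    IsUnit P.det ∧
    A.map (Int.cast : ℤ → ℂ) = P * Matrix.diagonal d * P⁻¹ ∧
    ∃ i j : Fin m, i ≠ j ∧
      ‖d i‖ ≠ 1 ∧ d j = (d i)⁻¹ ∧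
      (∀ k, k ≠ i → d k ≠ d i) ∧
      (∀ k, k ≠ j → d k ≠ d j) ∧
      (∀ k, k ≠ i → k ≠ j → ‖d k‖ = 1)

/-- The multiplicative group structure on additive automorphisms (composition). -/
instance addAutMulGroup (N : Type) [Add N] : Group (AddAut N) where
  mul g h := AddEquiv.trans h g
  one := AddEquiv.refl _
  inv := AddEquiv.symm
  mul_assoc _ _ _ := rfl
  one_mul _ := rfl
  mul_one _ := rfl
  inv_mul_cancel := AddEquiv.self_trans_symm

namespace Aux

lemma AddAut.inv_apply_self (N : Type) [Add N] (e : AddAut N) (a : N) : e (e⁻¹ a) = a :=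
  AddEquiv.apply_symm_apply _ _

lemma AddAut.apply_inv_self (N : Type) [Add N] (e : AddAut N) (a : N) : e⁻¹ (e a) = a :=
  AddEquiv.symm_apply_apply _ _

lemma addAut_mul_apply (N : Type) [Add N] (e f : AddAut N) (a : N) : (e * f) a = e (f a) :=
  rfl

/-- `AddEquiv.toMultiplicative` as a monoid hom on automorphism groups. -/
def TT (N : Type) [AddGroup N] : AddAut N →* MulAut (Multiplicative N) where
  toFun := AddEquiv.toMultiplicative
  map_one' := rfl
  map_mul' _ _ := rfl

lemma TT_zpow_apply (N : Type) [AddGroup N] (a : AddAut N) (z : ℤ) (v : N) :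
    ((AddEquiv.toMultiplicative a ^ z : MulAut (Multiplicative N))) (Multiplicative.ofAdd v)
      = Multiplicative.ofAdd ((a ^ z) v) := by
  have h : (AddEquiv.toMultiplicative a ^ z : MulAut (Multiplicative N)) = TT N (a ^ z) :=
    (map_zpow (TT N) a z).symm
  rw [h]; rfl

variable {m : ℕ}

lemma zphi_apply (A : Matrix (Fin m) (Fin m) ℤ) (h : IsUnit A.det)
    (k : Multiplicative ℤ) (n : Multiplicative (Fin m → ℤ)) :
    zphi A h k n = Multiplicative.ofAdd
      ((intMatAut A h ^ (Multiplicative.toAdd k)) (Multiplicative.toAdd n)) := by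
  have := TT_zpow_apply (Fin m → ℤ) (intMatAut A h) (Multiplicative.toAdd k)
    (Multiplicative.toAdd n)
  exact this

lemma intMatAut_apply (A : Matrix (Fin m) (Fin m) ℤ) (h : IsUnit A.det) (v : Fin m → ℤ) :
    intMatAut A h v = A.mulVec v := rfl

lemma intMatAut_inv_apply (A : Matrix (Fin m) (Fin m) ℤ) (h : IsUnit A.det) (v : Fin m → ℤ) :
    (intMatAut A h)⁻¹ v = A⁻¹.mulVec v := rfl

lemma intMatAut_pow_apply (A : Matrix (Fin m) (Fin m) ℤ) (h : IsUnit A.det) (p : ℕ)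
    (v : Fin m → ℤ) : (intMatAut A h ^ p) v = (A ^ p).mulVec v := by
  induction p generalizing v with
  | zero => simp [Matrix.one_mulVec]; rfl
  | succ q ih =>
    rw [pow_succ, pow_succ]
    have : (intMatAut A h ^ q * intMatAut A h) v
        = (intMatAut A h ^ q) (intMatAut A h v) := rfl
    rw [this, intMatAut_apply, ih, Matrix.mulVec_mulVec]

/-- matrices are equal if they agree as linear maps -/
lemma eq_of_mulVec_eq {M N : Matrix (Fin m) (Fin m) ℤ}
    (h : ∀ v, M.mulVec v = N.mulVec v) : M = N := by
  ext i j
  have := congrFun (h (Pi.single j 1)) i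
  simpa [Matrix.mulVec_single] using this

lemma rank_conj {k : ℕ} (P D : Matrix (Fin k) (Fin k) ℂ) (hP : IsUnit P.det) :
    (P * D * P⁻¹).rank = D.rank := by
  apply le_antisymm
  · exact le_trans (Matrix.rank_mul_le_left _ _) (Matrix.rank_mul_le_right _ _)
  · have hD : D = P⁻¹ * (P * D * P⁻¹) * P := by
      have h1 : P⁻¹ * (P * D * P⁻¹) * P = (P⁻¹ * P) * D * (P⁻¹ * P) := by
        simp only [Matrix.mul_assoc]
      rw [h1, Matrix.nonsing_inv_mul P hP, one_mul, mul_one]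
    conv_lhs => rw [hD]
    exact le_trans (Matrix.rank_mul_le_left _ _) (Matrix.rank_mul_le_right _ _)

lemma rank_vecMulVec_le_one {k : ℕ} (c f : Fin k → ℂ) :
    (Matrix.vecMulVec c f).rank ≤ 1 := by
  rw [Matrix.vecMulVec_eq (Fin 1)]
  calc (Matrix.replicateCol (Fin 1) c * Matrix.replicateRow (Fin 1) f).rank
      ≤ (Matrix.replicateCol (Fin 1) c).rank := Matrix.rank_mul_le_left _ _
    _ ≤ 1 := by simpa using Matrix.rank_le_card_width (Matrix.replicateCol (Fin 1) c)

lemma abs_pow_ne_one {x : ℂ} (hx : ‖x‖ ≠ 1) {p : ℕ} (hp : 1 ≤ p) :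
    x ^ p ≠ 1 := by
  intro h
  have h1 : ‖x‖ ^ p = 1 := by
    rw [← norm_pow, h, norm_one]
  have hp0 : p ≠ 0 := by omega
  rcases lt_trichotomy (‖x‖) 1 with hlt | heq | hgt
  · have h2 := pow_lt_one₀ (norm_nonneg x) hlt hp0
    rw [h1] at h2; exact lt_irrefl _ h2
  · exact hx heq
  · have h2 := one_lt_pow₀ hgt hp0
    rw [h1] at h2; exact lt_irrefl _ h2

/-- The key rigidity lemma: if some nonzero power of `A` fixes the kernel of an
additive functional `f` pointwise, then (under the eigenvalue hypothesis) `f = 0`. -/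
lemma keyLemma (A : Matrix (Fin m) (Fin m) ℤ) (hA : IsUnit A.det) (hE : HypEV A)
    (k : ℤ) (hk : k ≠ 0) (f : (Fin m → ℤ) →+ ℤ)
    (hfix : ∀ w, f w = 0 → (intMatAut A hA ^ k) w = w) : f = 0 := by
  by_contra hf0
  obtain ⟨u, hu⟩ : ∃ u, f u ≠ 0 := by
    by_contra h; push_neg at h
    exact hf0 (AddMonoidHom.ext fun x => h x)
  set a := f u with ha
  set p := k.natAbs with hp
  have hp1 : 1 ≤ p := Int.natAbs_pos.mpr hk
  have hfixp : ∀ w, f w = 0 → (A ^ p).mulVec w = w := by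
    intro w hw
    have h1 := hfix w hw
    have h2 : (intMatAut A hA ^ (p : ℤ)) w = w := by
      rcases Int.natAbs_eq k with hh | hh
      · rw [← hp] at hh; rw [← hh]; exact h1
      · rw [← hp] at hh
        have h3 : (intMatAut A hA ^ (p : ℤ))⁻¹ w = w := by
          rw [← _root_.zpow_neg, ← hh]; exact h1
        calc (intMatAut A hA ^ (p : ℤ)) w
            = (intMatAut A hA ^ (p : ℤ)) ((intMatAut A hA ^ (p : ℤ))⁻¹ w) := by rw [h3]
          _ = w := AddAut.inv_apply_self _ _ w
    rw [zpow_natCast] at h2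
    rw [← intMatAut_pow_apply A hA p w]; exact h2
  set B := A ^ p - 1 with hB
  have hBv : ∀ w, f w = 0 → B.mulVec w = 0 := fun w hw => by
    rw [hB, Matrix.sub_mulVec, hfixp w hw, Matrix.one_mulVec, sub_self]
  set fv : Fin m → ℤ := fun s => f (Pi.single s 1) with hfv
  have hkey : ∀ q s, a * B q s = fv s * (B.mulVec u) q := by
    intro q s
    have hw : f (a • Pi.single s 1 - fv s • u) = 0 := by
      rw [_root_.map_sub, _root_.map_zsmul, _root_.map_zsmul]
      simp only [hfv, smul_eq_mul, ← ha]
      ring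
    have h0 := hBv _ hw
    rw [Matrix.mulVec_sub, Matrix.mulVec_smul, Matrix.mulVec_smul, sub_eq_zero] at h0
    have := congrFun h0 q
    simpa [Matrix.mulVec_single, smul_eq_mul, mul_comm] using this
  have haC : ((a : ℂ)) ≠ 0 := Int.cast_ne_zero.mpr hu
  have hBC : B.map (Int.cast : ℤ → ℂ)
      = Matrix.vecMulVec (fun q => ((a : ℂ))⁻¹ * ((B.mulVec u) q : ℂ))
          (fun s => (fv s : ℂ)) := by
    ext q s
    have h1 : (a : ℂ) * (B q s : ℂ) = (fv s : ℂ) * ((B.mulVec u) q : ℂ) := by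
      exact_mod_cast congrArg (Int.cast : ℤ → ℂ) (hkey q s)
    rw [Matrix.map_apply, Matrix.vecMulVec_apply]
    field_simp
    linear_combination h1
  have hrank1 : (B.map (Int.cast : ℤ → ℂ)).rank ≤ 1 := by
    rw [hBC]; exact rank_vecMulVec_le_one _ _
  obtain ⟨P, d, hP, hdiag, i, j, hij, habs, hinvd, -, -, -⟩ := hE
  have hconjpow : ∀ q : ℕ, (P * Matrix.diagonal d * P⁻¹) ^ q
      = P * (Matrix.diagonal d) ^ q * P⁻¹ := by
    intro q
    induction q with
    | zero => simp [Matrix.mul_nonsing_inv P hP]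
    | succ r ih =>
      rw [pow_succ, ih, pow_succ]
      have : P * Matrix.diagonal d ^ r * P⁻¹ * (P * Matrix.diagonal d * P⁻¹)
          = P * Matrix.diagonal d ^ r * (P⁻¹ * P) * Matrix.diagonal d * P⁻¹ := by
        simp only [Matrix.mul_assoc]
      rw [this, Matrix.nonsing_inv_mul P hP, mul_one]
      simp [Matrix.mul_assoc]
  have hmp : (A ^ p).map (Int.cast : ℤ → ℂ) = (A.map (Int.cast : ℤ → ℂ)) ^ p := by
    have := _root_.map_pow ((Int.castRingHom ℂ).mapMatrix) A p
    simpa [RingHom.mapMatrix_apply] using this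
  have hBCdiag : B.map (Int.cast : ℤ → ℂ)
      = P * Matrix.diagonal (fun t => d t ^ p - 1) * P⁻¹ := by
    have hBm : B.map (Int.cast : ℤ → ℂ)
        = (A ^ p).map (Int.cast : ℤ → ℂ) - 1 := by
      have := _root_.map_sub ((Int.castRingHom ℂ).mapMatrix) (A ^ p) 1
      simpa [RingHom.mapMatrix_apply] using this
    rw [hBm, hmp, hdiag, hconjpow, Matrix.diagonal_pow]
    have hone : (1 : Matrix (Fin m) (Fin m) ℂ)
        = P * Matrix.diagonal (fun _ => 1) * P⁻¹ := by
      rw [Matrix.diagonal_one, mul_one, Matrix.mul_nonsing_inv P hP]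
    conv_lhs => rw [hone]
    rw [← Matrix.sub_mul, ← Matrix.mul_sub, Matrix.diagonal_sub]
    simp [Pi.pow_apply]
  have hdi : d i ^ p - 1 ≠ 0 := sub_ne_zero.mpr (abs_pow_ne_one habs hp1)
  have hdj : d j ^ p - 1 ≠ 0 := by
    refine sub_ne_zero.mpr (abs_pow_ne_one ?_ hp1)
    rw [hinvd, norm_inv]
    intro h
    exact habs (by rwa [inv_eq_one] at h)
  have hrank2 : 2 ≤ (B.map (Int.cast : ℤ → ℂ)).rank := by
    rw [hBCdiag, rank_conj _ _ hP, Matrix.rank_diagonal]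
    have : Nontrivial {t // d t ^ p - 1 ≠ 0} :=
      ⟨⟨⟨i, hdi⟩, ⟨j, hdj⟩, by simp [hij]⟩⟩
    exact Fintype.one_lt_card
  omega

lemma hconjz (A A' : Matrix (Fin m) (Fin m) ℤ) (hA : IsUnit A.det)
    (hA' : IsUnit A'.det) (ε : ℤ) (e : AddAut (Fin m → ℤ))
    (hconj : ∀ v, e (intMatAut A hA v) = (intMatAut A' hA' ^ ε) (e v)) :
    ∀ (z : ℤ) (v : Fin m → ℤ),
      e ((intMatAut A hA ^ z) v) = ((intMatAut A' hA') ^ (ε * z)) (e v) := by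
  have hgrp : e * intMatAut A hA * e⁻¹ = intMatAut A' hA' ^ ε := by
    refine AddEquiv.ext fun v => ?_
    show e (intMatAut A hA (e⁻¹ v)) = _
    rw [hconj (e⁻¹ v)]
    congr 1
    exact AddAut.inv_apply_self _ _ v
  intro z v
  have h2 : e * intMatAut A hA ^ z * e⁻¹ = intMatAut A' hA' ^ (ε * z) := by
    rw [_root_.zpow_mul, ← hgrp]
    exact (conj_zpow).symm
  have h3 := congrArg (fun (g : AddAut (Fin m → ℤ)) => g (e v)) h2
  simpa [AddAut.apply_inv_self, addAut_mul_apply] using h3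

/-- Construction of the isomorphism of semidirect products from a compatible
automorphism of the lattice (reverse direction). -/
def buildEquiv (A A' : Matrix (Fin m) (Fin m) ℤ) (hA : IsUnit A.det)
    (hA' : IsUnit A'.det) (ε : ℤ) (hε : ε = 1 ∨ ε = -1)
    (e : AddAut (Fin m → ℤ))
    (hconj : ∀ v, e (intMatAut A hA v) = (intMatAut A' hA' ^ ε) (e v)) :
    ZSemi A hA ≃* ZSemi A' hA' where
  toFun x := ⟨Multiplicative.ofAdd (e (Multiplicative.toAdd x.left)),
    Multiplicative.ofAdd (ε * Multiplicative.toAdd x.right)⟩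
  invFun x := ⟨Multiplicative.ofAdd (e⁻¹ (Multiplicative.toAdd x.left)),
    Multiplicative.ofAdd (ε * Multiplicative.toAdd x.right)⟩
  left_inv x := by
    ext : 1
    · show e⁻¹ (e _) = _
      exact AddAut.apply_inv_self _ _ _
    · show Multiplicative.ofAdd (ε * (ε * Multiplicative.toAdd x.right)) = x.right
      rcases hε with h | h <;> subst h <;> simp
  right_inv x := by
    ext : 1
    · show e (e⁻¹ _) = _
      exact AddAut.inv_apply_self _ _ _
    · show Multiplicative.ofAdd (ε * (ε * Multiplicative.toAdd x.right)) = x.right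
      rcases hε with h | h <;> subst h <;> simp
  map_mul' x y := by
    ext : 1
    · show e (Multiplicative.toAdd ((x * y).left)) = _
      rw [SemidirectProduct.mul_left, zphi_apply]
      show e (Multiplicative.toAdd x.left + (intMatAut A hA ^ Multiplicative.toAdd x.right)
          (Multiplicative.toAdd y.left)) = _
      rw [_root_.map_add, hconjz A A' hA hA' ε e hconj]
      show _ = Multiplicative.toAdd ((⟨_, _⟩ * ⟨_, _⟩ : ZSemi A' hA').left)
      rw [SemidirectProduct.mul_left, zphi_apply]
      simp [mul_comm]
    · show Multiplicative.ofAdd (ε * Multiplicative.toAdd ((x * y).right)) = _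
      rw [SemidirectProduct.mul_right]
      show Multiplicative.ofAdd (ε * (Multiplicative.toAdd x.right
          + Multiplicative.toAdd y.right)) = _
      rw [SemidirectProduct.mul_right]
      show _ = Multiplicative.ofAdd (ε * Multiplicative.toAdd x.right
          + ε * Multiplicative.toAdd y.right)
      rw [mul_add]

lemma conj_inl {N G : Type} [CommGroup N] [Group G] (φ : G →* MulAut N)
    (T : N ⋊[φ] G) (n : N) :
    T * SemidirectProduct.inl n * T⁻¹ = SemidirectProduct.inl (φ T.right n) := by
  conv_lhs => rw [← SemidirectProduct.inl_left_mul_inr_right T]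
  have h1 : (SemidirectProduct.inl T.left : N ⋊[φ] G) * SemidirectProduct.inr T.right
        * SemidirectProduct.inl n
        * (SemidirectProduct.inl T.left * SemidirectProduct.inr T.right)⁻¹
      = SemidirectProduct.inl T.left
        * (SemidirectProduct.inr T.right * SemidirectProduct.inl n
            * (SemidirectProduct.inr T.right)⁻¹)
        * (SemidirectProduct.inl T.left)⁻¹ := by
    group
  rw [h1, ← _root_.map_inv SemidirectProduct.inr T.right, ← SemidirectProduct.inl_aut,
    ← _root_.map_inv SemidirectProduct.inl T.left, ← _root_.map_mul, ← _root_.map_mul]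
  congr 1
  rw [mul_comm T.left, mul_assoc, mul_inv_cancel, mul_one]

/-- Under the eigenvalue hypothesis on `A`, any isomorphism of the semidirect
products carries the lattice into the lattice. -/
lemma right_trivial (A A' : Matrix (Fin m) (Fin m) ℤ)
    (hA : IsUnit A.det) (hA' : IsUnit A'.det) (hEA : HypEV A)
    (Φ : ZSemi A hA ≃* ZSemi A' hA') :
    ∀ v : Fin m → ℤ,
      (Φ (SemidirectProduct.inl (Multiplicative.ofAdd v))).right = 1 := by
  classical
  set R : ZSemi A hA →* Multiplicative ℤ :=
    SemidirectProduct.rightHom.comp Φ.toMonoidHom with hR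
  set F : (Fin m → ℤ) →+ ℤ := AddMonoidHom.mk'
    (fun v => Multiplicative.toAdd (R (SemidirectProduct.inl (Multiplicative.ofAdd v))))
    (by
      intro x y
      show Multiplicative.toAdd (R (SemidirectProduct.inl (Multiplicative.ofAdd (x + y)))) = _
      have h : (Multiplicative.ofAdd (x + y))
          = Multiplicative.ofAdd x * Multiplicative.ofAdd y := rfl
      rw [h, _root_.map_mul, _root_.map_mul, toAdd_mul]) with hF
  suffices hF0 : F = 0 by
    intro v
    have h : Multiplicative.toAdd
        ((Φ (SemidirectProduct.inl (Multiplicative.ofAdd v))).right) = 0 :=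
      DFunLike.congr_fun hF0 v
    have h2 := congrArg Multiplicative.ofAdd h
    simpa using h2
  by_contra hF0
  obtain ⟨u, hu⟩ : ∃ u, F u ≠ 0 := by
    by_contra h; push_neg at h
    exact hF0 (AddMonoidHom.ext fun x => h x)
  set c : ℤ := Multiplicative.toAdd
    (R (SemidirectProduct.inr (Multiplicative.ofAdd (1 : ℤ)))) with hc
  set g₀ : ZSemi A hA :=
    ⟨Multiplicative.ofAdd (c • u), Multiplicative.ofAdd (-(F u))⟩ with hg₀
  have hsplit : g₀ = SemidirectProduct.inl (Multiplicative.ofAdd (c • u))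
      * SemidirectProduct.inr (Multiplicative.ofAdd (-(F u))) :=
    (SemidirectProduct.inl_left_mul_inr_right g₀).symm
  have hinr : ∀ z : ℤ,
      R (SemidirectProduct.inr (Multiplicative.ofAdd z))
        = Multiplicative.ofAdd (z * c) := by
    intro z
    have h1 : (Multiplicative.ofAdd z)
        = (Multiplicative.ofAdd (1 : ℤ)) ^ z := by
      apply Multiplicative.toAdd.injective
      simp
    rw [h1, _root_.map_zpow SemidirectProduct.inr, _root_.map_zpow R]
    apply Multiplicative.toAdd.injective
    rw [toAdd_zpow]
    simp [hc, mul_comm]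
  have hRg₀ : R g₀ = 1 := by
    rw [hsplit, _root_.map_mul, hinr]
    apply Multiplicative.toAdd.injective
    have h1 : Multiplicative.toAdd (R (SemidirectProduct.inl
        (Multiplicative.ofAdd (c • u)))) = F (c • u) := rfl
    rw [toAdd_mul, h1, _root_.map_zsmul]
    simp [smul_eq_mul, mul_comm]
  have hfix : ∀ w, F w = 0 → (intMatAut A hA ^ (-(F u))) w = w := by
    intro w hw
    have hRw : R (SemidirectProduct.inl (Multiplicative.ofAdd w)) = 1 := by
      apply Multiplicative.toAdd.injective
      exact hw
    have hr1 : (Φ g₀).right = 1 := hRg₀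
    have hr2 : (Φ (SemidirectProduct.inl (Multiplicative.ofAdd w))).right = 1 := hRw
    have he1 : Φ g₀ = SemidirectProduct.inl ((Φ g₀).left) := by
      conv_lhs => rw [← SemidirectProduct.inl_left_mul_inr_right (Φ g₀)]
      rw [hr1, _root_.map_one, mul_one]
    have he2 : Φ (SemidirectProduct.inl (Multiplicative.ofAdd w))
        = SemidirectProduct.inl
            ((Φ (SemidirectProduct.inl (Multiplicative.ofAdd w))).left) := by
      conv_lhs => rw [← SemidirectProduct.inl_left_mul_inr_right
        (Φ (SemidirectProduct.inl (Multiplicative.ofAdd w)))]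
      rw [hr2, _root_.map_one, mul_one]
    have hcomm : g₀ * SemidirectProduct.inl (Multiplicative.ofAdd w)
        = SemidirectProduct.inl (Multiplicative.ofAdd w) * g₀ := by
      apply Φ.injective
      rw [_root_.map_mul, _root_.map_mul, he1, he2, ← _root_.map_mul, ← _root_.map_mul, mul_comm]
    have hleft : (Multiplicative.ofAdd (c • u))
          * zphi A hA (Multiplicative.ofAdd (-(F u))) (Multiplicative.ofAdd w)
        = Multiplicative.ofAdd w * Multiplicative.ofAdd (c • u) := by
      have h := congrArg SemidirectProduct.left hcomm
      simpa [SemidirectProduct.mul_left, SemidirectProduct.right_inl,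
        SemidirectProduct.left_inl, _root_.map_one, hg₀] using h
    rw [zphi_apply] at hleft
    have h4 := congrArg Multiplicative.toAdd hleft
    simp only [toAdd_mul, toAdd_ofAdd] at h4
    exact add_left_cancel (h4.trans (add_comm w (c • u)))
  exact hF0 (keyLemma A hA hEA (-(F u)) (by simpa using hu) F hfix)

/-- The forward direction: an isomorphism of semidirect products yields a
`GL(m,ℤ)`-conjugacy. -/
lemma forward (A A' : Matrix (Fin m) (Fin m) ℤ)
    (hA : IsUnit A.det) (hA' : IsUnit A'.det) (hEA : HypEV A) (hEA' : HypEV A')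
    (Φ : ZSemi A hA ≃* ZSemi A' hA') :
    ∃ P : Matrix (Fin m) (Fin m) ℤ,
      IsUnit P.det ∧ (P * A * P⁻¹ = A' ∨ P * A * P⁻¹ = A'⁻¹) := by
  classical
  have hr : ∀ v : Fin m → ℤ,
      (Φ (SemidirectProduct.inl (Multiplicative.ofAdd v))).right = 1 :=
    right_trivial A A' hA hA' hEA Φ
  have hr' : ∀ v : Fin m → ℤ,
      (Φ.symm (SemidirectProduct.inl (Multiplicative.ofAdd v))).right = 1 :=
    right_trivial A' A hA' hA hEA' Φ.symm
  set Q : (Fin m → ℤ) → (Fin m → ℤ) := fun v =>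
    Multiplicative.toAdd ((Φ (SemidirectProduct.inl (Multiplicative.ofAdd v))).left)
    with hQ
  set Q' : (Fin m → ℤ) → (Fin m → ℤ) := fun v =>
    Multiplicative.toAdd ((Φ.symm (SemidirectProduct.inl (Multiplicative.ofAdd v))).left)
    with hQ'
  have hΦinl : ∀ v, Φ (SemidirectProduct.inl (Multiplicative.ofAdd v))
      = SemidirectProduct.inl (Multiplicative.ofAdd (Q v)) := by
    intro v
    conv_lhs => rw [← SemidirectProduct.inl_left_mul_inr_right
      (Φ (SemidirectProduct.inl (Multiplicative.ofAdd v)))]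
    rw [hr v, _root_.map_one, mul_one]
    rfl
  have hΦinl' : ∀ v, Φ.symm (SemidirectProduct.inl (Multiplicative.ofAdd v))
      = SemidirectProduct.inl (Multiplicative.ofAdd (Q' v)) := by
    intro v
    conv_lhs => rw [← SemidirectProduct.inl_left_mul_inr_right
      (Φ.symm (SemidirectProduct.inl (Multiplicative.ofAdd v)))]
    rw [hr' v, _root_.map_one, mul_one]
    rfl
  have hQadd : ∀ x y, Q (x + y) = Q x + Q y := by
    intro x y
    have h1 : Φ (SemidirectProduct.inl (Multiplicative.ofAdd (x + y)))
        = SemidirectProduct.inl (Multiplicative.ofAdd (Q x))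
          * SemidirectProduct.inl (Multiplicative.ofAdd (Q y)) := by
      rw [← hΦinl x, ← hΦinl y, ← _root_.map_mul, ← _root_.map_mul]
      rfl
    rw [← _root_.map_mul] at h1
    have h2 := congrArg (fun z => Multiplicative.toAdd
      (SemidirectProduct.left z)) (h1.trans (by rw [_root_.map_mul]))
    have h3 : Q (x + y) = Multiplicative.toAdd
        ((SemidirectProduct.inl (Multiplicative.ofAdd (Q x))
          * SemidirectProduct.inl (Multiplicative.ofAdd (Q y))
            : ZSemi A' hA').left) := by
      rw [← hΦinl x, ← hΦinl y, ← _root_.map_mul, ← _root_.map_mul]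
      rfl
    rw [h3, SemidirectProduct.mul_left, SemidirectProduct.left_inl,
      SemidirectProduct.right_inl, _root_.map_one, SemidirectProduct.left_inl]
    simp
  have hQ'Q : ∀ v, Q' (Q v) = v := by
    intro v
    have h1 : Φ.symm (SemidirectProduct.inl (Multiplicative.ofAdd (Q v)))
        = SemidirectProduct.inl (Multiplicative.ofAdd v) := by
      rw [← hΦinl v, MulEquiv.symm_apply_apply]
    rw [hQ']
    simp only [h1, SemidirectProduct.left_inl, toAdd_ofAdd]
  have hQQ' : ∀ v, Q (Q' v) = v := by
    intro v
    have h1 : Φ (SemidirectProduct.inl (Multiplicative.ofAdd (Q' v)))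
        = SemidirectProduct.inl (Multiplicative.ofAdd v) := by
      rw [← hΦinl' v, MulEquiv.apply_symm_apply]
    rw [hQ]
    simp only [h1, SemidirectProduct.left_inl, toAdd_ofAdd]
  -- the matrices of Q and Q'
  set Qh : (Fin m → ℤ) →+ (Fin m → ℤ) := AddMonoidHom.mk' Q hQadd with hQh
  set M : Matrix (Fin m) (Fin m) ℤ := Matrix.of (fun p s => Q (Pi.single s 1) p) with hM
  set M' : Matrix (Fin m) (Fin m) ℤ :=
    Matrix.of (fun p s => Q' (Pi.single s 1) p) with hM'
  have hmulVec : ∀ (T : (Fin m → ℤ) → (Fin m → ℤ)) (hT : ∀ x y, T (x + y) = T x + T y)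
      (v : Fin m → ℤ),
      (Matrix.of (fun p s => T (Pi.single s 1) p)).mulVec v = T v := by
    intro T hT v
    set Th : (Fin m → ℤ) →+ (Fin m → ℤ) := AddMonoidHom.mk' T hT with hTh
    have hTv : T v = Th v := rfl
    rw [hTv]
    conv_rhs => rw [pi_eq_sum_univ v, _root_.map_sum]
    funext p
    rw [Matrix.mulVec, Finset.sum_apply]
    simp only [dotProduct, Matrix.of_apply]
    refine Finset.sum_congr rfl fun s _ => ?_
    have hsingle : (fun j => if s = j then (1:ℤ) else 0) = Pi.single s 1 := by
      ext j; simp [Pi.single_apply, eq_comm]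
    rw [_root_.map_zsmul]
    have : Th (fun j => if s = j then (1:ℤ) else 0) = T (Pi.single s 1) := by
      rw [hsingle]; rfl
    rw [this]
    simp [smul_eq_mul, mul_comm]
  have hQ'add : ∀ x y, Q' (x + y) = Q' x + Q' y := by
    intro x y
    have := hQadd (Q' x) (Q' y)
    rw [hQQ', hQQ'] at this
    have h2 := congrArg Q' this
    rw [hQ'Q] at h2
    exact h2.symm
  have hMv : ∀ v, M.mulVec v = Q v := hmulVec Q hQadd
  have hM'v : ∀ v, M'.mulVec v = Q' v := hmulVec Q' hQ'add
  have hMM' : M * M' = 1 := by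
    apply eq_of_mulVec_eq
    intro v
    rw [← Matrix.mulVec_mulVec, hM'v, hMv, hQQ', Matrix.one_mulVec]
  have hM'M : M' * M = 1 := by
    apply eq_of_mulVec_eq
    intro v
    rw [← Matrix.mulVec_mulVec, hMv, hM'v, hQ'Q, Matrix.one_mulVec]
  have hdet : IsUnit M.det := Matrix.isUnit_det_of_right_inverse hMM'
  have hMinv : M⁻¹ = M' := Matrix.inv_eq_right_inv hMM'
  -- the integer c = ±1
  set c : ℤ := Multiplicative.toAdd
    ((Φ (SemidirectProduct.inr (Multiplicative.ofAdd (1 : ℤ)))).right) with hc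
  have hinr : ∀ z : ℤ,
      (Φ (SemidirectProduct.inr (Multiplicative.ofAdd z))).right
        = Multiplicative.ofAdd (z * c) := by
    intro z
    have h1 : (Multiplicative.ofAdd z)
        = (Multiplicative.ofAdd (1 : ℤ)) ^ z := by
      apply Multiplicative.toAdd.injective
      simp
    rw [h1, _root_.map_zpow SemidirectProduct.inr, _root_.map_zpow Φ]
    have h2 : ((Φ (SemidirectProduct.inr (Multiplicative.ofAdd (1:ℤ)))) ^ z).right
        = ((Φ (SemidirectProduct.inr (Multiplicative.ofAdd (1:ℤ)))).right) ^ z :=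
      _root_.map_zpow SemidirectProduct.rightHom _ z
    rw [h2]
    apply Multiplicative.toAdd.injective
    rw [toAdd_zpow]
    simp [hc, mul_comm]
  have hcu : c = 1 ∨ c = -1 := by
    obtain ⟨g, hg⟩ : ∃ g : ZSemi A hA,
        (Φ g).right = Multiplicative.ofAdd (1 : ℤ) :=
      ⟨Φ.symm (SemidirectProduct.inr (Multiplicative.ofAdd 1)), by
        rw [MulEquiv.apply_symm_apply]; rfl⟩
    have hgd : g = SemidirectProduct.inl g.left * SemidirectProduct.inr g.right :=
      (SemidirectProduct.inl_left_mul_inr_right g).symm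
    have h1 : (Φ g).right = Multiplicative.ofAdd ((Multiplicative.toAdd g.right) * c) := by
      rw [hgd, _root_.map_mul, SemidirectProduct.mul_right]
      have h2 : (Φ (SemidirectProduct.inl g.left)).right = 1 := by
        have := hr (Multiplicative.toAdd g.left)
        simpa using this
      rw [h2, one_mul]
      have h3 : g.right = Multiplicative.ofAdd (Multiplicative.toAdd g.right) := rfl
      rw [h3, hinr]
      simp
    rw [h1] at hg
    have h4 : c * Multiplicative.toAdd g.right = 1 := by
      have := congrArg Multiplicative.toAdd hg
      simpa using this
    rcases Int.isUnit_iff.mp (IsUnit.of_mul_eq_one _ h4) with h | h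
    · exact Or.inl h
    · exact Or.inr h
  -- the conjugation relation
  have hconj : ∀ v, Q (A.mulVec v) = (intMatAut A' hA' ^ c) (Q v) := by
    intro v
    have h1 := SemidirectProduct.inl_aut (φ := zphi A hA)
      (Multiplicative.ofAdd (1:ℤ)) (Multiplicative.ofAdd v)
    rw [_root_.map_inv SemidirectProduct.inr] at h1
    have h2 : zphi A hA (Multiplicative.ofAdd (1:ℤ)) (Multiplicative.ofAdd v)
        = Multiplicative.ofAdd (A.mulVec v) := by
      rw [zphi_apply]
      simp only [toAdd_ofAdd, zpow_one]
      rw [intMatAut_apply]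
    rw [h2] at h1
    have h3 := congrArg Φ h1
    rw [hΦinl, _root_.map_mul, _root_.map_mul, _root_.map_inv, hΦinl] at h3
    set T := Φ (SemidirectProduct.inr (Multiplicative.ofAdd (1:ℤ))) with hT
    have h5 : T * SemidirectProduct.inl (Multiplicative.ofAdd (Q v)) * T⁻¹
        = SemidirectProduct.inl
            (zphi A' hA' T.right (Multiplicative.ofAdd (Q v))) :=
      conj_inl _ _ _
    rw [h5] at h3
    have h6 := SemidirectProduct.inl_injective h3
    have h7 : T.right = Multiplicative.ofAdd c := rfl
    rw [h7, zphi_apply] at h6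
    have h8 := congrArg Multiplicative.toAdd h6
    simpa using h8
  -- conclude
  refine ⟨M, hdet, ?_⟩
  rcases hcu with hc1 | hc1
  · left
    have hMA : M * A = A' * M := by
      apply eq_of_mulVec_eq
      intro v
      rw [← Matrix.mulVec_mulVec, ← Matrix.mulVec_mulVec, hMv, hconj v, hc1,
        zpow_one, intMatAut_apply, hMv]
    rw [hMinv]
    calc M * A * M' = A' * M * M' := by rw [hMA]
      _ = A' := by rw [Matrix.mul_assoc, hMM', mul_one]
  · right
    have hMA : M * A = A'⁻¹ * M := by
      apply eq_of_mulVec_eq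
      intro v
      rw [← Matrix.mulVec_mulVec, ← Matrix.mulVec_mulVec, hMv, hconj v, hc1,
        _root_.zpow_neg_one, intMatAut_inv_apply, hMv]
    rw [hMinv]
    calc M * A * M' = A'⁻¹ * M * M' := by rw [hMA]
      _ = A'⁻¹ := by rw [Matrix.mul_assoc, hMM', mul_one]

end Aux

/-- ℤ ⋉_A ℤ^{2n+1} ≅ ℤ ⋉_{A'} ℤ^{2n+1} iff A is GL(2n+1,ℤ)-conjugate
to A' or to A'⁻¹. -/
theorem semidirect_iso_iff_conjugate (n : ℕ) (hn : 1 ≤ n)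
    (A A' : Matrix (Fin (2 * n + 1)) (Fin (2 * n + 1)) ℤ)
    (hA : IsUnit A.det) (hA' : IsUnit A'.det)
    (hEA : HypEV A) (hEA' : HypEV A') :
    Nonempty (ZSemi A hA ≃* ZSemi A' hA') ↔
      ∃ P : Matrix (Fin (2 * n + 1)) (Fin (2 * n + 1)) ℤ,
        IsUnit P.det ∧ (P * A * P⁻¹ = A' ∨ P * A * P⁻¹ = A'⁻¹) := by
  constructor
  · rintro ⟨Φ⟩
    exact Aux.forward A A' hA hA' hEA hEA' Φ
  · rintro ⟨P, hPdet, hcase⟩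
    have hPA : ∀ B : Matrix (Fin (2*n+1)) (Fin (2*n+1)) ℤ,
        P * A * P⁻¹ = B → P * A = B * P := by
      intro B hB
      have := congrArg (fun X => X * P) hB
      simpa [Matrix.mul_assoc, Matrix.nonsing_inv_mul P hPdet] using this
    rcases hcase with h | h
    · refine ⟨Aux.buildEquiv A A' hA hA' 1 (Or.inl rfl) (intMatAut P hPdet) ?_⟩
      intro v
      simp only [zpow_one, Aux.intMatAut_apply, Matrix.mulVec_mulVec]
      rw [hPA A' h]
    · refine ⟨Aux.buildEquiv A A' hA hA' (-1) (Or.inr rfl) (intMatAut P hPdet) ?_⟩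
      intro v
      simp only [_root_.zpow_neg_one, Aux.intMatAut_apply, Aux.intMatAut_inv_apply,
        Matrix.mulVec_mulVec]
      rw [hPA A'⁻¹ h]
end
end

section
/- For all ε, ε' ∈ ℚ, the rational Lie algebras g⁰_ℚ(0,ε,1) and g⁰_ℚ(0,ε',1) are isomorphic if and only if there exists α ∈ ℚ with α ≠ 0 such that ε' = α²·ε. -/
noncomputable section

/-- The bilinear bracket on K^8 determined by structure constants `c i j`
(given for i < j and extended antisymmetrically). -/
def liebr {K : Type*} [Field K] (c : Fin 8 → Fin 8 → Fin 8 → K)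
    (x y : Fin 8 → K) : Fin 8 → K :=
  ∑ i : Fin 8, ∑ j : Fin 8,
    (x i * y j) • (if i < j then c i j else if j < i then -(c j i) else 0)

/-- Isomorphism of the bracket structures. -/
def LieIso {K : Type*} [Field K] (c c' : Fin 8 → Fin 8 → Fin 8 → K) : Prop :=
  ∃ e : (Fin 8 → K) ≃ₗ[K] (Fin 8 → K),
    ∀ x y, e (liebr c x y) = liebr c' (e x) (e y)

/-- Structure constants of g⁰_K(a,b,c). -/
def g0c {K : Type*} [Field K] (a b c : K) : Fin 8 → Fin 8 → Fin 8 → K :=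
  fun i j =>
    if i = 0 ∧ j = 1 then Pi.single 3 1
    else if i = 0 ∧ j = 2 then Pi.single 4 1
    else if i = 1 ∧ j = 2 then Pi.single 5 1
    else if i = 0 ∧ j = 3 then Pi.single 6 1
    else if i = 0 ∧ j = 4 then Pi.single 7 1
    else if i = 1 ∧ j = 5 then (fun k => if k = 6 then a else if k = 7 then b else 0)
    else if i = 2 ∧ j = 5 then (fun k => if k = 6 then c else if k = 7 then -a else 0)
    else 0


lemma lb0 (ε : ℚ) (x y : Fin 8 → ℚ) : liebr (g0c 0 ε 1) x y 0 = 0 := by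
  simp [liebr, g0c, Fin.sum_univ_eight, Pi.single_apply, Finset.sum_apply]
lemma lb1 (ε : ℚ) (x y : Fin 8 → ℚ) : liebr (g0c 0 ε 1) x y 1 = 0 := by
  simp [liebr, g0c, Fin.sum_univ_eight, Pi.single_apply, Finset.sum_apply]
lemma lb2 (ε : ℚ) (x y : Fin 8 → ℚ) : liebr (g0c 0 ε 1) x y 2 = 0 := by
  simp [liebr, g0c, Fin.sum_univ_eight, Pi.single_apply, Finset.sum_apply]
lemma lb3 (ε : ℚ) (x y : Fin 8 → ℚ) :
    liebr (g0c 0 ε 1) x y 3 = x 0 * y 1 - x 1 * y 0 := by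
  simp [liebr, g0c, Fin.sum_univ_eight, Pi.single_apply, Finset.sum_apply]; ring
lemma lb4 (ε : ℚ) (x y : Fin 8 → ℚ) :
    liebr (g0c 0 ε 1) x y 4 = x 0 * y 2 - x 2 * y 0 := by
  simp [liebr, g0c, Fin.sum_univ_eight, Pi.single_apply, Finset.sum_apply]; ring
lemma lb5 (ε : ℚ) (x y : Fin 8 → ℚ) :
    liebr (g0c 0 ε 1) x y 5 = x 1 * y 2 - x 2 * y 1 := by
  simp [liebr, g0c, Fin.sum_univ_eight, Pi.single_apply, Finset.sum_apply]; ring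
lemma lb6 (ε : ℚ) (x y : Fin 8 → ℚ) :
    liebr (g0c 0 ε 1) x y 6 = x 0 * y 3 - x 3 * y 0 + (x 2 * y 5 - x 5 * y 2) := by
  simp [liebr, g0c, Fin.sum_univ_eight, Pi.single_apply, Finset.sum_apply]; ring
lemma lb7 (ε : ℚ) (x y : Fin 8 → ℚ) :
    liebr (g0c 0 ε 1) x y 7 = x 0 * y 4 - x 4 * y 0 + ε * (x 1 * y 5 - x 5 * y 1) := by
  simp [liebr, g0c, Fin.sum_univ_eight, Pi.single_apply, Finset.sum_apply]; ring

lemma br01 (ε : ℚ) :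
    liebr (g0c (0:ℚ) ε 1) (Pi.single 0 1) (Pi.single 1 1) = Pi.single 3 1 := by
  funext k
  fin_cases k <;> simp [liebr, g0c, Fin.sum_univ_eight, Pi.single_apply, Finset.sum_apply]
lemma br02 (ε : ℚ) :
    liebr (g0c (0:ℚ) ε 1) (Pi.single 0 1) (Pi.single 2 1) = Pi.single 4 1 := by
  funext k
  fin_cases k <;> simp [liebr, g0c, Fin.sum_univ_eight, Pi.single_apply, Finset.sum_apply]
lemma br12 (ε : ℚ) :
    liebr (g0c (0:ℚ) ε 1) (Pi.single 1 1) (Pi.single 2 1) = Pi.single 5 1 := by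
  funext k
  fin_cases k <;> simp [liebr, g0c, Fin.sum_univ_eight, Pi.single_apply, Finset.sum_apply]
lemma br03 (ε : ℚ) :
    liebr (g0c (0:ℚ) ε 1) (Pi.single 0 1) (Pi.single 3 1) = Pi.single 6 1 := by
  funext k
  fin_cases k <;> simp [liebr, g0c, Fin.sum_univ_eight, Pi.single_apply, Finset.sum_apply]
lemma br04 (ε : ℚ) :
    liebr (g0c (0:ℚ) ε 1) (Pi.single 0 1) (Pi.single 4 1) = Pi.single 7 1 := by
  funext k
  fin_cases k <;> simp [liebr, g0c, Fin.sum_univ_eight, Pi.single_apply, Finset.sum_apply]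
lemma br25 (ε : ℚ) :
    liebr (g0c (0:ℚ) ε 1) (Pi.single 2 1) (Pi.single 5 1) = Pi.single 6 1 := by
  funext k
  fin_cases k <;> simp [liebr, g0c, Fin.sum_univ_eight, Pi.single_apply, Finset.sum_apply]
lemma br15 (ε : ℚ) :
    liebr (g0c (0:ℚ) ε 1) (Pi.single 1 1) (Pi.single 5 1) = ε • (Pi.single 7 1 : Fin 8 → ℚ) := by
  funext k
  fin_cases k <;> simp [liebr, g0c, Fin.sum_univ_eight, Pi.single_apply, Finset.sum_apply]
lemma br13 (ε : ℚ) :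
    liebr (g0c (0:ℚ) ε 1) (Pi.single 1 1) (Pi.single 3 1) = 0 := by
  funext k
  fin_cases k <;> simp [liebr, g0c, Fin.sum_univ_eight, Pi.single_apply, Finset.sum_apply]
lemma br23 (ε : ℚ) :
    liebr (g0c (0:ℚ) ε 1) (Pi.single 2 1) (Pi.single 3 1) = 0 := by
  funext k
  fin_cases k <;> simp [liebr, g0c, Fin.sum_univ_eight, Pi.single_apply, Finset.sum_apply]
lemma br14 (ε : ℚ) :
    liebr (g0c (0:ℚ) ε 1) (Pi.single 1 1) (Pi.single 4 1) = 0 := by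
  funext k
  fin_cases k <;> simp [liebr, g0c, Fin.sum_univ_eight, Pi.single_apply, Finset.sum_apply]
lemma br24 (ε : ℚ) :
    liebr (g0c (0:ℚ) ε 1) (Pi.single 2 1) (Pi.single 4 1) = 0 := by
  funext k
  fin_cases k <;> simp [liebr, g0c, Fin.sum_univ_eight, Pi.single_apply, Finset.sum_apply]

lemma pi_decomp (x : Fin 8 → ℚ) : x = ∑ j : Fin 8, x j • (Pi.single j 1 : Fin 8 → ℚ) := by
  funext k
  rw [Finset.sum_apply]
  fin_cases k <;> simp [Fin.sum_univ_eight, Pi.single_apply]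

lemma ext8 {f g : Fin 8 → ℚ} (h0 : f 0 = g 0) (h1 : f 1 = g 1) (h2 : f 2 = g 2)
    (h3 : f 3 = g 3) (h4 : f 4 = g 4) (h5 : f 5 = g 5) (h6 : f 6 = g 6)
    (h7 : f 7 = g 7) : f = g := by
  funext k
  fin_cases k
  exacts [h0, h1, h2, h3, h4, h5, h6, h7]


/-- g⁰_ℚ(0,ε,1) ≅ g⁰_ℚ(0,ε',1) iff ε' = α²ε for some nonzero
rational α. -/
theorem g0_rational_iso_iff (ε ε' : ℚ) :
    LieIso (g0c (0 : ℚ) ε 1) (g0c (0 : ℚ) ε' 1) ↔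
      ∃ α : ℚ, α ≠ 0 ∧ ε' = α ^ 2 * ε := by
  constructor
  · -- forward direction
    intro h
    obtain ⟨e, he⟩ := h
    have hsy : ∀ u v, e.symm (liebr (g0c (0:ℚ) ε' 1) u v)
        = liebr (g0c (0:ℚ) ε 1) (e.symm u) (e.symm v) := by
      intro u v
      apply e.injective
      rw [LinearEquiv.apply_symm_apply, he, LinearEquiv.apply_symm_apply,
        LinearEquiv.apply_symm_apply]
    obtain ⟨E0, hE0⟩ : ∃ v, v = e (Pi.single (0:Fin 8) (1:ℚ)) := ⟨_, rfl⟩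
    obtain ⟨E1, hE1⟩ : ∃ v, v = e (Pi.single (1:Fin 8) (1:ℚ)) := ⟨_, rfl⟩
    obtain ⟨E2, hE2⟩ : ∃ v, v = e (Pi.single (2:Fin 8) (1:ℚ)) := ⟨_, rfl⟩
    obtain ⟨E3, hE3⟩ : ∃ v, v = e (Pi.single (3:Fin 8) (1:ℚ)) := ⟨_, rfl⟩
    obtain ⟨E4, hE4⟩ : ∃ v, v = e (Pi.single (4:Fin 8) (1:ℚ)) := ⟨_, rfl⟩
    obtain ⟨E5, hE5⟩ : ∃ v, v = e (Pi.single (5:Fin 8) (1:ℚ)) := ⟨_, rfl⟩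
    obtain ⟨E6, hE6⟩ : ∃ v, v = e (Pi.single (6:Fin 8) (1:ℚ)) := ⟨_, rfl⟩
    obtain ⟨E7, hE7⟩ : ∃ v, v = e (Pi.single (7:Fin 8) (1:ℚ)) := ⟨_, rfl⟩
    -- bracket representations of basis images
    have hb3 : E3 = liebr (g0c (0:ℚ) ε' 1) E0 E1 := by
      rw [hE3, hE0, hE1, ← he, br01]
    have hb4 : E4 = liebr (g0c (0:ℚ) ε' 1) E0 E2 := by
      rw [hE4, hE0, hE2, ← he, br02]
    have hb5 : E5 = liebr (g0c (0:ℚ) ε' 1) E1 E2 := by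
      rw [hE5, hE1, hE2, ← he, br12]
    have hb6 : E6 = liebr (g0c (0:ℚ) ε' 1) E0 E3 := by
      rw [hE6, hE0, hE3, ← he, br03]
    have hb7 : E7 = liebr (g0c (0:ℚ) ε' 1) E0 E4 := by
      rw [hE7, hE0, hE4, ← he, br04]
    have hc6 : E6 = liebr (g0c (0:ℚ) ε' 1) E2 E5 := by
      rw [hE6, hE2, hE5, ← he, br25]
    have hc7 : ε • E7 = liebr (g0c (0:ℚ) ε' 1) E1 E5 := by
      rw [hE7, hE1, hE5, ← he, ← map_smul, br15]
    -- symm representations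
    have hs3 : e.symm (Pi.single (3:Fin 8) (1:ℚ))
        = liebr (g0c (0:ℚ) ε 1) (e.symm (Pi.single 0 1)) (e.symm (Pi.single 1 1)) := by
      rw [← hsy, br01]
    have hs4 : e.symm (Pi.single (4:Fin 8) (1:ℚ))
        = liebr (g0c (0:ℚ) ε 1) (e.symm (Pi.single 0 1)) (e.symm (Pi.single 2 1)) := by
      rw [← hsy, br02]
    have hs5 : e.symm (Pi.single (5:Fin 8) (1:ℚ))
        = liebr (g0c (0:ℚ) ε 1) (e.symm (Pi.single 1 1)) (e.symm (Pi.single 2 1)) := by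
      rw [← hsy, br12]
    have hs6 : e.symm (Pi.single (6:Fin 8) (1:ℚ))
        = liebr (g0c (0:ℚ) ε 1) (e.symm (Pi.single 0 1)) (e.symm (Pi.single 3 1)) := by
      rw [← hsy, br03]
    have hs7 : e.symm (Pi.single (7:Fin 8) (1:ℚ))
        = liebr (g0c (0:ℚ) ε 1) (e.symm (Pi.single 0 1)) (e.symm (Pi.single 4 1)) := by
      rw [← hsy, br04]
    -- low coordinates of E3..E7
    have c30 : E3 0 = 0 := by rw [hb3]; exact lb0 _ _ _
    have c31 : E3 1 = 0 := by rw [hb3]; exact lb1 _ _ _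
    have c32 : E3 2 = 0 := by rw [hb3]; exact lb2 _ _ _
    have c40 : E4 0 = 0 := by rw [hb4]; exact lb0 _ _ _
    have c41 : E4 1 = 0 := by rw [hb4]; exact lb1 _ _ _
    have c42 : E4 2 = 0 := by rw [hb4]; exact lb2 _ _ _
    have c50 : E5 0 = 0 := by rw [hb5]; exact lb0 _ _ _
    have c51 : E5 1 = 0 := by rw [hb5]; exact lb1 _ _ _
    have c52 : E5 2 = 0 := by rw [hb5]; exact lb2 _ _ _
    have c60 : E6 0 = 0 := by rw [hb6]; exact lb0 _ _ _
    have c70 : E7 0 = 0 := by rw [hb7]; exact lb0 _ _ _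
    -- low coordinates of e.symm singles
    have s30 : (e.symm (Pi.single (3:Fin 8) (1:ℚ))) 0 = 0 := by rw [hs3]; exact lb0 _ _ _
    have s31 : (e.symm (Pi.single (3:Fin 8) (1:ℚ))) 1 = 0 := by rw [hs3]; exact lb1 _ _ _
    have s32 : (e.symm (Pi.single (3:Fin 8) (1:ℚ))) 2 = 0 := by rw [hs3]; exact lb2 _ _ _
    have s40 : (e.symm (Pi.single (4:Fin 8) (1:ℚ))) 0 = 0 := by rw [hs4]; exact lb0 _ _ _
    have s41 : (e.symm (Pi.single (4:Fin 8) (1:ℚ))) 1 = 0 := by rw [hs4]; exact lb1 _ _ _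
    have s42 : (e.symm (Pi.single (4:Fin 8) (1:ℚ))) 2 = 0 := by rw [hs4]; exact lb2 _ _ _
    have s50 : (e.symm (Pi.single (5:Fin 8) (1:ℚ))) 0 = 0 := by rw [hs5]; exact lb0 _ _ _
    have s51 : (e.symm (Pi.single (5:Fin 8) (1:ℚ))) 1 = 0 := by rw [hs5]; exact lb1 _ _ _
    have s52 : (e.symm (Pi.single (5:Fin 8) (1:ℚ))) 2 = 0 := by rw [hs5]; exact lb2 _ _ _
    have s60 : (e.symm (Pi.single (6:Fin 8) (1:ℚ))) 0 = 0 := by rw [hs6]; exact lb0 _ _ _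
    have s61 : (e.symm (Pi.single (6:Fin 8) (1:ℚ))) 1 = 0 := by rw [hs6]; exact lb1 _ _ _
    have s62 : (e.symm (Pi.single (6:Fin 8) (1:ℚ))) 2 = 0 := by rw [hs6]; exact lb2 _ _ _
    have s70 : (e.symm (Pi.single (7:Fin 8) (1:ℚ))) 0 = 0 := by rw [hs7]; exact lb0 _ _ _
    have s71 : (e.symm (Pi.single (7:Fin 8) (1:ℚ))) 1 = 0 := by rw [hs7]; exact lb1 _ _ _
    have s72 : (e.symm (Pi.single (7:Fin 8) (1:ℚ))) 2 = 0 := by rw [hs7]; exact lb2 _ _ _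
    -- e⁻¹ preserves the derived subalgebra
    have hDsym : ∀ u : Fin 8 → ℚ, u 0 = 0 → u 1 = 0 → u 2 = 0 →
        (e.symm u) 0 = 0 ∧ (e.symm u) 1 = 0 ∧ (e.symm u) 2 = 0 := by
      intro u h0 h1 h2
      have hu : u = u 3 • (Pi.single 3 1 : Fin 8 → ℚ) + u 4 • (Pi.single 4 1 : Fin 8 → ℚ)
          + u 5 • (Pi.single 5 1 : Fin 8 → ℚ) + u 6 • (Pi.single 6 1 : Fin 8 → ℚ)
          + u 7 • (Pi.single 7 1 : Fin 8 → ℚ) := by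
        apply ext8 <;> simp [Pi.single_apply, h0, h1, h2]
      rw [hu, map_add, map_add, map_add, map_add, map_smul, map_smul, map_smul, map_smul,
        map_smul]
      refine ⟨?_, ?_, ?_⟩ <;>
        simp [Pi.add_apply, Pi.smul_apply, smul_eq_mul,
          s30, s31, s32, s40, s41, s42, s50, s51, s52, s60, s61, s62, s70, s71, s72]
    -- e preserves U = {v | v 0 = 0}
    have hU : ∀ v : Fin 8 → ℚ, v 0 = 0 → (e v) 0 = 0 := by
      intro v hv
      set p := liebr (g0c (0:ℚ) ε 1) v (e.symm (Pi.single (3:Fin 8) (1:ℚ))) with hp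
      set q := liebr (g0c (0:ℚ) ε 1) v (e.symm (Pi.single (4:Fin 8) (1:ℚ))) with hq
      have hp0 : p 0 = 0 := by rw [hp]; exact lb0 _ _ _
      have hp1 : p 1 = 0 := by rw [hp]; exact lb1 _ _ _
      have hp2 : p 2 = 0 := by rw [hp]; exact lb2 _ _ _
      have hp3 : p 3 = 0 := by rw [hp, lb3, hv, s30]; ring
      have hp4 : p 4 = 0 := by rw [hp, lb4, hv, s30]; ring
      have hp5 : p 5 = 0 := by rw [hp, lb5, s31, s32]; ring
      have hp6 : p 6 = v 2 * (e.symm (Pi.single (3:Fin 8) (1:ℚ))) 5 := by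
        rw [hp, lb6, hv, s30, s32]; ring
      have hp7 : p 7 = ε * (v 1 * (e.symm (Pi.single (3:Fin 8) (1:ℚ))) 5) := by
        rw [hp, lb7, hv, s30, s31]; ring
      have hq0 : q 0 = 0 := by rw [hq]; exact lb0 _ _ _
      have hq1 : q 1 = 0 := by rw [hq]; exact lb1 _ _ _
      have hq2 : q 2 = 0 := by rw [hq]; exact lb2 _ _ _
      have hq3 : q 3 = 0 := by rw [hq, lb3, hv, s40]; ring
      have hq4 : q 4 = 0 := by rw [hq, lb4, hv, s40]; ring
      have hq5 : q 5 = 0 := by rw [hq, lb5, s41, s42]; ring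
      have hq6 : q 6 = v 2 * (e.symm (Pi.single (4:Fin 8) (1:ℚ))) 5 := by
        rw [hq, lb6, hv, s40, s42]; ring
      have hq7 : q 7 = ε * (v 1 * (e.symm (Pi.single (4:Fin 8) (1:ℚ))) 5) := by
        rw [hq, lb7, hv, s40, s41]; ring
      have hpd : p = p 6 • (Pi.single 6 1 : Fin 8 → ℚ) + p 7 • (Pi.single 7 1 : Fin 8 → ℚ) := by
        apply ext8 <;> simp [Pi.single_apply, hp0, hp1, hp2, hp3, hp4, hp5]
      have hqd : q = q 6 • (Pi.single 6 1 : Fin 8 → ℚ) + q 7 • (Pi.single 7 1 : Fin 8 → ℚ) := by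
        apply ext8 <;> simp [Pi.single_apply, hq0, hq1, hq2, hq3, hq4, hq5]
      have w1 : e p = liebr (g0c (0:ℚ) ε' 1) (e v) (Pi.single 3 1) := by
        rw [hp, he, LinearEquiv.apply_symm_apply]
      have w1' : e q = liebr (g0c (0:ℚ) ε' 1) (e v) (Pi.single 4 1) := by
        rw [hq, he, LinearEquiv.apply_symm_apply]
      have w16 : (e p) 6 = (e v) 0 := by rw [w1, lb6]; simp
      have w17 : (e p) 7 = 0 := by rw [w1, lb7]; simp
      have y16 : (e q) 6 = 0 := by rw [w1', lb6]; simp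
      have y17 : (e q) 7 = (e v) 0 := by rw [w1', lb7]; simp
      have w26 : (e p) 6 = p 6 * (e (Pi.single 6 1)) 6 + p 7 * (e (Pi.single 7 1)) 6 := by
        conv_lhs => rw [hpd]
        rw [map_add, map_smul, map_smul]
        simp [Pi.add_apply, Pi.smul_apply, smul_eq_mul]
      have w27 : (e p) 7 = p 6 * (e (Pi.single 6 1)) 7 + p 7 * (e (Pi.single 7 1)) 7 := by
        conv_lhs => rw [hpd]
        rw [map_add, map_smul, map_smul]
        simp [Pi.add_apply, Pi.smul_apply, smul_eq_mul]
      have y26 : (e q) 6 = q 6 * (e (Pi.single 6 1)) 6 + q 7 * (e (Pi.single 7 1)) 6 := by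
        conv_lhs => rw [hqd]
        rw [map_add, map_smul, map_smul]
        simp [Pi.add_apply, Pi.smul_apply, smul_eq_mul]
      have y27 : (e q) 7 = q 6 * (e (Pi.single 6 1)) 7 + q 7 * (e (Pi.single 7 1)) 7 := by
        conv_lhs => rw [hqd]
        rw [map_add, map_smul, map_smul]
        simp [Pi.add_apply, Pi.smul_apply, smul_eq_mul]
      have t1 : (e v) 0 * (e v) 0 = (e p) 6 * (e q) 7 - (e p) 7 * (e q) 6 := by
        rw [w16, w17, y16, y17]; ring
      have t2 : (e p) 6 * (e q) 7 - (e p) 7 * (e q) 6 = 0 := by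
        rw [w26, w27, y26, y27, hp6, hp7, hq6, hq7]; ring
      exact mul_self_eq_zero.mp (t1.trans t2)
    have cE10 : E1 0 = 0 := by
      rw [hE1]; exact hU _ (by simp [Pi.single_apply])
    have cE20 : E2 0 = 0 := by
      rw [hE2]; exact hU _ (by simp [Pi.single_apply])
    -- E0 0 ≠ 0
    have ha : E0 0 ≠ 0 := by
      intro h00
      have hall : ∀ x : Fin 8 → ℚ, (e x) 0 = 0 := by
        intro x
        have hex : e x = ∑ j : Fin 8, x j • e (Pi.single j 1) := by
          conv_lhs => rw [pi_decomp x]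
          rw [map_sum]
          simp only [map_smul]
        rw [hex, Finset.sum_apply, Fin.sum_univ_eight]
        simp only [Pi.smul_apply, smul_eq_mul]
        rw [← hE0, ← hE1, ← hE2, ← hE3, ← hE4, ← hE5, ← hE6, ← hE7,
          h00, cE10, cE20, c30, c40, c50, c60, c70]
        ring
      have hbad := hall (e.symm (Pi.single 0 1))
      rw [LinearEquiv.apply_symm_apply, Pi.single_eq_same] at hbad
      exact one_ne_zero hbad
    -- determinant of the induced map on U/D is nonzero
    have hdet : E1 1 * E2 2 - E1 2 * E2 1 ≠ 0 := by
      intro hD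
      have p0 : (E2 2 • E1 - E1 2 • E2) 0 = 0 := by
        simp [Pi.sub_apply, Pi.smul_apply, smul_eq_mul, cE10, cE20]
      have p1 : (E2 2 • E1 - E1 2 • E2) 1 = 0 := by
        simp only [Pi.sub_apply, Pi.smul_apply, smul_eq_mul]
        linear_combination hD
      have p2 : (E2 2 • E1 - E1 2 • E2) 2 = 0 := by
        simp only [Pi.sub_apply, Pi.smul_apply, smul_eq_mul]
        ring
      obtain ⟨-, m1, m2⟩ := hDsym _ p0 p1 p2
      have k1 : e.symm (E2 2 • E1 - E1 2 • E2)
          = E2 2 • (Pi.single 1 1 : Fin 8 → ℚ) - E1 2 • (Pi.single 2 1 : Fin 8 → ℚ) := by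
        rw [hE1, hE2, ← map_smul, ← map_smul, ← map_sub, LinearEquiv.symm_apply_apply]
      rw [k1] at m1 m2
      have hA22 : E2 2 = 0 := by
        simpa [Pi.sub_apply, Pi.smul_apply, smul_eq_mul, Pi.single_apply] using m1
      have hA21 : E1 2 = 0 := by
        simpa [Pi.sub_apply, Pi.smul_apply, smul_eq_mul, Pi.single_apply] using m2
      have p0' : (E2 1 • E1 - E1 1 • E2) 0 = 0 := by
        simp [Pi.sub_apply, Pi.smul_apply, smul_eq_mul, cE10, cE20]
      have p1' : (E2 1 • E1 - E1 1 • E2) 1 = 0 := by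
        simp only [Pi.sub_apply, Pi.smul_apply, smul_eq_mul]
        ring
      have p2' : (E2 1 • E1 - E1 1 • E2) 2 = 0 := by
        simp only [Pi.sub_apply, Pi.smul_apply, smul_eq_mul]
        rw [hA21, hA22]; ring
      obtain ⟨-, m1', m2'⟩ := hDsym _ p0' p1' p2'
      have k2 : e.symm (E2 1 • E1 - E1 1 • E2)
          = E2 1 • (Pi.single 1 1 : Fin 8 → ℚ) - E1 1 • (Pi.single 2 1 : Fin 8 → ℚ) := by
        rw [hE1, hE2, ← map_smul, ← map_smul, ← map_sub, LinearEquiv.symm_apply_apply]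
      rw [k2] at m1' m2'
      have hA12 : E2 1 = 0 := by
        simpa [Pi.sub_apply, Pi.smul_apply, smul_eq_mul, Pi.single_apply] using m1'
      have hA11 : E1 1 = 0 := by
        simpa [Pi.sub_apply, Pi.smul_apply, smul_eq_mul, Pi.single_apply] using m2'
      obtain ⟨-, q1, -⟩ := hDsym E1 cE10 hA11 hA21
      rw [hE1, LinearEquiv.symm_apply_apply, Pi.single_eq_same] at q1
      exact one_ne_zero q1
    -- vanishing of the x6-components of E3, E4
    have hz1 : E1 2 * E3 5 = 0 := by
      have h := he (Pi.single 1 1) (Pi.single 3 1)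
      rw [br13 ε, map_zero, ← hE1, ← hE3] at h
      have h6 := congrFun h.symm 6
      rw [lb6, cE10, c30, c32, Pi.zero_apply] at h6
      linear_combination h6
    have hz2 : E2 2 * E3 5 = 0 := by
      have h := he (Pi.single 2 1) (Pi.single 3 1)
      rw [br23 ε, map_zero, ← hE2, ← hE3] at h
      have h6 := congrFun h.symm 6
      rw [lb6, cE20, c30, c32, Pi.zero_apply] at h6
      linear_combination h6
    have hz : E3 5 = 0 := by
      by_contra hne
      apply hdet
      rw [(mul_eq_zero.mp hz1).resolve_right hne, (mul_eq_zero.mp hz2).resolve_right hne]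
      ring
    have hw1 : E1 2 * E4 5 = 0 := by
      have h := he (Pi.single 1 1) (Pi.single 4 1)
      rw [br14 ε, map_zero, ← hE1, ← hE4] at h
      have h6 := congrFun h.symm 6
      rw [lb6, cE10, c40, c42, Pi.zero_apply] at h6
      linear_combination h6
    have hw2 : E2 2 * E4 5 = 0 := by
      have h := he (Pi.single 2 1) (Pi.single 4 1)
      rw [br24 ε, map_zero, ← hE2, ← hE4] at h
      have h6 := congrFun h.symm 6
      rw [lb6, cE20, c40, c42, Pi.zero_apply] at h6
      linear_combination h6
    have hw : E4 5 = 0 := by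
      by_contra hne
      apply hdet
      rw [(mul_eq_zero.mp hw1).resolve_right hne, (mul_eq_zero.mp hw2).resolve_right hne]
      ring
    -- components of E3, E4, E5
    have cE33 : E3 3 = E0 0 * E1 1 := by rw [hb3, lb3, cE10]; ring
    have cE34 : E3 4 = E0 0 * E1 2 := by rw [hb3, lb4, cE10]; ring
    have cE35 : E3 5 = E0 1 * E1 2 - E0 2 * E1 1 := by rw [hb3, lb5]
    have cE43 : E4 3 = E0 0 * E2 1 := by rw [hb4, lb3, cE20]; ring
    have cE44 : E4 4 = E0 0 * E2 2 := by rw [hb4, lb4, cE20]; ring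
    have cE45 : E4 5 = E0 1 * E2 2 - E0 2 * E2 1 := by rw [hb4, lb5]
    have cE55 : E5 5 = E1 1 * E2 2 - E1 2 * E2 1 := by rw [hb5, lb5]
    -- E0 1 = E0 2 = 0
    have q1 : E0 1 * E1 2 - E0 2 * E1 1 = 0 := by rw [← cE35]; exact hz
    have q2 : E0 1 * E2 2 - E0 2 * E2 1 = 0 := by rw [← cE45]; exact hw
    have hb0 : E0 1 = 0 := by
      have h3 : E0 1 * (E1 1 * E2 2 - E1 2 * E2 1) = 0 := by
        linear_combination E1 1 * q2 - E2 1 * q1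
      exact (mul_eq_zero.mp h3).resolve_right hdet
    have hc0 : E0 2 = 0 := by
      have h3 : E0 2 * (E1 1 * E2 2 - E1 2 * E2 1) = 0 := by
        linear_combination E1 2 * q2 - E2 2 * q1
      exact (mul_eq_zero.mp h3).resolve_right hdet
    -- components of E6, E7 (two ways)
    have cE66 : E6 6 = E0 0 * E3 3 := by rw [hb6, lb6, c30, c32, hc0]; ring
    have cE67 : E6 7 = E0 0 * E3 4 := by rw [hb6, lb7, c30, c31, hb0]; ring
    have cE76 : E7 6 = E0 0 * E4 3 := by rw [hb7, lb6, c40, c42, hc0]; ring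
    have cE77 : E7 7 = E0 0 * E4 4 := by rw [hb7, lb7, c40, c41, hb0]; ring
    have cE66' : E6 6 = E2 2 * E5 5 := by rw [hc6, lb6, cE20, c50, c52]; ring
    have cE67' : E6 7 = ε' * (E2 1 * E5 5) := by rw [hc6, lb7, cE20, c50, c51]; ring
    have cE76' : ε * E7 6 = E1 2 * E5 5 := by
      have h6 := congrFun hc7 6
      rw [lb6, cE10, c50, c52, Pi.smul_apply, smul_eq_mul] at h6
      linear_combination h6
    have cE77' : ε * E7 7 = ε' * (E1 1 * E5 5) := by
      have h7 := congrFun hc7 7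
      rw [lb7, cE10, c50, c51, Pi.smul_apply, smul_eq_mul] at h7
      linear_combination h7
    -- the four key equations
    have h1 : E0 0 * (E0 0 * E1 1) = E2 2 * (E1 1 * E2 2 - E1 2 * E2 1) := by
      rw [← cE33, ← cE66, cE66', cE55]
    have h2 : E0 0 * (E0 0 * E1 2) = ε' * (E2 1 * (E1 1 * E2 2 - E1 2 * E2 1)) := by
      rw [← cE34, ← cE67, cE67', cE55]
    have h3 : ε * (E0 0 * (E0 0 * E2 1)) = E1 2 * (E1 1 * E2 2 - E1 2 * E2 1) := by
      rw [← cE43, ← cE76, cE76', cE55]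
    have h4 : ε * (E0 0 * (E0 0 * E2 2)) = ε' * (E1 1 * (E1 1 * E2 2 - E1 2 * E2 1)) := by
      rw [← cE44, ← cE77, cE77', cE55]
    refine ⟨E0 0 ^ 2 / (E1 1 * E2 2 - E1 2 * E2 1),
      div_ne_zero (pow_ne_zero 2 ha) hdet, ?_⟩
    have h14 : E0 0 * (E0 0 * E1 1) * (ε * (E0 0 * (E0 0 * E2 2)))
        = E2 2 * (E1 1 * E2 2 - E1 2 * E2 1)
          * (ε' * (E1 1 * (E1 1 * E2 2 - E1 2 * E2 1))) := by
      rw [h1, h4]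
    have h23 : E0 0 * (E0 0 * E1 2) * (ε * (E0 0 * (E0 0 * E2 1)))
        = ε' * (E2 1 * (E1 1 * E2 2 - E1 2 * E2 1))
          * (E1 2 * (E1 1 * E2 2 - E1 2 * E2 1)) := by
      rw [h2, h3]
    have key : ε' * (E1 1 * E2 2 - E1 2 * E2 1) ^ 3
        = ε * E0 0 ^ 4 * (E1 1 * E2 2 - E1 2 * E2 1) := by
      linear_combination h23 - h14
    have key2 : ε' * (E1 1 * E2 2 - E1 2 * E2 1) ^ 2 = ε * E0 0 ^ 4 := by
      apply mul_right_cancel₀ hdet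
      linear_combination key
    field_simp
    linear_combination key2
  · -- backward direction
    rintro ⟨α, hα, rfl⟩
    classical
    set μ : Fin 8 → ℚ := fun i => if i = 1 ∨ i = 3 ∨ i = 5 ∨ i = 6 then α⁻¹ else 1 with hμ
    have hμne : ∀ i, μ i ≠ 0 := by
      intro i
      simp only [hμ]
      split_ifs
      · exact inv_ne_zero hα
      · exact one_ne_zero
    refine ⟨LinearEquiv.piCongrRight (fun i => LinearEquiv.smulOfNeZero ℚ ℚ (μ i) (hμne i)), ?_⟩
    intro x y
    have happ : ∀ (z : Fin 8 → ℚ) (k : Fin 8),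
        (LinearEquiv.piCongrRight (fun i => LinearEquiv.smulOfNeZero ℚ ℚ (μ i) (hμne i))) z k
          = μ k * z k := fun z k => rfl
    apply ext8
    · simp only [happ, lb0, mul_zero]
    · simp only [happ, lb1, mul_zero]
    · simp only [happ, lb2, mul_zero]
    · simp only [happ, lb3, hμ]; simp; rw [lb3]; ring
    · simp only [happ, lb4, hμ]; simp; rw [lb4]
    · simp only [happ, lb5, hμ]; simp; rw [lb5]; ring
    · simp only [happ, lb6, hμ]; simp; rw [lb6]; ring
    · simp only [happ, lb7, hμ]; simp; rw [lb7]; field_simp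
end
end
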